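/- arXiv:0807.0484 — 3 statements merged into one kernel-verified Lean document; each statement's English description precedes it below -/
import Mathlib

section
/- Let k ≥ 3, m ≥ 1, and t ≥ 1 be integers with t² ≤ m, and set b = ⌈m/t⌉. Then N^3_k(m) ≤ b·N^3_k(t) + N^3_{k−2}(b) + 3m (an inequality in the extended naturals). -/
/-- The alternating list `a b a b ...` of length `l`. -/
def altList (a b : ℕ) : ℕ → List ℕ
  | 0 => []
  | l + 1 => a :: altList b a l

/-- `S` contains an alternation of length `l`: two distinct symbols occur as an
alternating (not necessarily contiguous) subsequence of length `l`. -/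
def HasAlt (S : List ℕ) (l : ℕ) : Prop :=
  ∃ a b : ℕ, a ≠ b ∧ (altList a b l).Sublist S

/-- A Davenport–Schinzel sequence of order `s`: no two adjacent equal entries and
no alternation of length `s + 2`. -/
def IsDS (s : ℕ) (S : List ℕ) : Prop :=
  List.Chain' (· ≠ ·) S ∧ ¬ HasAlt S (s + 2)

/-- `S` can be partitioned into at most `m` contiguous blocks, each consisting of
pairwise distinct symbols. -/
def HasBlocks (S : List ℕ) (m : ℕ) : Prop :=
  ∃ Bs : List (List ℕ), Bs.length ≤ m ∧ S = Bs.flatten ∧ ∀ B ∈ Bs, B.Nodup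

/-- `λ_s(n)`: maximum length of a Davenport–Schinzel sequence of order `s`
using at most `n` distinct symbols. -/
noncomputable def lambdaDS (s n : ℕ) : ℕ :=
  sSup {L | ∃ S : List ℕ, IsDS s S ∧ S.toFinset.card ≤ n ∧ S.length = L}

/-- `ψ_s(m,n)`: maximum length of a Davenport–Schinzel sequence of order `s` on at
most `n` distinct symbols partitionable into at most `m` blocks of distinct symbols. -/
noncomputable def psiDS (s m n : ℕ) : ℕ :=
  sSup {L | ∃ S : List ℕ, IsDS s S ∧ S.toFinset.card ≤ n ∧ HasBlocks S m ∧ S.length = L}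

/-- The Ackermann hierarchy: `A_1(n) = 2n`, and `A_k(n) = A_{k-1}^{(n)}(1)` for `k ≥ 2`. -/
def Ak : ℕ → ℕ → ℕ
  | 0, n => n + 1
  | 1, n => 2 * n
  | k + 2, n => (Ak (k + 1))^[n] 1

/-- The Ackermann function `A(n) = A_n(3)`. -/
def AckF (n : ℕ) : ℕ := Ak n 3

/-- `α_k(x) = min {n | A_k(n) ≥ x}`. -/
noncomputable def invAk (k x : ℕ) : ℕ := sInf {n | x ≤ Ak k n}

/-- `α(x) = min {n | A(n) ≥ x}`. -/
noncomputable def invA (x : ℕ) : ℕ := sInf {n | x ≤ AckF n}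

/-- An `ADS^s_k(m)`-sequence: at most `m` blocks of distinct symbols, every occurring
symbol appears at least `k` times, and no alternation of length `s + 2`. -/
def IsADS (s k m : ℕ) (S : List ℕ) : Prop :=
  HasBlocks S m ∧ (∀ a ∈ S, k ≤ S.count a) ∧ ¬ HasAlt S (s + 2)

/-- `N^s_k(m)`: the supremum (possibly infinite) of the number of distinct symbols
in an `ADS^s_k(m)`-sequence. -/
noncomputable def NADS (s k m : ℕ) : ℕ∞ :=
  sSup {c : ℕ∞ | ∃ S : List ℕ, IsADS s k m S ∧ c = (S.toFinset.card : ℕ∞)}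

/-- `S` is `r`-sparse: any at most `r` consecutive entries are pairwise distinct. -/
def Sparse (r : ℕ) (S : List ℕ) : Prop :=
  ∀ l : List ℕ, l <:+: S → l.length ≤ r → l.Nodup

/-- `S` contains the pattern `u`: some subsequence of `S` is an injectively renamed
copy of `u`. -/
def ContainsPat (S u : List ℕ) : Prop :=
  ∃ f : ℕ → ℕ, Set.InjOn f {a | a ∈ u} ∧ (u.map f).Sublist S

/-- `Ex_u(n)`: maximum length of an `r`-sparse `u`-free sequence on at most `n`
distinct symbols, where `r` is the number of distinct symbols of `u`. -/
noncomputable def ExDS (u : List ℕ) (n : ℕ) : ℕ :=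
  sSup {L | ∃ S : List ℕ, Sparse u.toFinset.card S ∧ ¬ ContainsPat S u ∧
    S.toFinset.card ≤ n ∧ S.length = L}

/-- An `(r,s)`-formation: a concatenation of `s` permutations of a single set of
`r` distinct symbols. -/
def IsFormation (r s : ℕ) (F : List ℕ) : Prop :=
  ∃ A : Finset ℕ, A.card = r ∧ ∃ Bs : List (List ℕ), Bs.length = s ∧
    (∀ B ∈ Bs, B.Nodup ∧ B.toFinset = A) ∧ F = Bs.flatten

/-- An `(r,s)`-formation-free sequence: `r`-sparse and containing no
`(r,s)`-formation as a subsequence. -/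
def FormationFree (r s : ℕ) (S : List ℕ) : Prop :=
  Sparse r S ∧ ¬ ∃ F : List ℕ, IsFormation r s F ∧ F.Sublist S

/-- `F_{r,s}(n)`: maximum length of an `(r,s)`-formation-free sequence on at most
`n` distinct symbols. -/
noncomputable def FDS (r s n : ℕ) : ℕ :=
  sSup {L | ∃ S : List ℕ, FormationFree r s S ∧ S.toFinset.card ≤ n ∧ S.length = L}

/-! ### Auxiliary machinery -/

namespace NADSrec

open List Finset

/-- Offset of block `i` inside the flattened sequence. -/
def offs (Bs : List (List ℕ)) (i : ℕ) : ℕ := ((Bs.take i).flatten).length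

/-- Position of (the first occurrence of) `a` in block `i`, inside the flattened seq. -/
def posn (Bs : List (List ℕ)) (i a : ℕ) : ℕ := offs Bs i + (Bs.getD i []).idxOf a

/-- Indices of blocks containing `a`. -/
def blocksOf (Bs : List (List ℕ)) (a : ℕ) : Finset ℕ :=
  (Finset.range Bs.length).filter (fun i => a ∈ Bs.getD i [])

/-- Number of blocks of group `j` containing `a`. -/
def grpcnt (Bs : List (List ℕ)) (t a j : ℕ) : ℕ :=
  ((blocksOf Bs a).filter (fun i => i / t = j)).card

/-- Number of groups in which `a` occurs. -/
def dgrp (Bs : List (List ℕ)) (t a : ℕ) : ℕ := ((blocksOf Bs a).image (· / t)).card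

/-- The blocks of group `j`. -/
def seg (Bs : List (List ℕ)) (t j : ℕ) : List (List ℕ) := (Bs.drop (j*t)).take t

/-- `q`-th smallest element of a finset of naturals. -/
def nthB (G : Finset ℕ) (q : ℕ) : ℕ := (G.sort (·≤·)).getD q 0

lemma mem_blocksOf {Bs : List (List ℕ)} {a i : ℕ} :
    i ∈ blocksOf Bs a ↔ i < Bs.length ∧ a ∈ Bs.getD i [] := by
  simp [blocksOf]

lemma blk_lt_of_mem {Bs : List (List ℕ)} {a i : ℕ} (h : a ∈ Bs.getD i []) :
    i < Bs.length := by
  by_contra hlt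
  rw [List.getD_eq_default _ _ (le_of_not_gt hlt)] at h
  exact absurd h List.not_mem_nil

lemma offs_succ {Bs : List (List ℕ)} {i : ℕ} (h : i < Bs.length) :
    offs Bs (i+1) = offs Bs i + (Bs.getD i []).length := by
  unfold offs
  rw [List.take_succ, List.flatten_append, List.length_append]
  congr 1
  rw [List.getElem?_eq_getElem h, List.getD_eq_getElem _ _ h]
  simp

lemma offs_mono {Bs : List (List ℕ)} {i i' : ℕ} (h : i ≤ i') : offs Bs i ≤ offs Bs i' := by
  have hdec : Bs.take i' = Bs.take i ++ (Bs.take i').drop i := by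
    conv_lhs => rw [← List.take_append_drop i (Bs.take i')]
    rw [List.take_take, min_eq_left h]
  unfold offs
  rw [hdec, List.flatten_append, List.length_append]
  exact Nat.le_add_right _ _

lemma posn_lt_posn_blk {Bs : List (List ℕ)} {i i' a c : ℕ} (h : i < i')
    (ha : a ∈ Bs.getD i []) : posn Bs i a < posn Bs i' c := by
  have h1 : (Bs.getD i []).idxOf a < (Bs.getD i []).length := List.idxOf_lt_length_iff.2 ha
  have h2 : offs Bs (i+1) ≤ offs Bs i' := offs_mono h
  have h3 := offs_succ (Bs := Bs) (blk_lt_of_mem ha)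
  unfold posn
  omega

lemma posn_lt_posn_same {Bs : List (List ℕ)} {i a c : ℕ}
    (h : (Bs.getD i []).idxOf a < (Bs.getD i []).idxOf c) :
    posn Bs i a < posn Bs i c := by
  unfold posn; omega

lemma flatten_decomp {Bs : List (List ℕ)} {i : ℕ} (h : i < Bs.length) :
    Bs.flatten = (Bs.take i).flatten ++ (Bs.getD i [] ++ (Bs.drop (i+1)).flatten) := by
  conv_lhs => rw [← List.take_append_drop i Bs]
  rw [List.drop_eq_getElem_cons h, List.flatten_append, List.flatten_cons,
    List.getD_eq_getElem _ _ h]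

lemma getElem_posn {Bs : List (List ℕ)} {i a : ℕ} (ha : a ∈ Bs.getD i []) :
    ∃ (hp : posn Bs i a < Bs.flatten.length), Bs.flatten[posn Bs i a]'hp = a := by
  have hi : i < Bs.length := blk_lt_of_mem ha
  have hidx : (Bs.getD i []).idxOf a < (Bs.getD i []).length := List.idxOf_lt_length_iff.2 ha
  have hdec := flatten_decomp (Bs := Bs) hi
  have hlen : posn Bs i a < Bs.flatten.length := by
    rw [hdec, List.length_append, List.length_append]
    unfold posn
    have : offs Bs i = ((Bs.take i).flatten).length := rfl
    omega
  refine ⟨hlen, ?_⟩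
  have h1 : Bs.flatten[posn Bs i a]'hlen =
      ((Bs.take i).flatten ++ (Bs.getD i [] ++ (Bs.drop (i+1)).flatten))[posn Bs i a]'(by rw [← hdec]; exact hlen) := by
    congr 1 <;> rw [hdec]
  rw [h1]
  rw [List.getElem_append_right (by unfold posn offs; omega)]
  have hq : posn Bs i a - ((Bs.take i).flatten).length = (Bs.getD i []).idxOf a := by
    unfold posn offs; omega
  rw [List.getElem_append_left (by omega)]
  · simp only [hq]
    exact List.getElem_idxOf hidx

/-- Main forbidden-pattern lemma: five occurrences at increasing positions with values
`x y x y x`, `x ≠ y`, contradict `¬ HasAlt S 5`. -/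
lemma ababa {Bs : List (List ℕ)} (hnoalt : ¬ HasAlt Bs.flatten (3+2)) {x y : ℕ} (hxy : x ≠ y)
    {i1 i2 i3 i4 i5 : ℕ}
    (m1 : x ∈ Bs.getD i1 []) (m2 : y ∈ Bs.getD i2 []) (m3 : x ∈ Bs.getD i3 [])
    (m4 : y ∈ Bs.getD i4 []) (m5 : x ∈ Bs.getD i5 [])
    (o1 : posn Bs i1 x < posn Bs i2 y) (o2 : posn Bs i2 y < posn Bs i3 x)
    (o3 : posn Bs i3 x < posn Bs i4 y) (o4 : posn Bs i4 y < posn Bs i5 x) : False := by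
  obtain ⟨h1, g1⟩ := getElem_posn m1
  obtain ⟨h2, g2⟩ := getElem_posn m2
  obtain ⟨h3, g3⟩ := getElem_posn m3
  obtain ⟨h4, g4⟩ := getElem_posn m4
  obtain ⟨h5, g5⟩ := getElem_posn m5
  apply hnoalt
  refine ⟨x, y, hxy, ?_⟩
  have haltl : altList x y (3+2) = [x,y,x,y,x] := rfl
  rw [haltl]
  have hp : List.Pairwise (· < ·)
      ([⟨_,h1⟩,⟨_,h2⟩,⟨_,h3⟩,⟨_,h4⟩,⟨_,h5⟩] : List (Fin Bs.flatten.length)) := by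
    refine List.Pairwise.cons (fun b hb => ?_) (List.Pairwise.cons (fun b hb => ?_)
      (List.Pairwise.cons (fun b hb => ?_) (List.Pairwise.cons (fun b hb => ?_)
      (List.pairwise_singleton _ _)))) <;>
    · simp only [List.mem_cons, List.mem_singleton, List.not_mem_nil, or_false] at hb
      first
      | (rcases hb with rfl|rfl|rfl|rfl) <;> (rw [Fin.mk_lt_mk]; omega)
      | (rcases hb with rfl|rfl|rfl) <;> (rw [Fin.mk_lt_mk]; omega)
      | (rcases hb with rfl|rfl) <;> (rw [Fin.mk_lt_mk]; omega)
      | (rcases hb with rfl) <;> (rw [Fin.mk_lt_mk]; omega)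
  have hs := List.map_getElem_sublist (l := Bs.flatten)
    (is := [⟨_,h1⟩,⟨_,h2⟩,⟨_,h3⟩,⟨_,h4⟩,⟨_,h5⟩]) hp
  simpa [g1, g2, g3, g4, g5] using hs

lemma sum_map_getD (l : List (List ℕ)) (f : List ℕ → ℕ) :
    (l.map f).sum = ∑ i ∈ Finset.range l.length, f (l.getD i []) := by
  induction l with
  | nil => simp
  | cons x l ih =>
    rw [List.map_cons, List.sum_cons, List.length_cons, Finset.sum_range_succ']
    simp only [List.getD_cons_succ, List.getD_cons_zero]
    rw [ih]; ring

lemma count_flatten_card {Bs : List (List ℕ)} (hnd : ∀ B ∈ Bs, B.Nodup) (a : ℕ) :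
    Bs.flatten.count a = (blocksOf Bs a).card := by
  rw [List.count_flatten, sum_map_getD, blocksOf, Finset.card_filter]
  refine Finset.sum_congr rfl (fun i hi => ?_)
  rw [Finset.mem_range] at hi
  have hnod : (Bs.getD i []).Nodup := by
    rw [List.getD_eq_getElem _ _ hi]
    exact hnd _ (List.getElem_mem hi)
  by_cases hmem : a ∈ Bs.getD i []
  · rw [if_pos hmem, List.count_eq_one_of_mem hnod hmem]
  · rw [if_neg hmem, List.count_eq_zero_of_not_mem hmem]

lemma mem_flatten_blocksOf {Bs : List (List ℕ)} {a : ℕ} :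
    a ∈ Bs.flatten ↔ (blocksOf Bs a).Nonempty := by
  rw [List.mem_flatten]
  constructor
  · rintro ⟨B, hB, haB⟩
    obtain ⟨i, hi, rfl⟩ := List.mem_iff_getElem.1 hB
    exact ⟨i, mem_blocksOf.2 ⟨hi, by rwa [List.getD_eq_getElem _ _ hi]⟩⟩
  · rintro ⟨i, hi⟩
    obtain ⟨hlt, hmem⟩ := mem_blocksOf.1 hi
    exact ⟨Bs.getD i [], by rw [List.getD_eq_getElem _ _ hlt]; exact ⟨List.getElem_mem hlt, by rwa [← List.getD_eq_getElem _ _ hlt]⟩⟩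

lemma div_strict {t i i' : ℕ} (h : i / t < i' / t) : i < i' := by
  by_contra hle
  exact absurd (Nat.div_le_div_right (le_of_not_gt hle)) (not_le.2 h)

lemma div_eq_iff' {t i j : ℕ} (ht : 0 < t) : i / t = j ↔ j*t ≤ i ∧ i < j*t + t := by
  constructor
  · rintro rfl
    have h1 := Nat.div_add_mod' i t
    have h2 := Nat.mod_lt i ht
    constructor <;> omega
  · rintro ⟨hlo, hhi⟩
    have h1 : j ≤ i / t := (Nat.le_div_iff_mul_le ht).2 hlo
    have h2 : i / t < j + 1 := (Nat.div_lt_iff_lt_mul ht).2 (by rw [add_mul, one_mul]; omega)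
    omega

lemma seg_decomp (Bs : List (List ℕ)) (t j : ℕ) :
    Bs = Bs.take (j*t) ++ (seg Bs t j ++ Bs.drop (j*t + t)) := by
  unfold seg
  conv_lhs => rw [← List.take_append_drop (j*t) Bs]
  congr 1
  conv_lhs => rw [← List.take_append_drop t (Bs.drop (j*t))]
  rw [List.drop_drop]

lemma seg_mem_sub {Bs : List (List ℕ)} {t j : ℕ} {B : List ℕ} (h : B ∈ seg Bs t j) :
    B ∈ Bs := by
  exact ((List.take_sublist _ _).trans (List.drop_sublist _ _)).subset h

lemma length_seg_le (Bs : List (List ℕ)) (t j : ℕ) : (seg Bs t j).length ≤ t := by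
  simp [seg]

lemma length_seg (Bs : List (List ℕ)) (t j : ℕ) :
    (seg Bs t j).length = min t (Bs.length - j*t) := by
  simp [seg]

lemma seg_getD {Bs : List (List ℕ)} {t j q : ℕ} (hq : q < (seg Bs t j).length) :
    (seg Bs t j).getD q [] = Bs.getD (j*t + q) [] := by
  have hlen : j*t + q < Bs.length := by
    rw [length_seg] at hq; omega
  rw [List.getD_eq_getElem _ _ hq, List.getD_eq_getElem _ _ hlen]
  simp only [seg, List.getElem_take, List.getElem_drop]

lemma segflat_infix (Bs : List (List ℕ)) (t j : ℕ) :
    Bs.flatten = (Bs.take (j*t)).flatten ++ ((seg Bs t j).flatten ++ (Bs.drop (j*t + t)).flatten) := by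
  conv_lhs => rw [seg_decomp Bs t j]
  rw [List.flatten_append, List.flatten_append]

lemma segflat_sublist (Bs : List (List ℕ)) (t j : ℕ) :
    (seg Bs t j).flatten.Sublist Bs.flatten := by
  rw [segflat_infix Bs t j]
  exact ((List.sublist_append_left _ _).trans (List.sublist_append_right _ _))

lemma mem_segflat {Bs : List (List ℕ)} {t j a : ℕ} (ht : 0 < t) :
    a ∈ (seg Bs t j).flatten ↔ ∃ i ∈ blocksOf Bs a, i / t = j := by
  rw [List.mem_flatten]
  constructor
  · rintro ⟨B, hB, haB⟩
    obtain ⟨q, hq, rfl⟩ := List.mem_iff_getElem.1 hB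
    have hgd : (seg Bs t j)[q] = (seg Bs t j).getD q [] := (List.getD_eq_getElem _ _ hq).symm
    rw [hgd, seg_getD hq] at haB
    have hlen : j*t + q < Bs.length := by rw [length_seg] at hq; omega
    refine ⟨j*t + q, mem_blocksOf.2 ⟨hlen, haB⟩, ?_⟩
    rw [div_eq_iff' ht]
    have : q < t := by rw [length_seg] at hq; omega
    omega
  · rintro ⟨i, hi, hij⟩
    obtain ⟨hlen, hmem⟩ := mem_blocksOf.1 hi
    rw [div_eq_iff' ht] at hij
    have hq : i - j*t < (seg Bs t j).length := by rw [length_seg]; omega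
    refine ⟨(seg Bs t j).getD (i - j*t) [], ?_, ?_⟩
    · rw [List.getD_eq_getElem _ _ hq]
      exact List.getElem_mem hq
    · rw [seg_getD hq]
      have : j*t + (i - j*t) = i := by omega
      rwa [this]

lemma count_segflat {Bs : List (List ℕ)} (hnd : ∀ B ∈ Bs, B.Nodup) {t : ℕ} (ht : 0 < t)
    (a j : ℕ) : (seg Bs t j).flatten.count a = grpcnt Bs t a j := by
  rw [count_flatten_card (fun B hB => hnd B (seg_mem_sub hB)) a]
  unfold grpcnt
  refine Finset.card_bij' (fun q _ => j*t + q) (fun i _ => i - j*t) ?_ ?_ ?_ ?_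
  · intro q hq
    try dsimp only
    obtain ⟨hqlen, hmem⟩ := mem_blocksOf.1 hq
    have hqt : q < t := by have := length_seg Bs t j; omega
    have hlen : j*t + q < Bs.length := by have := length_seg Bs t j; omega
    rw [Finset.mem_filter]
    rw [seg_getD hqlen] at hmem
    refine ⟨mem_blocksOf.2 ⟨hlen, hmem⟩, ?_⟩
    rw [div_eq_iff' ht]; omega
  · intro i hi
    try dsimp only
    rw [Finset.mem_filter] at hi
    obtain ⟨hib, hij⟩ := hi
    obtain ⟨hlen, hmem⟩ := mem_blocksOf.1 hib
    rw [div_eq_iff' ht] at hij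
    have hq : i - j*t < (seg Bs t j).length := by rw [length_seg]; omega
    refine mem_blocksOf.2 ⟨hq, ?_⟩
    rw [seg_getD hq]
    have : j*t + (i - j*t) = i := by omega
    rwa [this]
  · intro q hq; (try dsimp only); omega
  · intro i hi
    try dsimp only
    rw [Finset.mem_filter] at hi
    have := (div_eq_iff' ht).1 hi.2
    omega

lemma segs_cover (t : ℕ) (ht : 0 < t) :
    ∀ (c : ℕ) (Bs : List (List ℕ)), Bs.length ≤ c * t →
      ((List.range c).map (fun j => seg Bs t j)).flatten = Bs := by
  intro c
  induction c with
  | zero =>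
    intro Bs hB
    simp at hB
    simp [hB]
  | succ c ih =>
    intro Bs hB
    rw [List.range_succ_eq_map]
    rw [List.map_cons, List.flatten_cons, List.map_map]
    have h0 : seg Bs t 0 = Bs.take t := by simp [seg]
    have hcomp : ((List.range c).map ((fun j => seg Bs t j) ∘ Nat.succ)) =
        (List.range c).map (fun j => seg (Bs.drop t) t j) := by
      refine List.map_congr_left (fun j _ => ?_)
      simp only [Function.comp_apply, seg, List.drop_drop]
      congr 2
      simp [Nat.succ_mul]
      ring
    have harith : (c+1)*t = c*t + t := by ring
    rw [harith] at hB
    rw [hcomp, ih (Bs.drop t) (by rw [List.length_drop]; omega)]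
    rw [h0, List.take_append_drop]

lemma hasAlt_mono {S S' : List ℕ} {l : ℕ} (h : S.Sublist S') : HasAlt S l → HasAlt S' l := by
  rintro ⟨a, b, hab, hs⟩
  exact ⟨a, b, hab, hs.trans h⟩

lemma forall2_sublist_flatten : ∀ {L M : List (List ℕ)},
    List.Forall₂ List.Sublist L M → L.flatten.Sublist M.flatten := by
  intro L M h
  induction h with
  | nil => simp
  | cons h _ ih =>
    rw [List.flatten_cons, List.flatten_cons]
    exact h.append ih

lemma forall2_map {α β γ : Type} (R : β → γ → Prop) (l : List α) (f : α → β) (g : α → γ)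
    (h : ∀ x ∈ l, R (f x) (g x)) : List.Forall₂ R (l.map f) (l.map g) := by
  induction l with
  | nil => simp [List.Forall₂.nil]
  | cons x l ih =>
    rw [List.map_cons, List.map_cons]
    exact List.Forall₂.cons (h x (List.mem_cons_self)) (ih (fun y hy => h y (List.mem_cons_of_mem _ hy)))

lemma flatten_map_flatten (L : List (List (List ℕ))) :
    (L.map List.flatten).flatten = L.flatten.flatten := by
  induction L with
  | nil => simp
  | cons x L ih => simp [List.flatten_append, ih]

/-- number of groups -/
def ngr (Bs : List (List ℕ)) (t : ℕ) : ℕ := (Bs.length + t - 1) / t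

lemma len_le_ngr_mul {Bs : List (List ℕ)} {t : ℕ} (ht : 0 < t) :
    Bs.length ≤ ngr Bs t * t := by
  unfold ngr
  have h1 := Nat.div_add_mod' (Bs.length + t - 1) t
  have h2 := Nat.mod_lt (Bs.length + t - 1) ht
  omega

lemma div_lt_ngr {Bs : List (List ℕ)} {t i : ℕ} (ht : 0 < t) (h : i < Bs.length) :
    i / t < ngr Bs t := by
  have h1 : i / t * t ≤ i := Nat.div_mul_le_self _ _
  have h2 : (i / t + 1) ≤ ngr Bs t := by
    unfold ngr
    rw [Nat.le_div_iff_mul_le ht, add_mul, one_mul]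
    omega
  omega

lemma segs_cover' {Bs : List (List ℕ)} {t : ℕ} (ht : 0 < t) :
    ((List.range (ngr Bs t)).map (fun j => seg Bs t j)).flatten = Bs :=
  segs_cover t ht _ Bs (len_le_ngr_mul ht)

/-! ### Local symbols -/

def isloc (Bs : List (List ℕ)) (t j a : ℕ) : Prop := ∀ i ∈ blocksOf Bs a, i / t = j

instance (Bs : List (List ℕ)) (t j a : ℕ) : Decidable (isloc Bs t j a) := by
  unfold isloc; infer_instance

def locseq (Bs : List (List ℕ)) (t j : ℕ) : List ℕ :=
  ((seg Bs t j).map (List.filter (fun a => decide (isloc Bs t j a)))).flatten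

lemma locseq_eq_filter (Bs : List (List ℕ)) (t j : ℕ) :
    locseq Bs t j = (seg Bs t j).flatten.filter (fun a => decide (isloc Bs t j a)) := by
  unfold locseq
  rw [List.filter_flatten]

lemma locseq_sublist (Bs : List (List ℕ)) (t j : ℕ) :
    (locseq Bs t j).Sublist Bs.flatten := by
  rw [locseq_eq_filter]
  exact (List.filter_sublist).trans (segflat_sublist Bs t j)

lemma locseq_isADS {Bs : List (List ℕ)} {t k : ℕ} (ht : 0 < t)
    (hnd : ∀ B ∈ Bs, B.Nodup)
    (hcount : ∀ a ∈ Bs.flatten, k ≤ Bs.flatten.count a)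
    (hnoalt : ¬ HasAlt Bs.flatten (3+2)) (j : ℕ) :
    IsADS 3 k t (locseq Bs t j) := by
  refine ⟨⟨(seg Bs t j).map (List.filter (fun a => decide (isloc Bs t j a))),
      le_trans (by rw [List.length_map]) (length_seg_le Bs t j), rfl, ?_⟩, ?_, ?_⟩
  · intro B hB
    obtain ⟨B', hB', rfl⟩ := List.mem_map.1 hB
    exact List.Nodup.filter _ (hnd B' (seg_mem_sub hB'))
  · intro a ha
    have ha' : a ∈ (seg Bs t j).flatten.filter (fun a => decide (isloc Bs t j a)) := by
      rw [← locseq_eq_filter]; exact ha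
    rw [List.mem_filter] at ha'
    obtain ⟨haseg, hloc⟩ := ha'
    have hloc' : isloc Bs t j a := by simpa using hloc
    have hmemS : a ∈ Bs.flatten := (segflat_sublist Bs t j).subset haseg
    show k ≤ (locseq Bs t j).count a
    rw [locseq_eq_filter, List.count_filter (by simpa using hloc'), count_segflat hnd ht]
    have hfe : (blocksOf Bs a).filter (fun i => i / t = j) = blocksOf Bs a :=
      Finset.filter_eq_self.2 hloc'
    unfold grpcnt
    rw [hfe, ← count_flatten_card hnd]
    exact hcount a hmemS
  · intro hAlt
    exact hnoalt (hasAlt_mono (locseq_sublist Bs t j) hAlt)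

lemma locset_subset {Bs : List (List ℕ)} {t : ℕ} (ht : 0 < t) (j : ℕ) :
    Bs.flatten.toFinset.filter (fun a => isloc Bs t j a) ⊆ (locseq Bs t j).toFinset := by
  intro a ha
  rw [Finset.mem_filter, List.mem_toFinset] at ha
  obtain ⟨haS, hloc⟩ := ha
  obtain ⟨i, hi⟩ := mem_flatten_blocksOf.1 haS
  have hij : i / t = j := hloc i hi
  have : a ∈ (seg Bs t j).flatten := (mem_segflat ht).2 ⟨i, hi, hij⟩
  rw [List.mem_toFinset, locseq_eq_filter, List.mem_filter]
  exact ⟨this, by simpa using hloc⟩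

/-! ### Wide symbols -/

def wblk (Bs : List (List ℕ)) (t k' j : ℕ) : List ℕ :=
  ((seg Bs t j).flatten.dedup).filter (fun a => decide (k' ≤ dgrp Bs t a))

def wseq (Bs : List (List ℕ)) (t k' : ℕ) : List ℕ :=
  ((List.range (ngr Bs t)).map (fun j => wblk Bs t k' j)).flatten

lemma wseq_sublist {Bs : List (List ℕ)} {t : ℕ} (ht : 0 < t) (k' : ℕ) :
    (wseq Bs t k').Sublist Bs.flatten := by
  have h1 : List.Forall₂ List.Sublist ((List.range (ngr Bs t)).map (fun j => wblk Bs t k' j))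
      ((List.range (ngr Bs t)).map (fun j => (seg Bs t j).flatten)) := by
    refine forall2_map _ _ _ _ (fun j _ => ?_)
    exact (List.filter_sublist).trans (List.dedup_sublist _)
  have h2 := forall2_sublist_flatten h1
  have h3 : ((List.range (ngr Bs t)).map (fun j => (seg Bs t j).flatten)).flatten = Bs.flatten := by
    have : ((List.range (ngr Bs t)).map (fun j => (seg Bs t j).flatten)) =
        (((List.range (ngr Bs t)).map (fun j => seg Bs t j)).map List.flatten) := by
      rw [List.map_map]
      rfl
    rw [this, flatten_map_flatten, segs_cover' ht]
  rwa [h3] at h2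

lemma sum_map_range (g : ℕ → ℕ) (n : ℕ) :
    ((List.range n).map g).sum = ∑ j ∈ Finset.range n, g j := by
  induction n with
  | zero => simp
  | succ n ih => rw [List.range_succ, List.map_append, List.sum_append, Finset.sum_range_succ, ih]; simp

lemma count_wseq {Bs : List (List ℕ)} {t : ℕ} (ht : 0 < t) (hnd : ∀ B ∈ Bs, B.Nodup)
    {k' a : ℕ} (hw : k' ≤ dgrp Bs t a) :
    (wseq Bs t k').count a = dgrp Bs t a := by
  unfold wseq
  rw [List.count_flatten, List.map_map, sum_map_range]
  have hterm : ∀ j, (List.count a ∘ fun j => wblk Bs t k' j) j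
      = if a ∈ (seg Bs t j).flatten then 1 else 0 := by
    intro j
    simp only [Function.comp_apply]
    unfold wblk
    by_cases hmem : a ∈ (seg Bs t j).flatten
    · rw [if_pos hmem, List.count_filter (by simpa using hw), List.count_dedup, if_pos hmem]
    · rw [if_neg hmem, List.count_eq_zero_of_not_mem]
      intro hcon
      exact hmem (List.mem_dedup.1 (List.mem_filter.1 hcon).1)
  rw [Finset.sum_congr rfl (fun j _ => hterm j)]
  rw [← Finset.card_filter]
  unfold dgrp
  congr 1
  ext j
  rw [Finset.mem_filter, Finset.mem_image, Finset.mem_range]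
  constructor
  · rintro ⟨hj, hmem⟩
    obtain ⟨i, hi, hij⟩ := (mem_segflat ht).1 hmem
    exact ⟨i, hi, hij⟩
  · rintro ⟨i, hi, hij⟩
    have hlt : i < Bs.length := (mem_blocksOf.1 hi).1
    exact ⟨hij ▸ div_lt_ngr ht hlt, (mem_segflat ht).2 ⟨i, hi, hij⟩⟩

lemma wseq_isADS {Bs : List (List ℕ)} {t k' b : ℕ} (ht : 0 < t)
    (hnd : ∀ B ∈ Bs, B.Nodup) (hb : ngr Bs t ≤ b)
    (hnoalt : ¬ HasAlt Bs.flatten (3+2)) :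
    IsADS 3 k' b (wseq Bs t k') := by
  refine ⟨⟨(List.range (ngr Bs t)).map (fun j => wblk Bs t k' j),
      by rw [List.length_map, List.length_range]; exact hb, rfl, ?_⟩, ?_, ?_⟩
  · intro B hB
    obtain ⟨j, _, rfl⟩ := List.mem_map.1 hB
    exact List.Nodup.filter _ (List.nodup_dedup _)
  · intro a ha
    have haw : a ∈ wseq Bs t k' := ha
    obtain ⟨B, hB, haB⟩ := List.mem_flatten.1 haw
    obtain ⟨j, _, rfl⟩ := List.mem_map.1 hB
    have hw : k' ≤ dgrp Bs t a := by
      have := (List.mem_filter.1 haB).2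
      simpa using this
    calc k' ≤ dgrp Bs t a := hw
    _ = (wseq Bs t k').count a := (count_wseq ht hnd hw).symm
  · intro hAlt
    exact hnoalt (hasAlt_mono (wseq_sublist ht k') hAlt)

lemma wideset_subset {Bs : List (List ℕ)} {t : ℕ} (ht : 0 < t) (k' : ℕ) :
    Bs.flatten.toFinset.filter (fun a => k' ≤ dgrp Bs t a) ⊆ (wseq Bs t k').toFinset := by
  intro a ha
  rw [Finset.mem_filter, List.mem_toFinset] at ha
  obtain ⟨haS, hw⟩ := ha
  obtain ⟨i, hi⟩ := mem_flatten_blocksOf.1 haS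
  have hlt : i < Bs.length := (mem_blocksOf.1 hi).1
  rw [List.mem_toFinset]
  unfold wseq
  rw [List.mem_flatten]
  refine ⟨wblk Bs t k' (i/t), List.mem_map.2 ⟨i/t, List.mem_range.2 (div_lt_ngr ht hlt), rfl⟩, ?_⟩
  unfold wblk
  rw [List.mem_filter, List.mem_dedup]
  exact ⟨(mem_segflat ht).2 ⟨i, hi, rfl⟩, by simpa using hw⟩

/-! ### Poor symbols -/

lemma nthB_mem {G : Finset ℕ} {q : ℕ} (hq : q < G.card) : nthB G q ∈ G := by
  unfold nthB
  have hlen : q < (G.sort (·≤·)).length := by rwa [Finset.length_sort]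
  rw [List.getD_eq_getElem _ _ hlen]
  exact (Finset.mem_sort _).1 (List.getElem_mem hlen)

lemma nthB_lt {G : Finset ℕ} {q q' : ℕ} (hqq : q < q') (hq' : q' < G.card) :
    nthB G q < nthB G q' := by
  unfold nthB
  have hlen' : q' < (G.sort (·≤·)).length := by rwa [Finset.length_sort]
  have hlen : q < (G.sort (·≤·)).length := lt_trans (by omega) hlen'
  rw [List.getD_eq_getElem _ _ hlen, List.getD_eq_getElem _ _ hlen']
  have hsort := (Finset.sortedLT_sort G).pairwise
  exact (List.pairwise_iff_getElem.1 hsort) q q' hlen hlen' hqq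

def PP1 (Bs : List (List ℕ)) (t a : ℕ) : Prop :=
  ∃ j, 2 ≤ grpcnt Bs t a j ∧ (∃ i ∈ blocksOf Bs a, i/t < j) ∧ (∃ i ∈ blocksOf Bs a, j < i/t)

def QQ2 (Bs : List (List ℕ)) (t a : ℕ) : Prop :=
  ∃ j, 3 ≤ grpcnt Bs t a j ∧ (∃ i ∈ blocksOf Bs a, j < i/t)

def QQ3 (Bs : List (List ℕ)) (t a : ℕ) : Prop :=
  ∃ j, 3 ≤ grpcnt Bs t a j ∧ (∃ i ∈ blocksOf Bs a, i/t < j)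

open Classical in
noncomputable def delta1 (Bs : List (List ℕ)) (t a : ℕ) : ℕ :=
  if h : PP1 Bs t a then
    nthB ((blocksOf Bs a).filter (fun i => i/t = Nat.find h)) 1 else 0

open Classical in
noncomputable def delta2 (Bs : List (List ℕ)) (t a : ℕ) : ℕ :=
  if h : QQ2 Bs t a then
    nthB ((blocksOf Bs a).filter (fun i => i/t = Nat.find h)) 1 else 0

open Classical in
noncomputable def delta3 (Bs : List (List ℕ)) (t a : ℕ) : ℕ :=
  if h : QQ3 Bs t a then
    nthB ((blocksOf Bs a).filter (fun i => i/t = Nat.find h)) 1 else 0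

lemma indexOf_cases {Bs : List (List ℕ)} {a c β : ℕ} (hac : a ≠ c)
    (ha : β ∈ blocksOf Bs a) (hc : β ∈ blocksOf Bs c) :
    (Bs.getD β []).idxOf a < (Bs.getD β []).idxOf c ∨
    (Bs.getD β []).idxOf c < (Bs.getD β []).idxOf a := by
  have hma := (mem_blocksOf.1 ha).2
  have hmc := (mem_blocksOf.1 hc).2
  have hia := List.idxOf_lt_length_iff.2 hma
  have hic := List.idxOf_lt_length_iff.2 hmc
  rcases Nat.lt_trichotomy ((Bs.getD β []).idxOf a) ((Bs.getD β []).idxOf c) with h|h|h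
  · exact Or.inl h
  · exfalso
    apply hac
    have h1 := List.getElem_idxOf hia
    have h2 := List.getElem_idxOf hic
    rw [← h1, ← h2]
    congr 1
  · exact Or.inr h

/-- Core `ababa` for `P1` collision: `a@i0 c@h1 a@β c@β a@i4`. -/
lemma p1_core {Bs : List (List ℕ)} {t : ℕ}
    (hnoalt : ¬ HasAlt Bs.flatten (3+2)) {a c β j i0 i4 h1 : ℕ} (hac : a ≠ c)
    (hβa : β ∈ blocksOf Bs a) (hβc : β ∈ blocksOf Bs c) (hβj : β / t = j)
    (hi0 : i0 ∈ blocksOf Bs a) (hi0j : i0 / t < j)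
    (hi4 : i4 ∈ blocksOf Bs a) (hji4 : j < i4 / t)
    (hh1 : h1 ∈ blocksOf Bs c) (hh1j : h1 / t = j) (hh1β : h1 < β)
    (hidx : (Bs.getD β []).idxOf a < (Bs.getD β []).idxOf c) : False := by
  have ma := (mem_blocksOf.1 hβa).2
  have mc := (mem_blocksOf.1 hβc).2
  have m0 := (mem_blocksOf.1 hi0).2
  have m4 := (mem_blocksOf.1 hi4).2
  have m1 := (mem_blocksOf.1 hh1).2
  have o1 : posn Bs i0 a < posn Bs h1 c :=
    posn_lt_posn_blk (div_strict (by omega : i0/t < h1/t)) m0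
  have o2 : posn Bs h1 c < posn Bs β a := posn_lt_posn_blk hh1β m1
  have o3 : posn Bs β a < posn Bs β c := posn_lt_posn_same hidx
  have o4 : posn Bs β c < posn Bs i4 a :=
    posn_lt_posn_blk (div_strict (by omega : β/t < i4/t)) mc
  exact ababa hnoalt hac m0 m1 ma mc m4 o1 o2 o3 o4

/-- Core `ababa` for `Q2` collision: `c@h1 a@β c@β a@i3 c@h4`. -/
lemma q2_core {Bs : List (List ℕ)} {t : ℕ}
    (hnoalt : ¬ HasAlt Bs.flatten (3+2)) {a c β j i3 h1 h4 : ℕ} (hac : a ≠ c)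
    (hβa : β ∈ blocksOf Bs a) (hβc : β ∈ blocksOf Bs c) (hβj : β / t = j)
    (hi3 : i3 ∈ blocksOf Bs a) (hi3j : i3 / t = j) (hβi3 : β < i3)
    (hh1 : h1 ∈ blocksOf Bs c) (hh1j : h1 / t = j) (hh1β : h1 < β)
    (hh4 : h4 ∈ blocksOf Bs c) (hjh4 : j < h4 / t)
    (hidx : (Bs.getD β []).idxOf a < (Bs.getD β []).idxOf c) : False := by
  have ma := (mem_blocksOf.1 hβa).2
  have mc := (mem_blocksOf.1 hβc).2
  have m3 := (mem_blocksOf.1 hi3).2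
  have m1 := (mem_blocksOf.1 hh1).2
  have m4 := (mem_blocksOf.1 hh4).2
  have o1 : posn Bs h1 c < posn Bs β a := posn_lt_posn_blk hh1β m1
  have o2 : posn Bs β a < posn Bs β c := posn_lt_posn_same hidx
  have o3 : posn Bs β c < posn Bs i3 a := posn_lt_posn_blk hβi3 mc
  have o4 : posn Bs i3 a < posn Bs h4 c :=
    posn_lt_posn_blk (div_strict (by omega : i3/t < h4/t)) m3
  exact ababa hnoalt (Ne.symm hac) m1 ma mc m3 m4 o1 o2 o3 o4

/-- Core `ababa` for `Q3` collision: `a@i0 c@h1 a@β c@β a@i3`. -/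
lemma q3_core {Bs : List (List ℕ)} {t : ℕ}
    (hnoalt : ¬ HasAlt Bs.flatten (3+2)) {a c β j i0 i3 h1 : ℕ} (hac : a ≠ c)
    (hβa : β ∈ blocksOf Bs a) (hβc : β ∈ blocksOf Bs c) (hβj : β / t = j)
    (hi0 : i0 ∈ blocksOf Bs a) (hi0j : i0 / t < j)
    (hi3 : i3 ∈ blocksOf Bs a) (hi3j : i3 / t = j) (hβi3 : β < i3)
    (hh1 : h1 ∈ blocksOf Bs c) (hh1j : h1 / t = j) (hh1β : h1 < β)
    (hidx : (Bs.getD β []).idxOf a < (Bs.getD β []).idxOf c) : False := by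
  have ma := (mem_blocksOf.1 hβa).2
  have mc := (mem_blocksOf.1 hβc).2
  have m0 := (mem_blocksOf.1 hi0).2
  have m3 := (mem_blocksOf.1 hi3).2
  have m1 := (mem_blocksOf.1 hh1).2
  have o1 : posn Bs i0 a < posn Bs h1 c :=
    posn_lt_posn_blk (div_strict (by omega : i0/t < h1/t)) m0
  have o2 : posn Bs h1 c < posn Bs β a := posn_lt_posn_blk hh1β m1
  have o3 : posn Bs β a < posn Bs β c := posn_lt_posn_same hidx
  have o4 : posn Bs β c < posn Bs i3 a := posn_lt_posn_blk hβi3 mc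
  exact ababa hnoalt hac m0 m1 ma mc m3 o1 o2 o3 o4

def jmin (s : Finset ℕ) : ℕ := s.min.getD 0

lemma jmin_mem {s : Finset ℕ} (h : s.Nonempty) : jmin s ∈ s := by
  unfold jmin
  rw [← Finset.coe_min' h]
  exact Finset.min'_mem s h

def cond1 (Bs : List (List ℕ)) (t a j : ℕ) : Prop :=
  2 ≤ grpcnt Bs t a j ∧ (∃ i ∈ blocksOf Bs a, i/t < j) ∧ (∃ i ∈ blocksOf Bs a, j < i/t)

def cond2 (Bs : List (List ℕ)) (t a j : ℕ) : Prop :=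
  3 ≤ grpcnt Bs t a j ∧ (∃ i ∈ blocksOf Bs a, j < i/t)

def cond3 (Bs : List (List ℕ)) (t a j : ℕ) : Prop :=
  3 ≤ grpcnt Bs t a j ∧ (∃ i ∈ blocksOf Bs a, i/t < j)

instance (Bs : List (List ℕ)) (t a j : ℕ) : Decidable (cond1 Bs t a j) := by
  unfold cond1; infer_instance
instance (Bs : List (List ℕ)) (t a j : ℕ) : Decidable (cond2 Bs t a j) := by
  unfold cond2; infer_instance
instance (Bs : List (List ℕ)) (t a j : ℕ) : Decidable (cond3 Bs t a j) := by
  unfold cond3; infer_instance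

noncomputable def dlt (cond : ℕ → ℕ → Prop) [∀ a j, Decidable (cond a j)]
    (Bs : List (List ℕ)) (t ng a : ℕ) : ℕ :=
  nthB ((blocksOf Bs a).filter
    (fun i => i/t = jmin ((Finset.range ng).filter (fun j => cond a j)))) 1

lemma exists_blk_of_grpcnt {Bs : List (List ℕ)} {t a j : ℕ} (h : 1 ≤ grpcnt Bs t a j) :
    ∃ i ∈ blocksOf Bs a, i/t = j := by
  unfold grpcnt at h
  obtain ⟨i, hi⟩ := Finset.card_pos.1 (by omega : 0 < ((blocksOf Bs a).filter (fun i => i/t = j)).card)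
  rw [Finset.mem_filter] at hi
  exact ⟨i, hi.1, hi.2⟩

lemma j_lt_ngr {Bs : List (List ℕ)} {t a j : ℕ} (ht : 0 < t)
    (h : 1 ≤ grpcnt Bs t a j) : j < ngr Bs t := by
  obtain ⟨i, hi, hij⟩ := exists_blk_of_grpcnt h
  exact hij ▸ div_lt_ngr ht (mem_blocksOf.1 hi).1

/-- Data extracted for a symbol in one of the classes. -/
lemma dlt_spec (cond : ℕ → ℕ → Prop) [∀ a j, Decidable (cond a j)]
    {Bs : List (List ℕ)} {t : ℕ} (ht : 0 < t) {a : ℕ} {r : ℕ}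
    (hr : 2 ≤ r)
    (hg : ∀ j, cond a j → r ≤ grpcnt Bs t a j)
    (h : ∃ j, cond a j) :
    ∃ j, cond a j ∧ dlt cond Bs t (ngr Bs t) a ∈ (blocksOf Bs a) ∧
      (dlt cond Bs t (ngr Bs t) a) / t = j ∧
      r ≤ grpcnt Bs t a j ∧
      jmin ((Finset.range (ngr Bs t)).filter (fun j => cond a j)) = j := by
  obtain ⟨j0, hj0⟩ := h
  have h1le : 1 ≤ grpcnt Bs t a j0 := le_trans (by omega) (hg j0 hj0)
  have hne : ((Finset.range (ngr Bs t)).filter (fun j => cond a j)).Nonempty :=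
    ⟨j0, Finset.mem_filter.2 ⟨Finset.mem_range.2 (j_lt_ngr ht h1le), hj0⟩⟩
  set j := jmin ((Finset.range (ngr Bs t)).filter (fun j => cond a j)) with hjdef
  have hjmem := jmin_mem hne
  rw [← hjdef] at hjmem
  rw [Finset.mem_filter] at hjmem
  have hcondj : cond a j := hjmem.2
  have hcard : r ≤ ((blocksOf Bs a).filter (fun i => i/t = j)).card := hg j hcondj
  unfold grpcnt at hcard
  have hmem1 : dlt cond Bs t (ngr Bs t) a ∈ (blocksOf Bs a).filter (fun i => i/t = j) := by
    unfold dlt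
    rw [← hjdef]
    exact nthB_mem (by omega)
  rw [Finset.mem_filter] at hmem1
  exact ⟨j, hcondj, hmem1.1, hmem1.2, hcard, rfl⟩

lemma dlt_second (cond : ℕ → ℕ → Prop) [∀ a j, Decidable (cond a j)]
    {Bs : List (List ℕ)} {t : ℕ} {a j : ℕ}
    (hj : jmin ((Finset.range (ngr Bs t)).filter (fun j => cond a j)) = j)
    {r : ℕ} (hr : 2 ≤ r) (hcard : r ≤ grpcnt Bs t a j) :
    ∃ i1 ∈ blocksOf Bs a, i1 / t = j ∧ i1 < dlt cond Bs t (ngr Bs t) a := by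
  have h0 : nthB ((blocksOf Bs a).filter (fun i => i/t = j)) 0
      ∈ (blocksOf Bs a).filter (fun i => i/t = j) := nthB_mem (by unfold grpcnt at hcard; omega)
  rw [Finset.mem_filter] at h0
  refine ⟨_, h0.1, h0.2, ?_⟩
  unfold dlt
  rw [hj]
  exact nthB_lt (by omega) (by unfold grpcnt at hcard; omega)

lemma dlt_third (cond : ℕ → ℕ → Prop) [∀ a j, Decidable (cond a j)]
    {Bs : List (List ℕ)} {t : ℕ} {a j : ℕ}
    (hj : jmin ((Finset.range (ngr Bs t)).filter (fun j => cond a j)) = j)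
    (hcard : 3 ≤ grpcnt Bs t a j) :
    ∃ i3 ∈ blocksOf Bs a, i3 / t = j ∧ dlt cond Bs t (ngr Bs t) a < i3 := by
  have h2 : nthB ((blocksOf Bs a).filter (fun i => i/t = j)) 2
      ∈ (blocksOf Bs a).filter (fun i => i/t = j) := nthB_mem (by unfold grpcnt at hcard; omega)
  rw [Finset.mem_filter] at h2
  refine ⟨_, h2.1, h2.2, ?_⟩
  unfold dlt
  rw [hj]
  exact nthB_lt (by omega) (by unfold grpcnt at hcard; omega)

open Classical in
lemma card_cls1 {Bs : List (List ℕ)} {t : ℕ} (ht : 0 < t)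
    (hnoalt : ¬ HasAlt Bs.flatten (3+2)) :
    (Bs.flatten.toFinset.filter (fun a => ∃ j, cond1 Bs t a j)).card ≤ Bs.length := by
  classical
  have hmap : ∀ a ∈ Bs.flatten.toFinset.filter (fun a => ∃ j, cond1 Bs t a j),
      dlt (cond1 Bs t) Bs t (ngr Bs t) a ∈ Finset.range Bs.length := by
    intro a ha
    obtain ⟨j, _, hmem, _, _, _⟩ := dlt_spec (cond1 Bs t) ht (le_refl 2)
      (fun j hj => hj.1) (Finset.mem_filter.1 ha).2
    exact Finset.mem_range.2 (mem_blocksOf.1 hmem).1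
  have hcard := Finset.card_le_card_of_injOn _ hmap ?_
  · simpa using hcard
  intro a ha c hc heq
  by_contra hne
  simp only [Finset.coe_filter, Set.mem_setOf_eq] at ha hc
  obtain ⟨ja, hconda, hamem, hadiv, hacard, hajmin⟩ := dlt_spec (cond1 Bs t) ht (le_refl 2)
    (fun j hj => hj.1) ha.2
  obtain ⟨jc, hcondc, hcmem, hcdiv, hccard, hcjmin⟩ := dlt_spec (cond1 Bs t) ht (le_refl 2)
    (fun j hj => hj.1) hc.2
  set β := dlt (cond1 Bs t) Bs t (ngr Bs t) a with hβ
  have hβc' : dlt (cond1 Bs t) Bs t (ngr Bs t) c = β := heq.symm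
  rw [hβc'] at hcmem hcdiv
  have hjj : ja = jc := by rw [← hadiv, ← hcdiv]
  subst hjj
  obtain ⟨i0a, hi0a, hi0aj⟩ := hconda.2.1
  obtain ⟨i4a, hi4a, hi4aj⟩ := hconda.2.2
  obtain ⟨i0c, hi0c, hi0cj⟩ := hcondc.2.1
  obtain ⟨i4c, hi4c, hi4cj⟩ := hcondc.2.2
  obtain ⟨h1a, hh1a, hh1aj, hh1alt⟩ := dlt_second (cond1 Bs t) hajmin (le_refl 2) hacard
  obtain ⟨h1c, hh1c, hh1cj, hh1clt⟩ := dlt_second (cond1 Bs t) hcjmin (le_refl 2) hccard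
  rw [hβc'] at hh1clt
  rcases indexOf_cases hne hamem hcmem with hidx | hidx
  · exact p1_core hnoalt hne hamem hcmem hadiv hi0a hi0aj hi4a hi4aj hh1c hh1cj hh1clt hidx
  · exact p1_core hnoalt (Ne.symm hne) hcmem hamem hcdiv hi0c hi0cj hi4c hi4cj hh1a hh1aj
      (hβ ▸ hh1alt) hidx

open Classical in
lemma card_cls2 {Bs : List (List ℕ)} {t : ℕ} (ht : 0 < t)
    (hnoalt : ¬ HasAlt Bs.flatten (3+2)) :
    (Bs.flatten.toFinset.filter (fun a => ∃ j, cond2 Bs t a j)).card ≤ Bs.length := by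
  classical
  have hmap : ∀ a ∈ Bs.flatten.toFinset.filter (fun a => ∃ j, cond2 Bs t a j),
      dlt (cond2 Bs t) Bs t (ngr Bs t) a ∈ Finset.range Bs.length := by
    intro a ha
    obtain ⟨j, _, hmem, _, _, _⟩ := dlt_spec (cond2 Bs t) ht (by omega : (2:ℕ) ≤ 3)
      (fun j hj => hj.1) (Finset.mem_filter.1 ha).2
    exact Finset.mem_range.2 (mem_blocksOf.1 hmem).1
  have hcard := Finset.card_le_card_of_injOn _ hmap ?_
  · simpa using hcard
  intro a ha c hc heq
  by_contra hne
  simp only [Finset.coe_filter, Set.mem_setOf_eq] at ha hc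
  obtain ⟨ja, hconda, hamem, hadiv, hacard, hajmin⟩ := dlt_spec (cond2 Bs t) ht
    (by omega : (2:ℕ) ≤ 3) (fun j hj => hj.1) ha.2
  obtain ⟨jc, hcondc, hcmem, hcdiv, hccard, hcjmin⟩ := dlt_spec (cond2 Bs t) ht
    (by omega : (2:ℕ) ≤ 3) (fun j hj => hj.1) hc.2
  set β := dlt (cond2 Bs t) Bs t (ngr Bs t) a with hβ
  have hβc' : dlt (cond2 Bs t) Bs t (ngr Bs t) c = β := heq.symm
  rw [hβc'] at hcmem hcdiv
  have hjj : ja = jc := by rw [← hadiv, ← hcdiv]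
  subst hjj
  obtain ⟨i4a, hi4a, hi4aj⟩ := hconda.2
  obtain ⟨i4c, hi4c, hi4cj⟩ := hcondc.2
  obtain ⟨h1a, hh1a, hh1aj, hh1alt⟩ := dlt_second (cond2 Bs t) hajmin (by omega) hacard
  obtain ⟨h1c, hh1c, hh1cj, hh1clt⟩ := dlt_second (cond2 Bs t) hcjmin (by omega) hccard
  obtain ⟨i3a, hi3a, hi3aj, hi3alt⟩ := dlt_third (cond2 Bs t) hajmin hacard
  obtain ⟨i3c, hi3c, hi3cj, hi3clt⟩ := dlt_third (cond2 Bs t) hcjmin hccard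
  rw [hβc'] at hh1clt hi3clt
  rcases indexOf_cases hne hamem hcmem with hidx | hidx
  · exact q2_core hnoalt hne hamem hcmem hadiv hi3a hi3aj (hβ ▸ hi3alt) hh1c hh1cj hh1clt
      hi4c hi4cj hidx
  · exact q2_core hnoalt (Ne.symm hne) hcmem hamem hcdiv hi3c hi3cj hi3clt hh1a hh1aj
      (hβ ▸ hh1alt) hi4a hi4aj hidx

open Classical in
lemma card_cls3 {Bs : List (List ℕ)} {t : ℕ} (ht : 0 < t)
    (hnoalt : ¬ HasAlt Bs.flatten (3+2)) :
    (Bs.flatten.toFinset.filter (fun a => ∃ j, cond3 Bs t a j)).card ≤ Bs.length := by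
  classical
  have hmap : ∀ a ∈ Bs.flatten.toFinset.filter (fun a => ∃ j, cond3 Bs t a j),
      dlt (cond3 Bs t) Bs t (ngr Bs t) a ∈ Finset.range Bs.length := by
    intro a ha
    obtain ⟨j, _, hmem, _, _, _⟩ := dlt_spec (cond3 Bs t) ht (by omega : (2:ℕ) ≤ 3)
      (fun j hj => hj.1) (Finset.mem_filter.1 ha).2
    exact Finset.mem_range.2 (mem_blocksOf.1 hmem).1
  have hcard := Finset.card_le_card_of_injOn _ hmap ?_
  · simpa using hcard
  intro a ha c hc heq
  by_contra hne
  simp only [Finset.coe_filter, Set.mem_setOf_eq] at ha hc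
  obtain ⟨ja, hconda, hamem, hadiv, hacard, hajmin⟩ := dlt_spec (cond3 Bs t) ht
    (by omega : (2:ℕ) ≤ 3) (fun j hj => hj.1) ha.2
  obtain ⟨jc, hcondc, hcmem, hcdiv, hccard, hcjmin⟩ := dlt_spec (cond3 Bs t) ht
    (by omega : (2:ℕ) ≤ 3) (fun j hj => hj.1) hc.2
  set β := dlt (cond3 Bs t) Bs t (ngr Bs t) a with hβ
  have hβc' : dlt (cond3 Bs t) Bs t (ngr Bs t) c = β := heq.symm
  rw [hβc'] at hcmem hcdiv
  have hjj : ja = jc := by rw [← hadiv, ← hcdiv]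
  subst hjj
  obtain ⟨i0a, hi0a, hi0aj⟩ := hconda.2
  obtain ⟨i0c, hi0c, hi0cj⟩ := hcondc.2
  obtain ⟨h1a, hh1a, hh1aj, hh1alt⟩ := dlt_second (cond3 Bs t) hajmin (by omega) hacard
  obtain ⟨h1c, hh1c, hh1cj, hh1clt⟩ := dlt_second (cond3 Bs t) hcjmin (by omega) hccard
  obtain ⟨i3a, hi3a, hi3aj, hi3alt⟩ := dlt_third (cond3 Bs t) hajmin hacard
  obtain ⟨i3c, hi3c, hi3cj, hi3clt⟩ := dlt_third (cond3 Bs t) hcjmin hccard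
  rw [hβc'] at hh1clt hi3clt
  rcases indexOf_cases hne hamem hcmem with hidx | hidx
  · exact q3_core hnoalt hne hamem hcmem hadiv hi0a hi0aj hi3a hi3aj (hβ ▸ hi3alt)
      hh1c hh1cj hh1clt hidx
  · exact q3_core hnoalt (Ne.symm hne) hcmem hamem hcdiv hi0c hi0cj hi3c hi3cj hi3clt
      hh1a hh1aj (hβ ▸ hh1alt) hidx

lemma classify {Bs : List (List ℕ)} {t k a : ℕ} (hnd : ∀ B ∈ Bs, B.Nodup)
    (hcnt : k ≤ Bs.flatten.count a)
    (hd2 : 2 ≤ dgrp Bs t a) (hdk : dgrp Bs t a + 3 ≤ k) :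
    (∃ j, cond1 Bs t a j) ∨ (∃ j, cond2 Bs t a j) ∨ (∃ j, cond3 Bs t a j) := by
  classical
  set J := (blocksOf Bs a).image (· / t) with hJ
  have hsum : (blocksOf Bs a).card = ∑ j ∈ J, grpcnt Bs t a j :=
    Finset.card_eq_sum_card_image (· / t) (blocksOf Bs a)
  have hkcard : k ≤ (blocksOf Bs a).card := by
    rw [← count_flatten_card hnd]; exact hcnt
  have hJcard : 2 ≤ J.card := hd2
  have hne : J.Nonempty := Finset.card_pos.1 (by omega)
  set j0 := J.min' hne with hj0
  set j1 := J.max' hne with hj1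
  have hj0m : j0 ∈ J := Finset.min'_mem _ _
  have hj1m : j1 ∈ J := Finset.max'_mem _ _
  have hj01 : j0 < j1 := Finset.min'_lt_max'_of_card _ (by omega)
  by_cases hmid : ∃ j ∈ J, j ≠ j0 ∧ j ≠ j1 ∧ 2 ≤ grpcnt Bs t a j
  · obtain ⟨j, hjJ, hjne0, hjne1, hg2⟩ := hmid
    left
    refine ⟨j, hg2, ?_, ?_⟩
    · obtain ⟨i, hi, hij⟩ := Finset.mem_image.1 hj0m
      have : j0 ≤ j := Finset.min'_le _ _ hjJ
      exact ⟨i, hi, by omega⟩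
    · obtain ⟨i, hi, hij⟩ := Finset.mem_image.1 hj1m
      have : j ≤ j1 := Finset.le_max' _ _ hjJ
      exact ⟨i, hi, by omega⟩
  · push_neg at hmid
    have hj1m' : j1 ∈ J.erase j0 := Finset.mem_erase.2 ⟨by omega, hj1m⟩
    have hsum1 : ∑ j ∈ J, grpcnt Bs t a j
        = grpcnt Bs t a j0 + (grpcnt Bs t a j1 + ∑ j ∈ (J.erase j0).erase j1, grpcnt Bs t a j) := by
      rw [Finset.add_sum_erase _ _ hj1m', Finset.add_sum_erase _ _ hj0m]
    have hrest : ∑ j ∈ (J.erase j0).erase j1, grpcnt Bs t a j ≤ J.card - 2 := by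
      have h1 : ∑ j ∈ (J.erase j0).erase j1, grpcnt Bs t a j
          ≤ ((J.erase j0).erase j1).card • 1 := by
        refine Finset.sum_le_card_nsmul _ _ 1 (fun j hj => ?_)
        have hj' := Finset.mem_erase.1 hj
        have hj'' := Finset.mem_erase.1 hj'.2
        have := hmid j hj''.2 hj''.1 hj'.1
        omega
      have h2 : ((J.erase j0).erase j1).card = J.card - 2 := by
        rw [Finset.card_erase_of_mem hj1m', Finset.card_erase_of_mem hj0m]
        omega
      rw [h2] at h1
      simpa using h1
    have hkey : 5 ≤ grpcnt Bs t a j0 + grpcnt Bs t a j1 := by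
      have hd : dgrp Bs t a = J.card := rfl
      omega
    rcases (by omega : 3 ≤ grpcnt Bs t a j0 ∨ 3 ≤ grpcnt Bs t a j1) with h3 | h3
    · right; left
      refine ⟨j0, h3, ?_⟩
      obtain ⟨i, hi, hij⟩ := Finset.mem_image.1 hj1m
      exact ⟨i, hi, by omega⟩
    · right; right
      refine ⟨j1, h3, ?_⟩
      obtain ⟨i, hi, hij⟩ := Finset.mem_image.1 hj0m
      exact ⟨i, hi, by omega⟩

open Classical in
lemma main_bound {Bs : List (List ℕ)} {t k m : ℕ} (ht : 0 < t) (hk : 3 ≤ k)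
    (hm : Bs.length ≤ m) (hnd : ∀ B ∈ Bs, B.Nodup)
    (hcount : ∀ a ∈ Bs.flatten, k ≤ Bs.flatten.count a)
    (hnoalt : ¬ HasAlt Bs.flatten (3+2)) :
    (Bs.flatten.toFinset.card : ℕ∞) ≤ (((m + t - 1) / t : ℕ) : ℕ∞) * NADS 3 k t
      + NADS 3 (k - 2) ((m + t - 1) / t) + ((3 * m : ℕ) : ℕ∞) := by
  classical
  set b := (m + t - 1) / t with hb
  have hngr : ngr Bs t ≤ b := Nat.div_le_div_right (by omega)
  -- the cover
  have hcover : Bs.flatten.toFinset ⊆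
      (((Finset.range (ngr Bs t)).biUnion
          (fun j => Bs.flatten.toFinset.filter (fun a => isloc Bs t j a)))
        ∪ Bs.flatten.toFinset.filter (fun a => k - 2 ≤ dgrp Bs t a))
        ∪ ((Bs.flatten.toFinset.filter (fun a => ∃ j, cond1 Bs t a j))
          ∪ ((Bs.flatten.toFinset.filter (fun a => ∃ j, cond2 Bs t a j))
            ∪ (Bs.flatten.toFinset.filter (fun a => ∃ j, cond3 Bs t a j)))) := by
    intro a ha
    have haS : a ∈ Bs.flatten := List.mem_toFinset.1 ha
    by_cases hw : k - 2 ≤ dgrp Bs t a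
    · exact Finset.mem_union_left _ (Finset.mem_union_right _ (Finset.mem_filter.2 ⟨ha, hw⟩))
    · have hd1 : 1 ≤ dgrp Bs t a := by
        obtain ⟨i, hi⟩ := mem_flatten_blocksOf.1 haS
        have : i / t ∈ (blocksOf Bs a).image (· / t) := Finset.mem_image_of_mem _ hi
        exact Finset.card_pos.2 ⟨_, this⟩
      by_cases hd2 : 2 ≤ dgrp Bs t a
      · have hdk : dgrp Bs t a + 3 ≤ k := by omega
        rcases classify hnd (hcount a haS) hd2 hdk with h | h | h
        · exact Finset.mem_union_right _ (Finset.mem_union_left _ (Finset.mem_filter.2 ⟨ha, h⟩))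
        · exact Finset.mem_union_right _ (Finset.mem_union_right _
            (Finset.mem_union_left _ (Finset.mem_filter.2 ⟨ha, h⟩)))
        · exact Finset.mem_union_right _ (Finset.mem_union_right _
            (Finset.mem_union_right _ (Finset.mem_filter.2 ⟨ha, h⟩)))
      · -- local symbol
        have hcard1 : ((blocksOf Bs a).image (· / t)).card = 1 := by
          have : dgrp Bs t a = ((blocksOf Bs a).image (· / t)).card := rfl
          omega
        obtain ⟨j, hj⟩ := Finset.card_eq_one.1 hcard1
        have hloc : isloc Bs t j a := by
          intro i hi
          have : i / t ∈ (blocksOf Bs a).image (· / t) := Finset.mem_image_of_mem _ hi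
          rw [hj, Finset.mem_singleton] at this
          exact this
        have hjlt : j < ngr Bs t := by
          obtain ⟨i, hi⟩ := mem_flatten_blocksOf.1 haS
          rw [← hloc i hi]
          exact div_lt_ngr ht (mem_blocksOf.1 hi).1
        refine Finset.mem_union_left _ (Finset.mem_union_left _ ?_)
        exact Finset.mem_biUnion.2 ⟨j, Finset.mem_range.2 hjlt, Finset.mem_filter.2 ⟨ha, hloc⟩⟩
  -- ℕ-level card bound
  have hcard := Finset.card_le_card hcover
  have hcard2 : Bs.flatten.toFinset.card ≤
      (∑ j ∈ Finset.range (ngr Bs t),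
        (Bs.flatten.toFinset.filter (fun a => isloc Bs t j a)).card)
      + (Bs.flatten.toFinset.filter (fun a => k - 2 ≤ dgrp Bs t a)).card
      + ((Bs.flatten.toFinset.filter (fun a => ∃ j, cond1 Bs t a j)).card
        + (Bs.flatten.toFinset.filter (fun a => ∃ j, cond2 Bs t a j)).card
        + (Bs.flatten.toFinset.filter (fun a => ∃ j, cond3 Bs t a j)).card) := by
    calc Bs.flatten.toFinset.card ≤ _ := hcard
    _ ≤ _ := by
      refine le_trans (Finset.card_union_le _ _) ?_
      have h1 := Finset.card_union_le
        ((Finset.range (ngr Bs t)).biUnion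
          (fun j => Bs.flatten.toFinset.filter (fun a => isloc Bs t j a)))
        (Bs.flatten.toFinset.filter (fun a => k - 2 ≤ dgrp Bs t a))
      have h2 := Finset.card_union_le
        (Bs.flatten.toFinset.filter (fun a => ∃ j, cond1 Bs t a j))
        ((Bs.flatten.toFinset.filter (fun a => ∃ j, cond2 Bs t a j))
          ∪ (Bs.flatten.toFinset.filter (fun a => ∃ j, cond3 Bs t a j)))
      have h3 := Finset.card_union_le
        (Bs.flatten.toFinset.filter (fun a => ∃ j, cond2 Bs t a j))
        (Bs.flatten.toFinset.filter (fun a => ∃ j, cond3 Bs t a j))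
      have h4 := Finset.card_biUnion_le (s := Finset.range (ngr Bs t))
        (t := fun j => Bs.flatten.toFinset.filter (fun a => isloc Bs t j a))
      omega
  -- pieces in ℕ∞
  have hLb : ∀ j ∈ Finset.range (ngr Bs t),
      (((Bs.flatten.toFinset.filter (fun a => isloc Bs t j a)).card : ℕ∞)) ≤ NADS 3 k t := by
    intro j _
    have h1 : (Bs.flatten.toFinset.filter (fun a => isloc Bs t j a)).card
        ≤ (locseq Bs t j).toFinset.card := Finset.card_le_card (locset_subset ht j)
    refine le_trans (Nat.cast_le.2 h1) ?_
    exact le_sSup ⟨locseq Bs t j, locseq_isADS ht hnd hcount hnoalt j, rfl⟩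
  have hWb : ((Bs.flatten.toFinset.filter (fun a => k - 2 ≤ dgrp Bs t a)).card : ℕ∞)
      ≤ NADS 3 (k-2) b := by
    have h1 : (Bs.flatten.toFinset.filter (fun a => k - 2 ≤ dgrp Bs t a)).card
        ≤ (wseq Bs t (k-2)).toFinset.card := Finset.card_le_card (wideset_subset ht (k-2))
    refine le_trans (Nat.cast_le.2 h1) ?_
    exact le_sSup ⟨wseq Bs t (k-2), wseq_isADS ht hnd hngr hnoalt, rfl⟩
  have hPb : ((Bs.flatten.toFinset.filter (fun a => ∃ j, cond1 Bs t a j)).card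
        + (Bs.flatten.toFinset.filter (fun a => ∃ j, cond2 Bs t a j)).card
        + (Bs.flatten.toFinset.filter (fun a => ∃ j, cond3 Bs t a j)).card) ≤ 3 * m := by
    have h1 := card_cls1 ht hnoalt
    have h2 := card_cls2 ht hnoalt
    have h3 := card_cls3 ht hnoalt
    omega
  -- assemble
  refine le_trans (Nat.cast_le.2 hcard2) ?_
  push_cast
  refine add_le_add (add_le_add ?_ hWb) ?_
  · calc ∑ j ∈ Finset.range (ngr Bs t),
        (((Bs.flatten.toFinset.filter (fun a => isloc Bs t j a)).card : ℕ∞))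
        ≤ ∑ _j ∈ Finset.range (ngr Bs t), NADS 3 k t := Finset.sum_le_sum hLb
    _ = (ngr Bs t) • NADS 3 k t := by rw [Finset.sum_const, Finset.card_range]
    _ = ((ngr Bs t : ℕ) : ℕ∞) * NADS 3 k t := by rw [nsmul_eq_mul]
    _ ≤ ((b : ℕ) : ℕ∞) * NADS 3 k t := mul_le_mul_left (Nat.cast_le.2 hngr) _
  · exact_mod_cast Nat.cast_le.2 hPb

end NADSrec

/-- For `k ≥ 3`, `m ≥ 1`, `t ≥ 1` with `t² ≤ m`, and `b = ⌈m/t⌉`: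
`N^3_k(m) ≤ b·N^3_k(t) + N^3_{k−2}(b) + 3m` in the extended naturals. -/
theorem NADS3_recurrence :
    ∀ k m t : ℕ, 3 ≤ k → 1 ≤ m → 1 ≤ t → t ^ 2 ≤ m →
      NADS 3 k m ≤ (((m + t - 1) / t : ℕ) : ℕ∞) * NADS 3 k t
        + NADS 3 (k - 2) ((m + t - 1) / t) + ((3 * m : ℕ) : ℕ∞) := by
  intro k m t hk hm ht htm
  refine sSup_le ?_
  rintro c ⟨S, ⟨⟨Bs, hlen, hSeq, hnd⟩, hcnt, hnoalt⟩, rfl⟩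
  subst hSeq
  exact NADSrec.main_bound ht hk hlen hnd hcnt hnoalt
end

section
/- There exists an absolute constant c such that for every integer k ≥ 2 and every integer m ≥ 1, N^3_{2k+1}(m) ≤ c·m·α_k(m). -/
/-! ### Ackermann arithmetic -/

lemma Ak_zero' (j : ℕ) : Ak (j + 2) 0 = 1 := rfl

lemma Ak_succ' (j n : ℕ) : Ak (j + 2) (n + 1) = Ak (j + 1) (Ak (j + 2) n) := by
  show (Ak (j+1))^[n+1] 1 = _
  rw [Function.iterate_succ_apply']
  rfl

lemma Ak_one (j : ℕ) (hj : 1 ≤ j) : Ak j 1 = 2 := by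
  induction j with
  | zero => omega
  | succ j ih =>
    rcases j with _ | j
    · rfl
    · rw [show j + 1 + 1 = j + 2 from rfl, Ak_succ', Ak_zero']
      exact ih (by omega)

lemma Ak_ge (j : ℕ) (hj : 1 ≤ j) : ∀ n, 1 ≤ n → n + 1 ≤ Ak j n := by
  induction j with
  | zero => omega
  | succ j ih =>
    rcases j with _ | j
    · intro n hn; show n + 1 ≤ 2 * n; omega
    · intro n hn
      induction n with
      | zero => omega
      | succ n ihn =>
        rcases Nat.eq_or_lt_of_le hn with h | h
        · rw [← h, Ak_one _ (by omega)]
        · have hn1 : 1 ≤ n := by omega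
          have h1 : n + 1 ≤ Ak (j + 2) n := ihn hn1
          have h2 : 1 ≤ Ak (j + 2) n := by omega
          have h3 := ih (by omega) (Ak (j + 2) n) h2
          rw [show j + 1 + 1 = j + 2 from rfl] at *
          rw [Ak_succ']
          omega

lemma Ak_pos (j : ℕ) (hj : 2 ≤ j) (n : ℕ) : 1 ≤ Ak j n := by
  obtain ⟨j', rfl⟩ : ∃ j', j = j' + 2 := ⟨j - 2, by omega⟩
  rcases n with _ | n
  · rw [Ak_zero']
  · have := Ak_ge (j' + 2) (by omega) (n+1) (by omega); omega

lemma Ak_mono (j : ℕ) (hj : 2 ≤ j) : Monotone (Ak j) := by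
  obtain ⟨j', rfl⟩ : ∃ j', j = j' + 2 := ⟨j - 2, by omega⟩
  apply monotone_nat_of_le_succ
  intro n
  rw [Ak_succ']
  rcases Nat.eq_or_lt_of_le (Ak_pos (j'+2) (by omega) n) with h | h
  · rw [← h, Ak_one _ (by omega)]; omega
  · have := Ak_ge (j' + 1) (by omega) (Ak (j'+2) n) (by omega); omega

lemma Ak_strictMono (j : ℕ) (hj : 2 ≤ j) : StrictMono (Ak j) := by
  obtain ⟨j', rfl⟩ : ∃ j', j = j' + 2 := ⟨j - 2, by omega⟩
  apply strictMono_nat_of_lt_succ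
  intro n
  rw [Ak_succ']
  have h2 : 1 ≤ Ak (j'+2) n := Ak_pos _ (by omega) _
  have := Ak_ge (j' + 1) (by omega) (Ak (j'+2) n) h2
  omega

lemma Ak_double (j : ℕ) (hj : 1 ≤ j) : ∀ x, 1 ≤ x → 2 * x ≤ Ak j x := by
  induction j with
  | zero => omega
  | succ j ih =>
    rcases j with _ | j
    · intro x hx; show 2 * x ≤ 2 * x; omega
    · intro x hx
      rcases Nat.eq_or_lt_of_le hx with h | h
      · rw [← h, Ak_one _ (by omega)]
      · obtain ⟨y, rfl⟩ : ∃ y, x = y + 1 := ⟨x - 1, by omega⟩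
        rw [show j + 1 + 1 = j + 2 from rfl, Ak_succ']
        have h1 : y + 1 ≤ Ak (j + 2) y := Ak_ge _ (by omega) y (by omega)
        have h2 := ih (by omega) (Ak (j+2) y) (by omega)
        omega

lemma Ak_step_double (j : ℕ) (hj : 2 ≤ j) (n : ℕ) : 2 * Ak j n ≤ Ak j (n + 1) := by
  obtain ⟨j', rfl⟩ : ∃ j', j = j' + 2 := ⟨j - 2, by omega⟩
  rw [Ak_succ']
  exact Ak_double (j' + 1) (by omega) _ (Ak_pos _ (by omega) _)

lemma Ak_shift (j : ℕ) (hj : 2 ≤ j) (n d : ℕ) : 2 ^ d * Ak j n ≤ Ak j (n + d) := by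
  induction d with
  | zero => simp
  | succ d ih =>
    have h1 := Ak_step_double j hj (n + d)
    calc 2 ^ (d+1) * Ak j n = 2 * (2 ^ d * Ak j n) := by ring
    _ ≤ 2 * Ak j (n + d) := by omega
    _ ≤ Ak j (n + d + 1) := h1

lemma Ak_two_eq (n : ℕ) : Ak 2 n = 2 ^ n := by
  induction n with
  | zero => rfl
  | succ n ih =>
    rw [show (2:ℕ) = 0 + 2 from rfl, Ak_succ']
    show 2 * Ak (0+2) n = 2 ^ (n + 1)
    rw [ih]; ring

lemma Ak_two' (j : ℕ) (hj : 1 ≤ j) : Ak j 2 = 4 := by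
  induction j with
  | zero => omega
  | succ j ih =>
    rcases j with _ | j
    · rfl
    · rw [show j + 1 + 1 = j + 2 from rfl, Ak_succ', Ak_one _ (by omega)]
      exact ih (by omega)

lemma Ak_le_Ak_succ (j : ℕ) (hj : 2 ≤ j) (n : ℕ) : Ak j n ≤ Ak (j + 1) n := by
  obtain ⟨j', rfl⟩ : ∃ j', j = j' + 2 := ⟨j - 2, by omega⟩
  rcases n with _ | n
  · rw [Ak_zero', show j' + 2 + 1 = (j'+1) + 2 from rfl, Ak_zero']
  · have hR : Ak ((j'+1)+2) (n+1) = Ak (j'+2) (Ak ((j'+1)+2) n) := Ak_succ' (j'+1) n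
    have h1 : n + 1 ≤ Ak ((j'+1) + 2) n := by
      rcases n with _ | n
      · rw [Ak_zero']
      · exact Ak_ge _ (by omega) _ (by omega)
    have h2 : Ak (j'+2) (n+1) ≤ Ak (j'+2) (Ak ((j'+1)+2) n) := Ak_mono _ (by omega) h1
    rw [show j' + 2 + 1 = (j'+1) + 2 from rfl, hR]
    exact h2

lemma Ak_le_Ak (j j' : ℕ) (hj : 2 ≤ j) (hjj : j ≤ j') (n : ℕ) : Ak j n ≤ Ak j' n := by
  induction j' with
  | zero => omega
  | succ j' ih =>
    rcases Nat.eq_or_lt_of_le hjj with h | h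
    · rw [h]
    · exact le_trans (ih (by omega)) (Ak_le_Ak_succ j' (by omega) n)

lemma two_pow_le_Ak (j : ℕ) (hj : 2 ≤ j) (n : ℕ) : 2 ^ n ≤ Ak j n := by
  rw [← Ak_two_eq]; exact Ak_le_Ak 2 j (by omega) hj n

/-! ### invAk lemmas -/

lemma invAk_nonempty (j : ℕ) (hj : 2 ≤ j) (m : ℕ) : {n | m ≤ Ak j n}.Nonempty := by
  refine ⟨m, ?_⟩
  have := two_pow_le_Ak j hj m
  have := Nat.lt_two_pow_self (n := m)
  simp only [Set.mem_setOf_eq]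
  omega

lemma invAk_spec (j : ℕ) (hj : 2 ≤ j) (m : ℕ) : m ≤ Ak j (invAk j m) :=
  Nat.sInf_mem (invAk_nonempty j hj m)

lemma invAk_le_iff (j : ℕ) (hj : 2 ≤ j) {m n : ℕ} : invAk j m ≤ n ↔ m ≤ Ak j n := by
  constructor
  · intro h
    exact le_trans (invAk_spec j hj m) (Ak_mono j hj h)
  · intro h
    exact Nat.sInf_le h

lemma invAk_mono (j : ℕ) (hj : 2 ≤ j) {m m' : ℕ} (h : m ≤ m') : invAk j m ≤ invAk j m' := by
  rw [invAk_le_iff j hj]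
  exact le_trans h (invAk_spec j hj m')

lemma invAk_Ak_le (j : ℕ) (hj : 2 ≤ j) (n : ℕ) : invAk j (Ak j n) ≤ n := by
  rw [invAk_le_iff j hj]

lemma Ak_lt_of_invAk (j : ℕ) (hj : 2 ≤ j) {m w : ℕ} (h : w = invAk j m) (hw : 1 ≤ w) :
    Ak j (w - 1) < m := by
  by_contra hc
  push_neg at hc
  have : invAk j m ≤ w - 1 := Nat.sInf_le hc
  omega

lemma invAk_le_invAk_two (j : ℕ) (hj : 2 ≤ j) (m : ℕ) : invAk j m ≤ invAk 2 m := by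
  rw [invAk_le_iff j hj]
  exact le_trans (invAk_spec 2 (by omega) m) (Ak_le_Ak 2 j (by omega) hj _)

lemma pow_lin : ∀ d, 5 ≤ d → 4 * d + 4 ≤ 2 ^ d := by
  intro d hd
  induction d with
  | zero => omega
  | succ d ih =>
    rcases Nat.lt_or_ge d 5 with h | h
    · interval_cases d <;> simp_all <;> omega
    · have := ih (by omega)
      have : 2 ^ d ≤ 2 ^ (d+1) := Nat.pow_le_pow_right (by omega) (by omega)
      omega

lemma le_two_pow_quarter {m : ℕ} (hm : 20 ≤ m) : m ≤ 2 ^ (m / 4) := by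
  have h1 : 5 ≤ m / 4 := by omega
  have h2 := pow_lin (m / 4) h1
  omega

lemma invAk_two_le_iff {m n : ℕ} : invAk 2 m ≤ n ↔ m ≤ 2 ^ n := by
  rw [invAk_le_iff 2 (by omega), Ak_two_eq]

lemma invAk_ge_iff3 (j : ℕ) (hj : 2 ≤ j) {m : ℕ} : 3 ≤ invAk j m ↔ 5 ≤ m := by
  have h4 : Ak j 2 = 4 := Ak_two' j (by omega)
  constructor
  · intro h
    by_contra hc
    push_neg at hc
    have : invAk j m ≤ 2 := by rw [invAk_le_iff j hj, h4]; omega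
    omega
  · intro h
    by_contra hc
    push_neg at hc
    have : m ≤ Ak j 2 := le_trans (invAk_spec j hj m) (Ak_mono j hj (by omega))
    omega

lemma invAk_pos_iff (j : ℕ) (hj : 2 ≤ j) {m : ℕ} : 1 ≤ invAk j m ↔ 2 ≤ m := by
  obtain ⟨j', rfl⟩ : ∃ j', j = j' + 2 := ⟨j - 2, by omega⟩
  have h1 : Ak (j'+2) 0 = 1 := Ak_zero' j'
  constructor
  · intro h
    by_contra hc
    push_neg at hc
    have : invAk (j'+2) m ≤ 0 := by rw [invAk_le_iff _ hj, h1]; omega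
    omega
  · intro h
    by_contra hc
    push_neg at hc
    have : m ≤ Ak (j'+2) 0 := le_trans (invAk_spec _ hj m) (Ak_mono _ hj (by omega))
    omega

lemma invAk_le_self (j : ℕ) (hj : 2 ≤ j) (m : ℕ) : invAk j m ≤ m := by
  rw [invAk_le_iff j hj]
  have := two_pow_le_Ak j hj m
  have := Nat.lt_two_pow_self (n := m)
  omega

/-- The key identity `α_k(x) = α_k(α_{k-1}(x)) + 1` for `x ≥ 3`. -/
lemma invAk_identity (k : ℕ) (hk : 3 ≤ k) {x : ℕ} (hx : 3 ≤ x) :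
    invAk k x = invAk k (invAk (k - 1) x) + 1 := by
  obtain ⟨j, rfl⟩ : ∃ j, k = j + 3 := ⟨k - 3, by omega⟩
  have hk1 : (2:ℕ) ≤ j + 3 := by omega
  have hk2 : (2:ℕ) ≤ j + 2 := by omega
  have hsucc : ∀ n, Ak (j + 3) (n + 1) = Ak (j + 2) (Ak (j + 3) n) := fun n => Ak_succ' (j+1) n
  have hj31 : j + 3 - 1 = j + 2 := by omega
  rw [hj31]
  set n := invAk (j+3) x with hn
  have hn2 : 2 ≤ n := by
    have := (invAk_ge_iff3 (j+3) hk1 (m := x))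
    rcases Nat.lt_or_ge x 5 with h | h
    · -- x ∈ {3, 4}: invAk = 2
      have h1 : invAk (j+3) x ≤ 2 := by
        rw [invAk_le_iff _ hk1, Ak_two' _ (by omega)]; omega
      have h2 : ¬ (invAk (j+3) x ≤ 1) := by
        intro hc
        have : x ≤ Ak (j+3) 1 := (invAk_le_iff _ hk1).mp hc
        rw [Ak_one _ (by omega)] at this; omega
      omega
    · have := this.mpr h; omega
  have key : ∀ nn : ℕ, 1 ≤ nn → (invAk (j+3) x ≤ nn ↔ invAk (j+3) (invAk (j+2) x) ≤ nn - 1) := by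
    intro nn hnn
    obtain ⟨nn', rfl⟩ : ∃ nn', nn = nn' + 1 := ⟨nn - 1, by omega⟩
    rw [invAk_le_iff _ hk1, invAk_le_iff _ hk1, hsucc]
    simp only [Nat.add_sub_cancel]
    exact (invAk_le_iff _ hk2).symm
  have h1 : invAk (j+3) x ≤ n := le_refl _
  have h2 := (key n (by omega)).mp h1
  have h3 : ¬ (invAk (j+3) x ≤ n - 1) := by
    intro hc
    omega
  have h4 : ¬ (invAk (j+3) (invAk (j+2) x) ≤ n - 2) := by
    intro hc
    have := (key (n-1) (by omega)).mpr (by omega)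
    omega
  omega

/-- Fudge lemma: `α_j(x + 9) ≤ α_j(x) + 1` for `x ≥ 9`. -/
lemma invAk_fudge_big (j : ℕ) (hj : 2 ≤ j) {x : ℕ} (hx : 9 ≤ x) :
    invAk j (x + 9) ≤ invAk j x + 1 := by
  rw [invAk_le_iff j hj]
  have h1 : x ≤ Ak j (invAk j x) := invAk_spec j hj x
  have h2 : 2 * Ak j (invAk j x) ≤ Ak j (invAk j x + 1) := Ak_step_double j hj _
  omega

/-- Fudge lemma at level `k ≥ 3`: `α_k(x + 9) ≤ α_k(x) + 1` for `x ≥ 3`. -/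
lemma invAk_fudge_k (k : ℕ) (hk : 3 ≤ k) {x : ℕ} (hx : 3 ≤ x) :
    invAk k (x + 9) ≤ invAk k x + 1 := by
  rcases Nat.lt_or_ge x 9 with h | h
  · -- x ∈ [3,8] : invAk k x ≥ 2, and x + 9 ≤ 17 ≤ Ak k 3
    have hk2 : (2:ℕ) ≤ k := by omega
    have h2 : 2 ≤ invAk k x := by
      by_contra hc
      push_neg at hc
      have : invAk k x ≤ 1 := by omega
      have := (invAk_le_iff k hk2).mp this
      rw [Ak_one _ (by omega)] at this
      omega
    rcases Nat.lt_or_ge x 5 with h5 | h5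
    · -- x ∈ {3,4} : x + 9 ≤ 13 ≤ Ak k 3
      have h17 : x + 9 ≤ Ak k 3 := by
        have : Ak 3 3 ≤ Ak k 3 := Ak_le_Ak 3 k (by omega) (by omega) 3
        have h33 : Ak 3 3 = 16 := by decide
        omega
      have : invAk k (x + 9) ≤ 3 := by rw [invAk_le_iff k hk2]; exact h17
      omega
    · -- x ∈ [5,8] : invAk k x ≥ 3, x + 9 ≤ 17 ≤ Ak k 4
      have h3 : 3 ≤ invAk k x := (invAk_ge_iff3 k hk2).mpr h5
      have h17 : x + 9 ≤ Ak k 4 := by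
        have hle : Ak 3 4 ≤ Ak k 4 := Ak_le_Ak 3 k (by omega) (by omega) 4
        have h33 : Ak 3 3 = 16 := by decide
        have h34 : Ak 3 4 = 2 ^ 16 := by
          have := Ak_succ' 1 3
          rw [show (1:ℕ)+2 = 3 from rfl] at this
          rw [this, h33, Ak_two_eq]
        have : (17:ℕ) ≤ 2^16 := by norm_num
        omega
      have : invAk k (x + 9) ≤ 4 := by rw [invAk_le_iff k hk2]; exact h17
      omega
  · exact invAk_fudge_big k (by omega) h

lemma invAk_two_half {w : ℕ} (hw : 1025 ≤ w) : invAk 2 w + 8 ≤ w / 2 := by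
  have h1 : w ≤ 2 ^ (w / 4) := le_two_pow_quarter (by omega)
  have h2 : invAk 2 w ≤ w / 4 := invAk_two_le_iff.mpr h1
  omega

/-! ### The cascade depth function `Dk` -/

noncomputable def Dk (k : ℕ) : ℕ → ℕ := fun w =>
  if w ≤ 1024 then (if w ≤ 4 then 0 else 1)
  else Dk k (min (invAk (k - 1) w + 8) (w / 2)) + 1
termination_by w => w
decreasing_by
  simp only [not_le] at *
  omega

lemma Dk_small (k : ℕ) {w : ℕ} (h : w ≤ 4) : Dk k w = 0 := by
  rw [Dk]
  simp [h, show w ≤ 1024 by omega]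

lemma Dk_med (k : ℕ) {w : ℕ} (h5 : 5 ≤ w) (h : w ≤ 1024) : Dk k w = 1 := by
  rw [Dk]
  simp [h, show ¬ (w ≤ 4) by omega]

lemma Dk_le_one (k : ℕ) {w : ℕ} (h : w ≤ 1024) : Dk k w ≤ 1 := by
  rcases Nat.lt_or_ge w 5 with h4 | h4
  · rw [Dk_small k (by omega)]; omega
  · rw [Dk_med k h4 h]

lemma sigma_lt (k : ℕ) (hk : 3 ≤ k) {w : ℕ} (hw : 1025 ≤ w) :
    invAk (k - 1) w + 8 ≤ w / 2 := by
  have h1 : invAk (k-1) w ≤ invAk 2 w := invAk_le_invAk_two (k-1) (by omega) w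
  have h2 := invAk_two_half hw
  omega

lemma Dk_big (k : ℕ) (hk : 3 ≤ k) {w : ℕ} (hw : 1025 ≤ w) :
    Dk k w = Dk k (invAk (k - 1) w + 8) + 1 := by
  rw [Dk]
  have h := sigma_lt k hk hw
  rw [if_neg (by omega), min_eq_left (by omega)]

lemma Dk_pos (k : ℕ) (hk : 3 ≤ k) {w : ℕ} (hw : 5 ≤ w) : 1 ≤ Dk k w := by
  rcases Nat.lt_or_ge w 1025 with h | h
  · rw [Dk_med k hw (by omega)]
  · rw [Dk_big k hk h]; omega

lemma Dk_mono (k : ℕ) (hk : 3 ≤ k) : ∀ v u, u ≤ v → Dk k u ≤ Dk k v := by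
  intro v
  induction v using Nat.strong_induction_on with
  | _ v ih =>
    intro u huv
    rcases Nat.lt_or_ge v 1025 with hv | hv
    · rcases Nat.lt_or_ge v 5 with hv4 | hv4
      · rw [Dk_small k (by omega), Dk_small k (by omega)]
      · rw [Dk_med k hv4 (by omega)]
        exact Dk_le_one k (by omega)
    · rw [Dk_big k hk hv]
      rcases Nat.lt_or_ge u 1025 with hu | hu
      · have := Dk_le_one k (show u ≤ 1024 by omega)
        omega
      · rw [Dk_big k hk hu]
        have hm : invAk (k-1) u + 8 ≤ invAk (k-1) v + 8 := by
          have := invAk_mono (k-1) (by omega) huv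
          omega
        have hlt : invAk (k-1) v + 8 < v := by
          have := sigma_lt k hk hv
          omega
        have := ih (invAk (k-1) v + 8) hlt (invAk (k-1) u + 8) hm
        omega

lemma Dk_le_self (k : ℕ) (hk : 3 ≤ k) : ∀ w, Dk k w ≤ w := by
  intro w
  induction w using Nat.strong_induction_on with
  | _ w ih =>
    rcases Nat.lt_or_ge w 1025 with hv | hv
    · rcases Nat.lt_or_ge w 5 with hv4 | hv4
      · rw [Dk_small k (by omega)]; omega
      · rw [Dk_med k hv4 (by omega)]; omega
    · rw [Dk_big k hk hv]
      have hlt : invAk (k-1) w + 8 < w := by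
        have := sigma_lt k hk hv
        omega
      have := ih (invAk (k-1) w + 8) hlt
      omega

lemma Dk_bound (k : ℕ) (hk : 3 ≤ k) : ∀ w, Dk k w ≤ 2 * invAk k w + 2 := by
  intro w
  induction w using Nat.strong_induction_on with
  | _ w ih =>
    rcases Nat.lt_or_ge w 1025 with hv | hv
    · have := Dk_le_one k (show w ≤ 1024 by omega)
      omega
    · have hk2 : (2:ℕ) ≤ k := by omega
      have hk12 : (2:ℕ) ≤ k - 1 := by omega
      set y := invAk (k-1) w with hy
      have hw1lt : y + 8 < w := by have := sigma_lt k hk hv; omega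
      rw [Dk_big k hk hv, ← hy]
      rcases Nat.lt_or_ge (y + 8) 1025 with h1 | h1
      · have := Dk_le_one k (show y + 8 ≤ 1024 by omega)
        omega
      · -- y ≥ 1017
        have hy1017 : 1017 ≤ y := by omega
        rw [Dk_big k hk h1]
        set z := invAk (k-1) y with hz
        have hstep1 : invAk (k-1) (y + 8) ≤ z + 1 := by
          have hm : invAk (k-1) (y+8) ≤ invAk (k-1) (y+9) := invAk_mono (k-1) hk12 (by omega)
          have hf : invAk (k-1) (y + 9) ≤ z + 1 := invAk_fudge_big (k-1) hk12 (by omega)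
          omega
        have hz3 : 3 ≤ z := (invAk_ge_iff3 (k-1) hk12).mpr (by omega)
        have hstep3 : invAk k (invAk (k-1) (y+8) + 8) ≤ invAk k z + 1 := by
          have hm : invAk k (invAk (k-1) (y+8) + 8) ≤ invAk k (z + 9) :=
            invAk_mono k hk2 (by omega)
          have hf : invAk k (z + 9) ≤ invAk k z + 1 := invAk_fudge_k k hk hz3
          omega
        have hid1 : invAk k y = invAk k z + 1 := invAk_identity k hk (by omega)
        have hid2 : invAk k w = invAk k y + 1 := invAk_identity k hk (by omega)
        have hwlt2 : invAk (k-1) (y+8) + 8 < y + 8 := by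
          have := sigma_lt k hk h1
          omega
        have := ih (invAk (k-1) (y+8) + 8) (by omega)
        omega


/-! ### Abstract instances -/

/-- Five alternating positions, three in `A` and two in `B`. -/
def Alt5 (A B : Finset ℕ) : Prop :=
  ∃ x1 ∈ A, ∃ y1 ∈ B, ∃ x2 ∈ A, ∃ y2 ∈ B, ∃ x3 ∈ A,
    x1 < y1 ∧ y1 < x2 ∧ x2 < y2 ∧ y2 < x3

/-- An abstract block-structured alternation-free family:  `F` is a family of
pairwise disjoint position sets, each of size at least `μ`, `β` assigns
monotonically a block (out of `m`) to each position, each set meets each block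
at most once, and no two sets have a 5-term alternation. -/
structure Good (μ m : ℕ) (F : Finset (Finset ℕ)) (β : ℕ → ℕ) : Prop where
  sizes : ∀ A ∈ F, μ ≤ A.card
  bdd : ∀ A ∈ F, ∀ x ∈ A, β x < m
  mono : Monotone β
  opb : ∀ A ∈ F, ∀ x ∈ A, ∀ y ∈ A, β x = β y → x = y
  disj : ∀ A ∈ F, ∀ B ∈ F, A ≠ B → ∀ x ∈ A, x ∉ B
  alt : ∀ A ∈ F, ∀ B ∈ F, A ≠ B → ¬ Alt5 A B

lemma Alt5_mono {A B A' B' : Finset ℕ} (hA : A' ⊆ A) (hB : B' ⊆ B) (h : Alt5 A' B') :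
    Alt5 A B := by
  obtain ⟨x1, h1, y1, h2, x2, h3, y2, h4, x3, h5, hord⟩ := h
  exact ⟨x1, hA h1, y1, hB h2, x2, hA h3, y2, hB h4, x3, hA h5, hord⟩

lemma Good.mu_mono {μ μ' m : ℕ} {F : Finset (Finset ℕ)} {β : ℕ → ℕ}
    (h : Good μ m F β) (hμ : μ' ≤ μ) : Good μ' m F β :=
  ⟨fun A hA => le_trans hμ (h.sizes A hA), h.bdd, h.mono, h.opb, h.disj, h.alt⟩

/-- If there are fewer blocks than the required multiplicity, the family is empty. -/
lemma Good.card_zero {μ m : ℕ} {F : Finset (Finset ℕ)} {β : ℕ → ℕ}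
    (h : Good μ m F β) (hm : m < μ) : F.card = 0 := by
  rw [Finset.card_eq_zero]
  by_contra hne
  obtain ⟨A, hA⟩ := Finset.nonempty_iff_ne_empty.mpr hne
  have h1 : A.card = (A.image β).card := by
    rw [Finset.card_image_of_injOn]
    intro x hx y hy hxy
    exact h.opb A hA x hx y hy hxy
  have h2 : A.image β ⊆ Finset.range m := by
    intro b hb
    obtain ⟨x, hx, rfl⟩ := Finset.mem_image.mp hb
    exact Finset.mem_range.mpr (h.bdd A hA x hx)
  have h3 : (A.image β).card ≤ m := by
    have := Finset.card_le_card h2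
    simpa using this
  have := h.sizes A hA
  omega

lemma lt_of_div_lt {β : ℕ → ℕ} (hm : Monotone β) {t u x : ℕ} (h : β u / t < β x / t) :
    u < x := by
  by_contra hc
  push_neg at hc
  have := hm hc
  have := Nat.div_le_div_right (c := t) this
  omega

/-! ### Pair lemmas for the three per-interval classes -/

lemma pair_b {μ m t : ℕ} {F : Finset (Finset ℕ)} {β : ℕ → ℕ} (hG : Good μ m F β)
    {A B : Finset ℕ} (hA : A ∈ F) (hB : B ∈ F) (hAB : A ≠ B) {j : ℕ}
    {a1 a2 b1 b2 uA vA uB vB : ℕ}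
    (ha1 : a1 ∈ A) (ha2 : a2 ∈ A) (hb1 : b1 ∈ B) (hb2 : b2 ∈ B)
    (hja1 : β a1 / t = j) (hja2 : β a2 / t = j) (hjb1 : β b1 / t = j) (hjb2 : β b2 / t = j)
    (ha12 : a1 < a2) (hb12 : b1 < b2)
    (huA : uA ∈ A) (huAj : β uA / t < j) (hvA : vA ∈ A) (hvAj : j < β vA / t)
    (huB : uB ∈ B) (huBj : β uB / t < j) (hvB : vB ∈ B) (hvBj : j < β vB / t)
    (heq : β a2 = β b2) (hlt : a2 < b2) : False := by
  rcases lt_trichotomy b1 a1 with h | h | h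
  · refine hG.alt A hA B hB hAB ⟨uA, huA, b1, hb1, a1, ha1, b2, hb2, vA, hvA, ?_, h, ?_, ?_⟩
    · exact lt_of_div_lt hG.mono (show β uA / t < β b1 / t by omega)
    · omega
    · exact lt_of_div_lt hG.mono (show β b2 / t < β vA / t by omega)
  · exact hG.disj A hA B hB hAB a1 ha1 (h ▸ hb1)
  · rcases lt_trichotomy b1 a2 with h2 | h2 | h2
    · refine hG.alt B hB A hA (fun e => hAB e.symm)
        ⟨uB, huB, a1, ha1, b1, hb1, a2, ha2, vB, hvB, ?_, h, h2, ?_⟩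
      · exact lt_of_div_lt hG.mono (show β uB / t < β a1 / t by omega)
      · exact lt_of_div_lt hG.mono (show β a2 / t < β vB / t by omega)
    · exact hG.disj A hA B hB hAB a2 ha2 (h2 ▸ hb1)
    · have h3 : β a2 ≤ β b1 := hG.mono (le_of_lt h2)
      have h4 : β b1 ≤ β b2 := hG.mono (le_of_lt hb12)
      have h5 : β b1 = β b2 := by omega
      have := hG.opb B hB b1 hb1 b2 hb2 h5
      omega

lemma pair_c {μ m t : ℕ} {F : Finset (Finset ℕ)} {β : ℕ → ℕ} (hG : Good μ m F β)
    {A B : Finset ℕ} (hA : A ∈ F) (hB : B ∈ F) (hAB : A ≠ B) {j : ℕ}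
    {a2 a3 b1 b2 vB : ℕ}
    (ha2 : a2 ∈ A) (ha3 : a3 ∈ A) (hb1 : b1 ∈ B) (hb2 : b2 ∈ B)
    (hja2 : β a2 / t = j) (hja3 : β a3 / t = j) (hjb1 : β b1 / t = j) (hjb2 : β b2 / t = j)
    (ha23 : a2 < a3) (hb12 : b1 < b2)
    (hvB : vB ∈ B) (hvBj : j < β vB / t)
    (heq : β a2 = β b2) (hlt : a2 < b2) : False := by
  rcases lt_trichotomy b1 a2 with h | h | h
  · rcases lt_trichotomy a3 b2 with h2 | h2 | h2
    · have h3 : β a2 ≤ β a3 := hG.mono (le_of_lt ha23)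
      have h4 : β a3 ≤ β b2 := hG.mono (le_of_lt h2)
      have h5 : β a3 = β a2 := by omega
      have := hG.opb A hA a3 ha3 a2 ha2 h5
      omega
    · exact hG.disj A hA B hB hAB a3 ha3 (h2 ▸ hb2)
    · refine hG.alt B hB A hA (fun e => hAB e.symm)
        ⟨b1, hb1, a2, ha2, b2, hb2, a3, ha3, vB, hvB, h, hlt, h2, ?_⟩
      exact lt_of_div_lt hG.mono (show β a3 / t < β vB / t by omega)
  · exact hG.disj A hA B hB hAB a2 ha2 (h ▸ hb1)
  · have h3 : β a2 ≤ β b1 := hG.mono (le_of_lt h)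
    have h4 : β b1 ≤ β b2 := hG.mono (le_of_lt hb12)
    have h5 : β b1 = β b2 := by omega
    have := hG.opb B hB b1 hb1 b2 hb2 h5
    omega

lemma pair_d {μ m t : ℕ} {F : Finset (Finset ℕ)} {β : ℕ → ℕ} (hG : Good μ m F β)
    {A B : Finset ℕ} (hA : A ∈ F) (hB : B ∈ F) (hAB : A ≠ B) {j : ℕ}
    {a2 a3 b0 b2 uA : ℕ}
    (ha2 : a2 ∈ A) (ha3 : a3 ∈ A) (hb0 : b0 ∈ B) (hb2 : b2 ∈ B)
    (hja2 : β a2 / t = j) (hja3 : β a3 / t = j) (hjb0 : β b0 / t = j) (hjb2 : β b2 / t = j)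
    (ha23 : a2 < a3) (hb02 : b0 < b2)
    (huA : uA ∈ A) (huAj : β uA / t < j)
    (heq : β a2 = β b2) (hlt : a2 < b2) : False := by
  rcases lt_trichotomy a3 b2 with h2 | h2 | h2
  · have h3 : β a2 ≤ β a3 := hG.mono (le_of_lt ha23)
    have h4 : β a3 ≤ β b2 := hG.mono (le_of_lt h2)
    have h5 : β a3 = β a2 := by omega
    have := hG.opb A hA a3 ha3 a2 ha2 h5
    omega
  · exact hG.disj A hA B hB hAB a3 ha3 (h2 ▸ hb2)
  · rcases lt_trichotomy b0 a2 with h | h | h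
    · refine hG.alt A hA B hB hAB
        ⟨uA, huA, b0, hb0, a2, ha2, b2, hb2, a3, ha3, ?_, h, hlt, h2⟩
      exact lt_of_div_lt hG.mono (show β uA / t < β b0 / t by omega)
    · exact hG.disj A hA B hB hAB a2 ha2 (h ▸ hb0)
    · have h3 : β a2 ≤ β b0 := hG.mono (le_of_lt h)
      have h4 : β b0 ≤ β b2 := hG.mono (le_of_lt hb02)
      have h5 : β b0 = β b2 := by omega
      have := hG.opb B hB b0 hb0 b2 hb2 h5
      omega

/-! ### Sorted selection helpers -/

/-- The `i`-th smallest element of a finite set of naturals (0 if out of range). -/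
def nth (s : Finset ℕ) (i : ℕ) : ℕ := (s.sort (·≤·)).getD i 0

lemma nth_mem {s : Finset ℕ} {i : ℕ} (h : i < s.card) : nth s i ∈ s := by
  have hl : i < (s.sort (·≤·)).length := by rwa [Finset.length_sort]
  rw [nth, List.getD_eq_getElem _ _ hl]
  exact (Finset.mem_sort _).mp (List.getElem_mem hl)

lemma nth_lt {s : Finset ℕ} {i j : ℕ} (hij : i < j) (hj : j < s.card) :
    nth s i < nth s j := by
  have hlj : j < (s.sort (·≤·)).length := by rwa [Finset.length_sort]
  have hli : i < (s.sort (·≤·)).length := by omega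
  rw [nth, nth, List.getD_eq_getElem _ _ hli, List.getD_eq_getElem _ _ hlj]
  have hs := Finset.sortedLT_sort s
  exact (hs.getElem_lt_getElem_iff).2 hij

open scoped Classical in
/-- Counting class (b): sets with two elements in an interval and elements on both sides. -/
lemma class_card_b {μ m t p : ℕ} {F : Finset (Finset ℕ)} {β : ℕ → ℕ}
    (hG : Good μ m F β) (hpt : m ≤ p * t) :
    (F.filter (fun A => ∃ j, 2 ≤ (A.filter (fun x => β x / t = j)).card ∧
      (∃ u ∈ A, β u / t < j) ∧ (∃ v ∈ A, j < β v / t))).card ≤ p * t := by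
  have key := Finset.card_le_card_of_injOn
    (f := fun A : Finset ℕ => if h : (∃ j, 2 ≤ (A.filter (fun x => β x / t = j)).card ∧
      (∃ u ∈ A, β u / t < j) ∧ (∃ v ∈ A, j < β v / t)) then
        β (nth (A.filter (fun x => β x / t = h.choose)) 1) else 0)
    (s := (F.filter (fun A => ∃ j, 2 ≤ (A.filter (fun x => β x / t = j)).card ∧
      (∃ u ∈ A, β u / t < j) ∧ (∃ v ∈ A, j < β v / t))))
    (t := Finset.range (p * t)) ?_ ?_
  · simpa using key
  · intro A hA
    obtain ⟨hAF, hQ⟩ := Finset.mem_filter.mp hA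
    simp only [dif_pos hQ]
    have h2 := hQ.choose_spec.1
    have hmem : nth (A.filter (fun x => β x / t = hQ.choose)) 1 ∈
        A.filter (fun x => β x / t = hQ.choose) := nth_mem (by omega)
    have hmemA : nth (A.filter (fun x => β x / t = hQ.choose)) 1 ∈ A :=
      (Finset.mem_filter.mp hmem).1
    exact Finset.mem_range.mpr (lt_of_lt_of_le (hG.bdd A hAF _ hmemA) hpt)
  · intro A hA B hB hfeq
    by_contra hne
    obtain ⟨hAF, hQA⟩ := Finset.mem_filter.mp (Finset.mem_coe.mp hA)
    obtain ⟨hBF, hQB⟩ := Finset.mem_filter.mp (Finset.mem_coe.mp hB)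
    simp only [dif_pos hQA, dif_pos hQB] at hfeq
    obtain ⟨h2A, ⟨uA, huA, huAj⟩, ⟨vA, hvA, hvAj⟩⟩ := hQA.choose_spec
    obtain ⟨h2B, ⟨uB, huB, huBj⟩, ⟨vB, hvB, hvBj⟩⟩ := hQB.choose_spec
    set cA := A.filter (fun x => β x / t = hQA.choose) with hcA
    set cB := B.filter (fun x => β x / t = hQB.choose) with hcB
    have ha1 := Finset.mem_filter.mp (nth_mem (s := cA) (i := 0) (by omega))
    have ha2 := Finset.mem_filter.mp (nth_mem (s := cA) (i := 1) (by omega))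
    have hb1 := Finset.mem_filter.mp (nth_mem (s := cB) (i := 0) (by omega))
    have hb2 := Finset.mem_filter.mp (nth_mem (s := cB) (i := 1) (by omega))
    have ha12 : nth cA 0 < nth cA 1 := nth_lt (by omega) (by omega)
    have hb12 : nth cB 0 < nth cB 1 := nth_lt (by omega) (by omega)
    have hjj : hQA.choose = hQB.choose := by
      rw [← ha2.2, ← hb2.2, hfeq]
    rw [← hjj] at hb1 hb2 huBj hvBj
    rcases Nat.lt_or_ge (nth cA 1) (nth cB 1) with hlt | hge
    · exact pair_b hG hAF hBF hne ha1.1 ha2.1 hb1.1 hb2.1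
        ha1.2 ha2.2 hb1.2 hb2.2 ha12 hb12
        huA huAj hvA hvAj huB huBj hvB hvBj hfeq hlt
    · have hne2 : nth cA 1 ≠ nth cB 1 := by
        intro hc
        exact hG.disj A hAF B hBF hne _ ha2.1 (hc ▸ hb2.1)
      have hlt' : nth cB 1 < nth cA 1 := by omega
      exact pair_b hG hBF hAF (fun e => hne e.symm) hb1.1 hb2.1 ha1.1 ha2.1
        hb1.2 hb2.2 ha1.2 ha2.2 hb12 ha12
        huB huBj hvB hvBj huA huAj hvA hvAj hfeq.symm hlt'

open scoped Classical in
/-- Counting class (c): sets with three elements in an interval and an element after it. -/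
lemma class_card_c {μ m t p : ℕ} {F : Finset (Finset ℕ)} {β : ℕ → ℕ}
    (hG : Good μ m F β) (hpt : m ≤ p * t) :
    (F.filter (fun A => ∃ j, 3 ≤ (A.filter (fun x => β x / t = j)).card ∧
      (∃ v ∈ A, j < β v / t))).card ≤ p * t := by
  have key := Finset.card_le_card_of_injOn
    (f := fun A : Finset ℕ => if h : (∃ j, 3 ≤ (A.filter (fun x => β x / t = j)).card ∧
      (∃ v ∈ A, j < β v / t)) then
        β (nth (A.filter (fun x => β x / t = h.choose)) 1) else 0)
    (s := (F.filter (fun A => ∃ j, 3 ≤ (A.filter (fun x => β x / t = j)).card ∧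
      (∃ v ∈ A, j < β v / t))))
    (t := Finset.range (p * t)) ?_ ?_
  · simpa using key
  · intro A hA
    obtain ⟨hAF, hQ⟩ := Finset.mem_filter.mp hA
    simp only [dif_pos hQ]
    have h2 := hQ.choose_spec.1
    have hmem : nth (A.filter (fun x => β x / t = hQ.choose)) 1 ∈
        A.filter (fun x => β x / t = hQ.choose) := nth_mem (by omega)
    have hmemA : nth (A.filter (fun x => β x / t = hQ.choose)) 1 ∈ A :=
      (Finset.mem_filter.mp hmem).1
    exact Finset.mem_range.mpr (lt_of_lt_of_le (hG.bdd A hAF _ hmemA) hpt)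
  · intro A hA B hB hfeq
    by_contra hne
    obtain ⟨hAF, hQA⟩ := Finset.mem_filter.mp (Finset.mem_coe.mp hA)
    obtain ⟨hBF, hQB⟩ := Finset.mem_filter.mp (Finset.mem_coe.mp hB)
    simp only [dif_pos hQA, dif_pos hQB] at hfeq
    obtain ⟨h2A, ⟨vA, hvA, hvAj⟩⟩ := hQA.choose_spec
    obtain ⟨h2B, ⟨vB, hvB, hvBj⟩⟩ := hQB.choose_spec
    set cA := A.filter (fun x => β x / t = hQA.choose) with hcA
    set cB := B.filter (fun x => β x / t = hQB.choose) with hcB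
    have ha1 := Finset.mem_filter.mp (nth_mem (s := cA) (i := 0) (by omega))
    have ha2 := Finset.mem_filter.mp (nth_mem (s := cA) (i := 1) (by omega))
    have ha3 := Finset.mem_filter.mp (nth_mem (s := cA) (i := 2) (by omega))
    have hb1 := Finset.mem_filter.mp (nth_mem (s := cB) (i := 0) (by omega))
    have hb2 := Finset.mem_filter.mp (nth_mem (s := cB) (i := 1) (by omega))
    have hb3 := Finset.mem_filter.mp (nth_mem (s := cB) (i := 2) (by omega))
    have ha12 : nth cA 1 < nth cA 2 := nth_lt (by omega) (by omega)
    have hb12 : nth cB 0 < nth cB 1 := nth_lt (by omega) (by omega)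
    have ha12' : nth cA 0 < nth cA 1 := nth_lt (by omega) (by omega)
    have hb12' : nth cB 1 < nth cB 2 := nth_lt (by omega) (by omega)
    have hjj : hQA.choose = hQB.choose := by
      rw [← ha2.2, ← hb2.2, hfeq]
    rw [← hjj] at hb1 hb2 hb3 hvBj
    rcases Nat.lt_or_ge (nth cA 1) (nth cB 1) with hlt | hge
    · exact pair_c hG hAF hBF hne ha2.1 ha3.1 hb1.1 hb2.1
        ha2.2 ha3.2 hb1.2 hb2.2 ha12 hb12 hvB hvBj hfeq hlt
    · have hne2 : nth cA 1 ≠ nth cB 1 := by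
        intro hc
        exact hG.disj A hAF B hBF hne _ ha2.1 (hc ▸ hb2.1)
      have hlt' : nth cB 1 < nth cA 1 := by omega
      exact pair_c hG hBF hAF (fun e => hne e.symm) hb2.1 hb3.1 ha1.1 ha2.1
        hb2.2 hb3.2 ha1.2 ha2.2 hb12' ha12' hvA hvAj hfeq.symm hlt'

open scoped Classical in
/-- Counting class (d): sets with three elements in an interval and an element before it. -/
lemma class_card_d {μ m t p : ℕ} {F : Finset (Finset ℕ)} {β : ℕ → ℕ}
    (hG : Good μ m F β) (hpt : m ≤ p * t) :
    (F.filter (fun A => ∃ j, 3 ≤ (A.filter (fun x => β x / t = j)).card ∧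
      (∃ u ∈ A, β u / t < j))).card ≤ p * t := by
  have key := Finset.card_le_card_of_injOn
    (f := fun A : Finset ℕ => if h : (∃ j, 3 ≤ (A.filter (fun x => β x / t = j)).card ∧
      (∃ u ∈ A, β u / t < j)) then
        β (nth (A.filter (fun x => β x / t = h.choose)) 1) else 0)
    (s := (F.filter (fun A => ∃ j, 3 ≤ (A.filter (fun x => β x / t = j)).card ∧
      (∃ u ∈ A, β u / t < j))))
    (t := Finset.range (p * t)) ?_ ?_
  · simpa using key
  · intro A hA
    obtain ⟨hAF, hQ⟩ := Finset.mem_filter.mp hA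
    simp only [dif_pos hQ]
    have h2 := hQ.choose_spec.1
    have hmem : nth (A.filter (fun x => β x / t = hQ.choose)) 1 ∈
        A.filter (fun x => β x / t = hQ.choose) := nth_mem (by omega)
    have hmemA : nth (A.filter (fun x => β x / t = hQ.choose)) 1 ∈ A :=
      (Finset.mem_filter.mp hmem).1
    exact Finset.mem_range.mpr (lt_of_lt_of_le (hG.bdd A hAF _ hmemA) hpt)
  · intro A hA B hB hfeq
    by_contra hne
    obtain ⟨hAF, hQA⟩ := Finset.mem_filter.mp (Finset.mem_coe.mp hA)
    obtain ⟨hBF, hQB⟩ := Finset.mem_filter.mp (Finset.mem_coe.mp hB)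
    simp only [dif_pos hQA, dif_pos hQB] at hfeq
    obtain ⟨h2A, ⟨uA, huA, huAj⟩⟩ := hQA.choose_spec
    obtain ⟨h2B, ⟨uB, huB, huBj⟩⟩ := hQB.choose_spec
    set cA := A.filter (fun x => β x / t = hQA.choose) with hcA
    set cB := B.filter (fun x => β x / t = hQB.choose) with hcB
    have ha1 := Finset.mem_filter.mp (nth_mem (s := cA) (i := 0) (by omega))
    have ha2 := Finset.mem_filter.mp (nth_mem (s := cA) (i := 1) (by omega))
    have ha3 := Finset.mem_filter.mp (nth_mem (s := cA) (i := 2) (by omega))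
    have hb1 := Finset.mem_filter.mp (nth_mem (s := cB) (i := 0) (by omega))
    have hb2 := Finset.mem_filter.mp (nth_mem (s := cB) (i := 1) (by omega))
    have hb3 := Finset.mem_filter.mp (nth_mem (s := cB) (i := 2) (by omega))
    have ha12 : nth cA 1 < nth cA 2 := nth_lt (by omega) (by omega)
    have hb12 : nth cB 0 < nth cB 1 := nth_lt (by omega) (by omega)
    have ha12' : nth cA 0 < nth cA 1 := nth_lt (by omega) (by omega)
    have hb12' : nth cB 1 < nth cB 2 := nth_lt (by omega) (by omega)
    have hjj : hQA.choose = hQB.choose := by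
      rw [← ha2.2, ← hb2.2, hfeq]
    rw [← hjj] at hb1 hb2 hb3 huBj
    rcases Nat.lt_or_ge (nth cA 1) (nth cB 1) with hlt | hge
    · exact pair_d hG hAF hBF hne ha2.1 ha3.1 hb1.1 hb2.1
        ha2.2 ha3.2 hb1.2 hb2.2 ha12 hb12 huA huAj hfeq hlt
    · have hne2 : nth cA 1 ≠ nth cB 1 := by
        intro hc
        exact hG.disj A hAF B hBF hne _ ha2.1 (hc ▸ hb2.1)
      have hlt' : nth cB 1 < nth cA 1 := by omega
      exact pair_d hG hBF hAF (fun e => hne e.symm) hb2.1 hb3.1 ha1.1 ha2.1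
        hb2.2 hb3.2 ha1.2 ha2.2 hb12' ha12' huB huBj hfeq.symm hlt'

/-! ### Middles, contraction, locals, coverage -/

/-- The non-extremal elements of `A`. -/
def midOf (A : Finset ℕ) : Finset ℕ :=
  A.filter (fun x => (∃ y ∈ A, y < x) ∧ (∃ y ∈ A, x < y))

lemma card_midOf {A : Finset ℕ} (hA : A.Nonempty) : A.card ≤ (midOf A).card + 2 := by
  classical
  have hsub : midOf A ⊆ A := Finset.filter_subset _ _
  have h1 : A \ midOf A ⊆ {A.min' hA, A.max' hA} := by
    intro x hx
    obtain ⟨hxA, hxM⟩ := Finset.mem_sdiff.mp hx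
    have hxM' : ¬((∃ y ∈ A, y < x) ∧ (∃ y ∈ A, x < y)) := by
      intro hc
      exact hxM (Finset.mem_filter.mpr ⟨hxA, hc⟩)
    rcases not_and_or.mp hxM' with h | h
    · push_neg at h
      have : x = A.min' hA := le_antisymm (h _ (A.min'_mem hA)) (A.min'_le x hxA)
      simp [this]
    · push_neg at h
      have : x = A.max' hA := le_antisymm (A.le_max' x hxA) (h _ (A.max'_mem hA))
      simp [this]
  have h2 : (A \ midOf A).card ≤ 2 := by
    calc (A \ midOf A).card ≤ ({A.min' hA, A.max' hA} : Finset ℕ).card := Finset.card_le_card h1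
    _ ≤ 2 := Finset.card_insert_le _ _ |>.trans (by simp)
  have h3 := Finset.card_sdiff_add_card_eq_card hsub
  omega

open scoped Classical in
/-- The contraction of a set: the first mid element in each interval. -/
def ctr (β : ℕ → ℕ) (t : ℕ) (A : Finset ℕ) : Finset ℕ :=
  (midOf A).filter (fun x => ∀ y ∈ midOf A, β y / t = β x / t → x ≤ y)

lemma ctr_subset (β : ℕ → ℕ) (t : ℕ) (A : Finset ℕ) : ctr β t A ⊆ A :=
  le_trans (Finset.filter_subset _ _) (Finset.filter_subset _ _)

open scoped Classical in
lemma ctr_inj_iota {β : ℕ → ℕ} {t : ℕ} {A : Finset ℕ} {x y : ℕ}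
    (hx : x ∈ ctr β t A) (hy : y ∈ ctr β t A) (h : β x / t = β y / t) : x = y := by
  rw [ctr, Finset.mem_filter] at hx hy
  exact le_antisymm (hx.2 y hy.1 h.symm) (hy.2 x hx.1 h)

open scoped Classical in
lemma ctr_card {β : ℕ → ℕ} {t : ℕ} (A : Finset ℕ) :
    (ctr β t A).card = ((midOf A).image (fun x => β x / t)).card := by
  have himg : (ctr β t A).image (fun x => β x / t) = (midOf A).image (fun x => β x / t) := by
    apply Finset.Subset.antisymm
    · exact Finset.image_subset_image (Finset.filter_subset _ _)
    · intro j hj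
      obtain ⟨z, hz, rfl⟩ := Finset.mem_image.mp hj
      have hfib : ((midOf A).filter (fun x => β x / t = β z / t)).Nonempty :=
        ⟨z, Finset.mem_filter.mpr ⟨hz, rfl⟩⟩
      set w := ((midOf A).filter (fun x => β x / t = β z / t)).min' hfib with hw
      have hwmem := ((midOf A).filter (fun x => β x / t = β z / t)).min'_mem hfib
      rw [Finset.mem_filter] at hwmem
      refine Finset.mem_image.mpr ⟨w, ?_, hwmem.2⟩
      rw [ctr, Finset.mem_filter]
      refine ⟨hwmem.1, fun y hy hyw => ?_⟩
      apply Finset.min'_le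
      rw [Finset.mem_filter]
      exact ⟨hy, by rw [hyw, hwmem.2]⟩
  have hinj : ((ctr β t A).image (fun x => β x / t)).card = (ctr β t A).card :=
    Finset.card_image_of_injOn (fun x hx y hy h => ctr_inj_iota hx hy h)
  rw [← hinj, himg]

open scoped Classical in
lemma good_local {μ m t : ℕ} {F : Finset (Finset ℕ)} {β : ℕ → ℕ}
    (hG : Good μ m F β) (ht : 1 ≤ t) (j : ℕ) :
    Good μ t (F.filter (fun A => ∀ x ∈ A, β x / t = j)) (fun x => β x - j * t) := by
  have hrange : ∀ A ∈ F.filter (fun A => ∀ x ∈ A, β x / t = j), ∀ x ∈ A,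
      j * t ≤ β x ∧ β x < j * t + t := by
    intro A hA x hx
    obtain ⟨hAF, hloc⟩ := Finset.mem_filter.mp hA
    have := hloc x hx
    have hmod := Nat.div_add_mod (β x) t
    have hmodlt := Nat.mod_lt (β x) (show 0 < t by omega)
    rw [this, mul_comm] at hmod
    omega
  refine ⟨?_, ?_, ?_, ?_, ?_, ?_⟩
  · intro A hA
    exact hG.sizes A (Finset.mem_filter.mp hA).1
  · intro A hA x hx
    have := hrange A hA x hx
    omega
  · intro x y hxy
    simp only
    have := hG.mono hxy
    omega
  · intro A hA x hx y hy hxy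
    have h1 := hrange A hA x hx
    have h2 := hrange A hA y hy
    exact hG.opb A (Finset.mem_filter.mp hA).1 x hx y hy (by omega)
  · intro A hA B hB hAB
    exact hG.disj A (Finset.mem_filter.mp hA).1 B (Finset.mem_filter.mp hB).1 hAB
  · intro A hA B hB hAB
    exact hG.alt A (Finset.mem_filter.mp hA).1 B (Finset.mem_filter.mp hB).1 hAB

open scoped Classical in
lemma good_contract {μ m t p : ℕ} {F : Finset (Finset ℕ)} {β : ℕ → ℕ}
    (hG : Good μ m F β) (hμ : 5 ≤ μ) (ht : 1 ≤ t) (hpt : m ≤ p * t) :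
    Good (μ - 2) p
      ((F.filter (fun A => μ - 2 ≤ ((midOf A).image (fun x => β x / t)).card)).image (ctr β t))
      (fun x => β x / t) ∧
    ((F.filter (fun A => μ - 2 ≤ ((midOf A).image (fun x => β x / t)).card)).image
      (ctr β t)).card =
      (F.filter (fun A => μ - 2 ≤ ((midOf A).image (fun x => β x / t)).card)).card := by
  set Fa := F.filter (fun A => μ - 2 ≤ ((midOf A).image (fun x => β x / t)).card) with hFa
  have hsz : ∀ A ∈ Fa, μ - 2 ≤ (ctr β t A).card := by
    intro A hA
    rw [ctr_card]
    exact (Finset.mem_filter.mp hA).2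
  have hne : ∀ A ∈ Fa, (ctr β t A).Nonempty := by
    intro A hA
    rw [← Finset.card_pos]
    have := hsz A hA
    omega
  have hinj : ∀ A ∈ Fa, ∀ B ∈ Fa, ctr β t A = ctr β t B → A = B := by
    intro A hA B hB hab
    by_contra hne2
    obtain ⟨x, hx⟩ := hne A hA
    have hxA : x ∈ A := ctr_subset β t A hx
    have hxB : x ∈ B := ctr_subset β t B (hab ▸ hx)
    exact hG.disj A (Finset.mem_filter.mp hA).1 B (Finset.mem_filter.mp hB).1 hne2 x hxA hxB
  constructor
  · refine ⟨?_, ?_, ?_, ?_, ?_, ?_⟩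
    · intro A' hA'
      obtain ⟨A, hA, rfl⟩ := Finset.mem_image.mp hA'
      exact hsz A hA
    · intro A' hA' x hx
      obtain ⟨A, hA, rfl⟩ := Finset.mem_image.mp hA'
      have hxA : x ∈ A := ctr_subset β t A hx
      have h1 : β x < m := hG.bdd A (Finset.mem_filter.mp hA).1 x hxA
      have : β x < p * t := by omega
      exact Nat.div_lt_of_lt_mul (by rwa [mul_comm] at this)
    · intro x y hxy
      exact Nat.div_le_div_right (hG.mono hxy)
    · intro A' hA' x hx y hy hxy
      obtain ⟨A, hA, rfl⟩ := Finset.mem_image.mp hA'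
      exact ctr_inj_iota hx hy hxy
    · intro A' hA' B' hB' hAB' x hx hxB'
      obtain ⟨A, hA, rfl⟩ := Finset.mem_image.mp hA'
      obtain ⟨B, hB, rfl⟩ := Finset.mem_image.mp hB'
      have hABne : A ≠ B := fun e => hAB' (by rw [e])
      exact hG.disj A (Finset.mem_filter.mp hA).1 B (Finset.mem_filter.mp hB).1 hABne x
        (ctr_subset β t A hx) (ctr_subset β t B hxB')
    · intro A' hA' B' hB' hAB' halt
      obtain ⟨A, hA, rfl⟩ := Finset.mem_image.mp hA'
      obtain ⟨B, hB, rfl⟩ := Finset.mem_image.mp hB'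
      have hABne : A ≠ B := fun e => hAB' (by rw [e])
      exact hG.alt A (Finset.mem_filter.mp hA).1 B (Finset.mem_filter.mp hB).1 hABne
        (Alt5_mono (ctr_subset β t A) (ctr_subset β t B) halt)
  · exact Finset.card_image_of_injOn hinj

open scoped Classical in
lemma coverage {μ m t : ℕ} {F : Finset (Finset ℕ)} {β : ℕ → ℕ}
    (hG : Good μ m F β) (hμ : 5 ≤ μ) {A : Finset ℕ} (hA : A ∈ F)
    (hnl : ¬ ∃ j, ∀ x ∈ A, β x / t = j)
    (hb : ¬ ∃ j, 2 ≤ (A.filter (fun x => β x / t = j)).card ∧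
      (∃ u ∈ A, β u / t < j) ∧ (∃ v ∈ A, j < β v / t))
    (hc : ¬ ∃ j, 3 ≤ (A.filter (fun x => β x / t = j)).card ∧ (∃ v ∈ A, j < β v / t))
    (hd : ¬ ∃ j, 3 ≤ (A.filter (fun x => β x / t = j)).card ∧ (∃ u ∈ A, β u / t < j)) :
    μ - 2 ≤ ((midOf A).image (fun x => β x / t)).card := by
  have key : ∀ x y, x ∈ midOf A → y ∈ midOf A → β x / t = β y / t → x < y → False := by
    intro x y hx hy hxy hlt
    obtain ⟨hxA, ⟨u, huA, hu⟩, -⟩ := Finset.mem_filter.mp hx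
    obtain ⟨hyA, -, ⟨v, hvA, hv⟩⟩ := Finset.mem_filter.mp hy
    set j := β x / t with hj
    have hut : β u / t ≤ j := Nat.div_le_div_right (hG.mono (le_of_lt hu))
    have hvt : j ≤ β v / t := by
      have h := Nat.div_le_div_right (c := t) (hG.mono (le_of_lt hv))
      omega
    have hxC : x ∈ A.filter (fun z => β z / t = j) := Finset.mem_filter.mpr ⟨hxA, rfl⟩
    have hyC : y ∈ A.filter (fun z => β z / t = j) := Finset.mem_filter.mpr ⟨hyA, hxy.symm⟩
    rcases eq_or_lt_of_le hut with hueq | hult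
    · have huC : u ∈ A.filter (fun z => β z / t = j) := Finset.mem_filter.mpr ⟨huA, hueq⟩
      have h3 : 2 < (A.filter (fun z => β z / t = j)).card := by
        rw [Finset.two_lt_card_iff]
        exact ⟨u, x, y, huC, hxC, hyC, by omega, by omega, by omega⟩
      by_cases hcpost : ∃ w ∈ A, j < β w / t
      · exact hc ⟨j, by omega, hcpost⟩
      · by_cases hdpre : ∃ w ∈ A, β w / t < j
        · exact hd ⟨j, by omega, hdpre⟩
        · apply hnl
          refine ⟨j, fun z hz => ?_⟩
          push_neg at hcpost hdpre
          have h1 := hcpost z hz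
          have h2 := hdpre z hz
          omega
    · rcases eq_or_lt_of_le hvt with hveq | hvlt
      · have hvC : v ∈ A.filter (fun z => β z / t = j) := Finset.mem_filter.mpr ⟨hvA, hveq.symm⟩
        have h3 : 2 < (A.filter (fun z => β z / t = j)).card := by
          rw [Finset.two_lt_card_iff]
          exact ⟨x, y, v, hxC, hyC, hvC, by omega, by omega, by omega⟩
        exact hd ⟨j, by omega, ⟨u, huA, hult⟩⟩
      · have h2 : 1 < (A.filter (fun z => β z / t = j)).card := by
          rw [Finset.one_lt_card_iff]
          exact ⟨x, y, hxC, hyC, by omega⟩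
        exact hb ⟨j, by omega, ⟨u, huA, hult⟩, ⟨v, hvA, hvlt⟩⟩
  have hinj : Set.InjOn (fun x => β x / t) (midOf A) := by
    intro x hx y hy hxy
    rcases lt_trichotomy x y with h | h | h
    · exact (key x y (Finset.mem_coe.mp hx) (Finset.mem_coe.mp hy) hxy h).elim
    · exact h
    · exact (key y x (Finset.mem_coe.mp hy) (Finset.mem_coe.mp hx) hxy.symm h).elim
  have h1 : ((midOf A).image (fun x => β x / t)).card = (midOf A).card :=
    Finset.card_image_of_injOn hinj
  have hAne : A.Nonempty := by
    rw [← Finset.card_pos]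
    have := hG.sizes A hA
    omega
  have h2 := card_midOf hAne
  have h3 := hG.sizes A hA
  omega

open scoped Classical in
/-- The master recursion inequality. -/
lemma master {μ m t : ℕ} {F : Finset (Finset ℕ)} {β : ℕ → ℕ}
    (hG : Good μ m F β) (hμ : 5 ≤ μ) (ht : 1 ≤ t) (L Bd : ℕ)
    (hL : ∀ (F' : Finset (Finset ℕ)) (β' : ℕ → ℕ), Good μ t F' β' → F'.card ≤ L)
    (hB : ∀ (F' : Finset (Finset ℕ)) (β' : ℕ → ℕ),
      Good (μ - 2) ((m + t - 1) / t) F' β' → F'.card ≤ Bd) :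
    F.card ≤ (m + t - 1) / t * L + Bd + 3 * ((m + t - 1) / t * t) := by
  set p := (m + t - 1) / t with hp
  have hpt : m ≤ p * t := by
    have h1 := Nat.div_add_mod (m + t - 1) t
    have h2 := Nat.mod_lt (m + t - 1) (show 0 < t by omega)
    rw [mul_comm t p] at h1
    omega
  -- split locals / nonlocals
  have hsplit : (F.filter (fun A => ∃ j, ∀ x ∈ A, β x / t = j)).card +
      (F.filter (fun A => ¬ ∃ j, ∀ x ∈ A, β x / t = j)).card = F.card :=
    Finset.card_filter_add_card_filter_not _
  -- locals
  have hloc : (F.filter (fun A => ∃ j, ∀ x ∈ A, β x / t = j)).card ≤ p * L := by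
    have hsub : F.filter (fun A => ∃ j, ∀ x ∈ A, β x / t = j) ⊆
        (Finset.range p).biUnion (fun j => F.filter (fun A => ∀ x ∈ A, β x / t = j)) := by
      intro A hA
      obtain ⟨hAF, j, hj⟩ := Finset.mem_filter.mp hA
      have hAne : A.Nonempty := by
        rw [← Finset.card_pos]
        have := hG.sizes A hAF
        omega
      obtain ⟨x0, hx0⟩ := hAne
      have hjp : j < p := by
        rw [← hj x0 hx0]
        have h1 : β x0 < m := hG.bdd A hAF x0 hx0
        exact Nat.div_lt_of_lt_mul (by rw [mul_comm]; omega)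
      exact Finset.mem_biUnion.mpr ⟨j, Finset.mem_range.mpr hjp,
        Finset.mem_filter.mpr ⟨hAF, hj⟩⟩
    calc (F.filter (fun A => ∃ j, ∀ x ∈ A, β x / t = j)).card
        ≤ ((Finset.range p).biUnion
            (fun j => F.filter (fun A => ∀ x ∈ A, β x / t = j))).card :=
          Finset.card_le_card hsub
      _ ≤ ∑ j ∈ Finset.range p, (F.filter (fun A => ∀ x ∈ A, β x / t = j)).card :=
          Finset.card_biUnion_le
      _ ≤ ∑ _j ∈ Finset.range p, L := by
          apply Finset.sum_le_sum
          intro j _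
          exact hL _ _ (good_local hG ht j)
      _ = p * L := by simp [Finset.sum_const, mul_comm]
  -- class a
  have hca : (F.filter (fun A =>
      μ - 2 ≤ ((midOf A).image (fun x => β x / t)).card)).card ≤ Bd := by
    obtain ⟨hGood, hcard⟩ := good_contract hG hμ ht hpt
    rw [← hcard]
    exact hB _ _ hGood
  -- classes b, c, d
  have hcb := class_card_b (p := p) hG hpt
  have hcc := class_card_c (p := p) hG hpt
  have hcd := class_card_d (p := p) hG hpt
  -- coverage of nonlocals
  have hcover : F.filter (fun A => ¬ ∃ j, ∀ x ∈ A, β x / t = j) ⊆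
      ((F.filter (fun A => ∃ j, 2 ≤ (A.filter (fun x => β x / t = j)).card ∧
          (∃ u ∈ A, β u / t < j) ∧ (∃ v ∈ A, j < β v / t)) ∪
        F.filter (fun A => ∃ j, 3 ≤ (A.filter (fun x => β x / t = j)).card ∧
          (∃ v ∈ A, j < β v / t))) ∪
        F.filter (fun A => ∃ j, 3 ≤ (A.filter (fun x => β x / t = j)).card ∧
          (∃ u ∈ A, β u / t < j))) ∪
        F.filter (fun A => μ - 2 ≤ ((midOf A).image (fun x => β x / t)).card) := by
    intro A hA
    obtain ⟨hAF, hnl⟩ := Finset.mem_filter.mp hA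
    by_cases h1 : ∃ j, 2 ≤ (A.filter (fun x => β x / t = j)).card ∧
        (∃ u ∈ A, β u / t < j) ∧ (∃ v ∈ A, j < β v / t)
    · exact Finset.mem_union_left _ (Finset.mem_union_left _
        (Finset.mem_union_left _ (Finset.mem_filter.mpr ⟨hAF, h1⟩)))
    · by_cases h2 : ∃ j, 3 ≤ (A.filter (fun x => β x / t = j)).card ∧ (∃ v ∈ A, j < β v / t)
      · exact Finset.mem_union_left _ (Finset.mem_union_left _
          (Finset.mem_union_right _ (Finset.mem_filter.mpr ⟨hAF, h2⟩)))
      · by_cases h3 : ∃ j, 3 ≤ (A.filter (fun x => β x / t = j)).card ∧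
            (∃ u ∈ A, β u / t < j)
        · exact Finset.mem_union_left _ (Finset.mem_union_right _
            (Finset.mem_filter.mpr ⟨hAF, h3⟩))
        · exact Finset.mem_union_right _ (Finset.mem_filter.mpr
            ⟨hAF, coverage hG hμ hAF hnl h1 h2 h3⟩)
  have hnlcard : (F.filter (fun A => ¬ ∃ j, ∀ x ∈ A, β x / t = j)).card ≤
      3 * (p * t) + Bd := by
    have h1 := Finset.card_le_card hcover
    have h2 := Finset.card_union_le
      (F.filter (fun A => ∃ j, 2 ≤ (A.filter (fun x => β x / t = j)).card ∧
          (∃ u ∈ A, β u / t < j) ∧ (∃ v ∈ A, j < β v / t)) ∪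
        F.filter (fun A => ∃ j, 3 ≤ (A.filter (fun x => β x / t = j)).card ∧
          (∃ v ∈ A, j < β v / t)) ∪
        F.filter (fun A => ∃ j, 3 ≤ (A.filter (fun x => β x / t = j)).card ∧
          (∃ u ∈ A, β u / t < j)))
      (F.filter (fun A => μ - 2 ≤ ((midOf A).image (fun x => β x / t)).card))
    have h3 := Finset.card_union_le
      (F.filter (fun A => ∃ j, 2 ≤ (A.filter (fun x => β x / t = j)).card ∧
          (∃ u ∈ A, β u / t < j) ∧ (∃ v ∈ A, j < β v / t)) ∪
        F.filter (fun A => ∃ j, 3 ≤ (A.filter (fun x => β x / t = j)).card ∧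
          (∃ v ∈ A, j < β v / t)))
      (F.filter (fun A => ∃ j, 3 ≤ (A.filter (fun x => β x / t = j)).card ∧
          (∃ u ∈ A, β u / t < j)))
    have h4 := Finset.card_union_le
      (F.filter (fun A => ∃ j, 2 ≤ (A.filter (fun x => β x / t = j)).card ∧
          (∃ u ∈ A, β u / t < j) ∧ (∃ v ∈ A, j < β v / t)))
      (F.filter (fun A => ∃ j, 3 ≤ (A.filter (fun x => β x / t = j)).card ∧
          (∃ v ∈ A, j < β v / t)))
    omega
  omega

/-! ### The base case `k = 2` -/

lemma eight_bound {m : ℕ} (hm : 5 ≤ m) : 8 * invAk 2 m ≤ 5 * m + 5 := by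
  rcases Nat.lt_or_ge m 9 with h | h
  · have : invAk 2 m ≤ 3 := invAk_two_le_iff.mpr (by norm_num; omega)
    omega
  · rcases Nat.lt_or_ge m 33 with h2 | h2
    · have : invAk 2 m ≤ 5 := invAk_two_le_iff.mpr (by norm_num; omega)
      omega
    · have hq : m ≤ 2 ^ (m / 4) := le_two_pow_quarter (by omega)
      have : invAk 2 m ≤ m / 4 := invAk_two_le_iff.mpr hq
      omega

lemma base2 : ∀ m (F : Finset (Finset ℕ)) (β : ℕ → ℕ), Good 5 m F β →
    F.card ≤ 8 * m * invAk 2 m := by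
  intro m
  induction m using Nat.strong_induction_on with
  | _ m ih =>
    intro F β hG
    rcases Nat.lt_or_ge m 5 with hm | hm
    · have := hG.card_zero (by omega)
      omega
    · set t := (m + 1) / 2 with hts
      have htfacts : 2 * t ≤ m + 1 ∧ m ≤ 2 * t := by
        have h1 := Nat.div_add_mod (m + 1) 2
        have h2 := Nat.mod_lt (m + 1) (show 0 < 2 by omega)
        omega
      have htm : t < m := by omega
      have ht1 : 1 ≤ t := by omega
      have hp : (m + t - 1) / t = 2 := by
        apply Nat.div_eq_of_lt_le
        · omega
        · omega
      have hmas := master hG (le_refl 5) ht1 (8 * t * invAk 2 t) 0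
        (fun F' β' hg => ih t htm F' β' hg)
        (fun F' β' hg => by
          rw [hp] at hg
          have := hg.card_zero (by omega)
          omega)
      rw [hp] at hmas
      set a := invAk 2 m with ha
      set a' := invAk 2 t with ha'
      have ha3 : 3 ≤ a := (invAk_ge_iff3 2 (by omega)).mpr hm
      have haa : a' + 1 ≤ a := by
        have hma : m ≤ 2 ^ a := by
          have := invAk_spec 2 (by omega) m
          rwa [Ak_two_eq] at this
        have : t ≤ 2 ^ (a - 1) := by
          have hpow : 2 * 2 ^ (a - 1) = 2 ^ a := by
            rw [← pow_succ']
            congr 1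
            omega
          omega
        have := invAk_two_le_iff.mpr this
        omega
      have h85 : 8 * a ≤ 5 * m + 5 := eight_bound hm
      clear_value a a'
      -- final arithmetic
      obtain ⟨a1, rfl⟩ : ∃ a1, a = a1 + 3 := ⟨a - 3, by omega⟩
      have q1 : 8 * t * a' ≤ 8 * t * (a1 + 2) := Nat.mul_le_mul_left _ (by omega)
      have q2 : 2 * (2 * (8 * t * (a1 + 2)) + 3 * (2 * t)) = (2 * t) * (16 * a1 + 38) := by
        ring
      have q3 : (2 * t) * (16 * a1 + 38) ≤ (m + 1) * (16 * a1 + 38) :=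
        Nat.mul_le_mul_right _ (by omega)
      have q4 : (m + 1) * (16 * a1 + 38) ≤ 2 * (8 * m * (a1 + 3)) := by
        have e1 : (m + 1) * (16 * a1 + 38) = 16 * (m * a1) + 38 * m + 16 * a1 + 38 := by
          ring
        have e2 : 2 * (8 * m * (a1 + 3)) = 16 * (m * a1) + 48 * m := by
          ring
        omega
      omega
lemma Ak3_four : Ak 3 4 = 65536 := by
  have h33 : Ak 3 3 = 16 := by decide
  have := Ak_succ' 1 3
  rw [show (1:ℕ)+2 = 3 from rfl] at this
  rw [this, h33, Ak_two_eq]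
  norm_num

lemma inner (k : ℕ) (hk : 3 ≤ k)
    (IH : ∀ m (F : Finset (Finset ℕ)) (β : ℕ → ℕ), Good (2*(k-1)+1) m F β →
      F.card ≤ 131072 * (m * (2 * invAk (k-1) m + 8))) :
    ∀ m (F : Finset (Finset ℕ)) (β : ℕ → ℕ), Good (2*k+1) m F β →
      F.card ≤ 131072 * (m * (Dk k (invAk (k-1) m) + 4)) := by
  have hk12 : (2:ℕ) ≤ k - 1 := by omega
  have hk2 : (2:ℕ) ≤ k := by omega
  intro m
  induction m using Nat.strong_induction_on with
  | _ m ihm =>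
    intro F β hG
    set w := invAk (k-1) m with hwdef
    have htriv : 4 ≤ Dk k w + 4 := by omega
    rcases Nat.lt_or_ge (2^1024) m with hbig | hsmall
    · -- m > 2^1024
      have hw2 : 1025 ≤ invAk 2 m := by
        by_contra hc
        push_neg at hc
        have : m ≤ Ak 2 1024 := le_trans (invAk_spec 2 (by omega) m)
          (Ak_mono 2 (by omega) (by omega))
        rw [Ak_two_eq] at this
        omega
      rcases Nat.lt_or_ge w 8 with hw7 | hw8
      · -- CASE (iii): w ≤ 7, so k ≥ 4, t := 8
        have hk4 : 4 ≤ k := by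
          by_contra hc
          have hk3 : k = 3 := by omega
          rw [hwdef, hk3] at hw7
          norm_num at hw7
          omega
        set p := (m + 8 - 1) / 8 with hpdef
        have hmas := master hG (show 5 ≤ 2*k+1 by omega) (show 1 ≤ 8 by omega)
          0 (131072 * (p * (2 * invAk (k-1) p + 8)))
          (fun F' β' hg => by
            have := hg.card_zero (by omega)
            omega)
          (fun F' β' hg => by
            have e : 2*k+1-2 = 2*(k-1)+1 := by omega
            rw [e] at hg
            exact IH _ F' β' hg)
        rw [← hpdef] at hmas
        have hip : invAk (k-1) p ≤ 7 := by
          have h1 : p ≤ m := by omega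
          have := invAk_mono (k-1) hk12 h1
          omega
        have hp8 : 8 * p ≤ m + 7 := by
          have := Nat.div_mul_le_self (m + 8 - 1) 8
          omega
        have e1 : p * (2 * invAk (k-1) p + 8) ≤ p * 22 :=
          Nat.mul_le_mul_left _ (by omega)
        have e2 : 131072 * (p * (2 * invAk (k-1) p + 8)) ≤ 131072 * (p * 22) :=
          Nat.mul_le_mul_left _ e1
        have hfin : F.card ≤ 131072 * (m * 4) := by omega
        calc F.card ≤ 131072 * (m * 4) := hfin
        _ ≤ 131072 * (m * (Dk k w + 4)) :=
          Nat.mul_le_mul_left _ (Nat.mul_le_mul_left _ htriv)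
      rcases Nat.lt_or_ge w 1025 with hw1024 | hw1025
      · -- CASE (iv): 8 ≤ w ≤ 1024, so k ≥ 4, t := 65536
        have hk4 : 4 ≤ k := by
          by_contra hc
          have hk3 : k = 3 := by omega
          rw [hwdef, hk3] at hw1024
          norm_num at hw1024
          omega
        have hw'4 : invAk (k-1) 65536 ≤ 4 := by
          rw [invAk_le_iff (k-1) hk12]
          calc (65536:ℕ) = Ak 3 4 := Ak3_four.symm
          _ ≤ Ak (k-1) 4 := Ak_le_Ak 3 (k-1) (by omega) (by omega) 4
        set p := (m + 65536 - 1) / 65536 with hpdef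
        have htm : (65536:ℕ) < m := by omega
        have hmas := master hG (show 5 ≤ 2*k+1 by omega) (show (1:ℕ) ≤ 65536 by omega)
          (131072 * (65536 * (Dk k (invAk (k-1) 65536) + 4)))
          (131072 * (p * (2 * invAk (k-1) p + 8)))
          (fun F' β' hg => ihm 65536 htm F' β' hg)
          (fun F' β' hg => by
            have e : 2*k+1-2 = 2*(k-1)+1 := by omega
            rw [e] at hg
            exact IH _ F' β' hg)
        rw [← hpdef] at hmas
        rw [Dk_small k hw'4] at hmas
        have hD : Dk k w = 1 := Dk_med k (by omega) (by omega)
        have hip : invAk (k-1) p ≤ 1024 := by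
          have h1 : p ≤ m := by
            apply Nat.div_le_of_le_mul
            omega
          have := invAk_mono (k-1) hk12 h1
          omega
        have hpm : 65536 * p ≤ m + 65535 := by
          have := Nat.div_mul_le_self (m + 65536 - 1) 65536
          omega
        have e1 : p * (2 * invAk (k-1) p + 8) ≤ p * 2056 :=
          Nat.mul_le_mul_left _ (by omega)
        have e2 : 131072 * (p * (2 * invAk (k-1) p + 8)) ≤ 131072 * (p * 2056) :=
          Nat.mul_le_mul_left _ e1
        rw [hD]
        have hfin : F.card ≤ 131072 * (m * 5) := by omega
        calc F.card ≤ 131072 * (m * 5) := hfin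
        _ = 131072 * (m * (1 + 4)) := by norm_num
      · -- CASE (v): w ≥ 1025, the cascade
        set s := invAk (k-1) w + 8 with hsdef
        set t := Ak (k-1) s with htdef
        have hs_half : s ≤ w / 2 := sigma_lt k hk hw1025
        have hw1 : 1 ≤ w := by omega
        have hAkw1 : Ak (k-1) (w - 1) < m := Ak_lt_of_invAk (k-1) hk12 hwdef hw1
        have ht1 : 1 ≤ t := Ak_pos (k-1) hk12 s
        have htm : t < m := by
          have : t ≤ Ak (k-1) (w-1) := Ak_mono (k-1) hk12 (by omega)
          omega
        -- t ≥ 256 w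
        have ht256 : 256 * w ≤ t := by
          rcases Nat.lt_or_ge k 4 with hk3 | hk4
          · -- k = 3
            have hk3' : k - 1 = 2 := by omega
            rw [htdef, hk3', Ak_two_eq, hsdef, hk3']
            have hw2p : w ≤ 2 ^ invAk 2 w := by
              have := invAk_spec 2 (by omega) w
              rwa [Ak_two_eq] at this
            calc 256 * w ≤ 256 * 2 ^ invAk 2 w := Nat.mul_le_mul_left _ hw2p
            _ = 2 ^ (invAk 2 w + 8) := by rw [pow_add]; ring
          · -- k ≥ 4
            have h1 : Ak (k-1) (invAk (k-1) w + 2) ≤ t := by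
              rw [htdef]
              exact Ak_mono (k-1) hk12 (by omega)
            obtain ⟨j, hj⟩ : ∃ j, k - 1 = j + 3 := ⟨k - 4, by omega⟩
            have hstep : Ak (j+3) (invAk (j+3) w + 2) =
                Ak (j+2) (Ak (j+2) (Ak (j+3) (invAk (j+3) w))) := by
              have e1 := Ak_succ' (j+1) (invAk (j+3) w + 1)
              have e2 := Ak_succ' (j+1) (invAk (j+3) w)
              rw [show j+1+2 = j+3 from rfl] at e1 e2
              rw [show invAk (j+3) w + 2 = (invAk (j+3) w + 1) + 1 from rfl, e1, e2]
            have hAw : w ≤ Ak (j+3) (invAk (j+3) w) := invAk_spec (j+3) (by omega) w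
            have hchain : Ak 2 (Ak 2 w) ≤ Ak (j+2) (Ak (j+2) (Ak (j+3) (invAk (j+3) w))) := by
              have c1 : Ak 2 w ≤ Ak (j+2) w := Ak_le_Ak 2 (j+2) (by omega) (by omega) w
              have c2 : Ak (j+2) w ≤ Ak (j+2) (Ak (j+3) (invAk (j+3) w)) :=
                Ak_mono (j+2) (by omega) hAw
              have c3 : Ak 2 (Ak 2 w) ≤ Ak (j+2) (Ak 2 w) :=
                Ak_le_Ak 2 (j+2) (by omega) (by omega) _
              have c4 : Ak (j+2) (Ak 2 w) ≤ Ak (j+2) (Ak (j+2) (Ak (j+3) (invAk (j+3) w))) :=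
                Ak_mono (j+2) (by omega) (le_trans c1 c2)
              exact le_trans c3 c4
            have hpow : 256 * w ≤ Ak 2 (Ak 2 w) := by
              rw [Ak_two_eq, Ak_two_eq]
              have hq : w + 8 ≤ 2 ^ w := by
                have h1 : 4 * (w/4) + 4 ≤ 2 ^ (w/4) := pow_lin (w/4) (by omega)
                have h3 : 2 ^ (w/4 + 1) ≤ 2 ^ w := Nat.pow_le_pow_right (by omega) (by omega)
                have h4 : 2 ^ (w/4 + 1) = 2 ^ (w/4) * 2 := pow_succ 2 (w/4)
                omega
              calc 256 * w ≤ 256 * 2 ^ w :=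
                    Nat.mul_le_mul_left _ (le_of_lt (Nat.lt_two_pow_self (n := w)))
              _ = 2 ^ (w + 8) := by rw [pow_add]; ring
              _ ≤ 2 ^ (2 ^ w) := Nat.pow_le_pow_right (by omega) hq
            rw [htdef, hj, hsdef, hj]
            calc 256 * w ≤ Ak 2 (Ak 2 w) := hpow
            _ ≤ Ak (j+2) (Ak (j+2) (Ak (j+3) (invAk (j+3) w))) := hchain
            _ = Ak (j+3) (invAk (j+3) w + 2) := hstep.symm
            _ ≤ Ak (j+3) (invAk (j+3) w + 8) := Ak_mono (j+3) (by omega) (by omega)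
        -- continue CASE (v)
        set p := (m + t - 1) / t with hpdef
        have hmas := master hG (show 5 ≤ 2*k+1 by omega) ht1
          (131072 * (t * (Dk k (invAk (k-1) t) + 4)))
          (131072 * (p * (2 * invAk (k-1) p + 8)))
          (fun F' β' hg => ihm t htm F' β' hg)
          (fun F' β' hg => by
            have e : 2*k+1-2 = 2*(k-1)+1 := by omega
            rw [e] at hg
            exact IH _ F' β' hg)
        rw [← hpdef] at hmas
        set d := Dk k w with hddef
        have hDbig : d = Dk k s + 1 := by
          rw [hddef, Dk_big k hk hw1025, hsdef]
        have hDs : Dk k (invAk (k-1) t) + 4 ≤ d + 3 := by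
          have h1 : invAk (k-1) t ≤ s := by
            rw [htdef]
            exact invAk_Ak_le (k-1) hk12 s
          have h2 := Dk_mono k hk s (invAk (k-1) t) h1
          omega
        have hdw : d ≤ w := by rw [hddef]; exact Dk_le_self k hk w
        have hpt : p * t ≤ m + t - 1 := by
          rw [hpdef]
          exact Nat.div_mul_le_self _ _
        -- bound p * L
        have eL1 : p * (131072 * (t * (Dk k (invAk (k-1) t) + 4)))
            = 131072 * ((p * t) * (Dk k (invAk (k-1) t) + 4)) := by ring
        have eL2 : (p * t) * (Dk k (invAk (k-1) t) + 4) ≤ (p * t) * (d + 3) :=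
          Nat.mul_le_mul_left _ hDs
        have eL3 : (p * t) * (d + 3) ≤ (m + t) * (d + 3) :=
          Nat.mul_le_mul_right _ (by omega)
        have eL4 : (m + t) * (d + 3) = m * (d + 3) + t * (d + 3) := by ring
        have eL5 : t * (d + 3) ≤ t * (w + 3) := Nat.mul_le_mul_left _ (by omega)
        -- (f_t) : 4 * (t * (w+3)) ≤ m
        have hft : 4 * (t * (w + 3)) ≤ m := by
          set dd := w - 1 - s with hdd
          have hsd : s + dd = w - 1 := by omega
          have hshift : 2 ^ dd * t ≤ Ak (k-1) (w - 1) := by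
            rw [htdef, ← hsd]
            exact Ak_shift (k-1) hk12 s dd
          have hq : w + 3 ≤ 2 ^ (w/4 + 1) := by
            have h1 : 4 * (w/4) + 4 ≤ 2 ^ (w/4) := pow_lin (w/4) (by omega)
            rw [pow_succ]
            omega
          have hdd4 : w/4 + 3 ≤ dd := by omega
          have hpw : 4 * (w + 3) ≤ 2 ^ dd := by
            calc 4 * (w + 3) ≤ 4 * 2 ^ (w/4 + 1) := Nat.mul_le_mul_left _ hq
            _ = 2 ^ (w/4 + 3) := by rw [pow_add, pow_add]; ring
            _ ≤ 2 ^ dd := Nat.pow_le_pow_right (by omega) hdd4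
          calc 4 * (t * (w + 3)) = (4 * (w + 3)) * t := by ring
          _ ≤ 2 ^ dd * t := Nat.mul_le_mul_right _ hpw
          _ ≤ Ak (k-1) (w-1) := hshift
          _ ≤ m := by omega
        -- bound Bd : 256 * (p * (2w+8)) ≤ 6m
        have hip : invAk (k-1) p ≤ w := by
          have h1 : p ≤ m := by
            have hmt : m + t - 1 ≤ t * m := by
              have h2 : 2 * m ≤ t * m := Nat.mul_le_mul_right _ (by omega)
              omega
            exact Nat.div_le_of_le_mul hmt
          have := invAk_mono (k-1) hk12 h1
          omega
        have hX : 256 * (p * (2 * w + 8)) ≤ 6 * m := by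
          have hpt2 : p * t ≤ 2 * m := by omega
          have A1 : (256 * w) * (p * (2*w+8)) ≤ t * (p * (2*w+8)) :=
            Nat.mul_le_mul_right _ ht256
          have A2 : t * (p * (2*w+8)) = (p * t) * (2*w+8) := by ring
          have A3 : (p * t) * (2*w+8) ≤ (2*m) * (2*w+8) :=
            Nat.mul_le_mul_right _ hpt2
          have A4 : (2*m) * (2*w+8) = 4 * (m*w) + 16 * m := by ring
          have A5 : 16 * m ≤ 2 * (m * w) := by
            have : m * 8 ≤ m * w := Nat.mul_le_mul_left _ (by omega)
            omega
          have A6 : (256 * w) * (p * (2*w+8)) ≤ 6 * (m * w) := by omega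
          have A7 : (256 * (p * (2*w+8))) * w ≤ (6 * m) * w := by
            calc (256 * (p * (2*w+8))) * w = (256 * w) * (p * (2*w+8)) := by ring
            _ ≤ 6 * (m * w) := A6
            _ = (6 * m) * w := by ring
          exact Nat.le_of_mul_le_mul_right A7 (by omega)
        have eB : 131072 * (p * (2 * invAk (k-1) p + 8)) ≤
            131072 * (p * (2 * w + 8)) :=
          Nat.mul_le_mul_left _ (Nat.mul_le_mul_left _ (by omega))
        -- final assembly
        have efin : m * (d + 4) = m * (d + 3) + m := by ring
        have echain : p * (131072 * (t * (Dk k (invAk (k-1) t) + 4))) ≤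
            131072 * (m * (d + 3)) + 131072 * (t * (w + 3)) := by
          calc p * (131072 * (t * (Dk k (invAk (k-1) t) + 4)))
              = 131072 * ((p * t) * (Dk k (invAk (k-1) t) + 4)) := eL1
          _ ≤ 131072 * ((p * t) * (d + 3)) := Nat.mul_le_mul_left _ eL2
          _ ≤ 131072 * ((m + t) * (d + 3)) := Nat.mul_le_mul_left _ eL3
          _ = 131072 * (m * (d + 3) + t * (d + 3)) := by rw [eL4]
          _ ≤ 131072 * (m * (d + 3) + t * (w + 3)) :=
              Nat.mul_le_mul_left _ (by omega)
          _ = 131072 * (m * (d + 3)) + 131072 * (t * (w + 3)) := by ring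
        omega
    · -- CASE (ii) : m ≤ 2^1024, direct via the k = 2 bound
      have hG5 : Good 5 m F β := hG.mu_mono (by omega)
      have h1 := base2 m F β hG5
      have h2 : invAk 2 m ≤ 1024 := invAk_two_le_iff.mpr (by omega)
      have h3 : 8 * m * invAk 2 m ≤ 8 * m * 1024 := Nat.mul_le_mul_left _ h2
      have hfin : F.card ≤ 131072 * (m * 4) := by omega
      calc F.card ≤ 131072 * (m * 4) := hfin
      _ ≤ 131072 * (m * (Dk k w + 4)) :=
        Nat.mul_le_mul_left _ (Nat.mul_le_mul_left _ htriv)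

lemma outer : ∀ k, 2 ≤ k → ∀ m (F : Finset (Finset ℕ)) (β : ℕ → ℕ),
    Good (2*k+1) m F β → F.card ≤ 131072 * (m * (2 * invAk k m + 8)) := by
  intro k hk
  induction k, hk using Nat.le_induction with
  | base =>
    intro m F β hG
    have h1 := base2 m F β (hG.mu_mono (by norm_num))
    have e1 : 8 * m * invAk 2 m = 8 * (m * invAk 2 m) := by ring
    have e2 : m * (2 * invAk 2 m + 8) = 2 * (m * invAk 2 m) + 8 * m := by ring
    omega
  | succ k hk ih =>
    intro m F β hG
    have h1 := inner (k+1) (by omega) (fun m' F' β' hg => ih m' F' β' hg) m F β hG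
    have h2 : Dk (k+1) (invAk ((k+1)-1) m) ≤ 2 * invAk (k+1) (invAk ((k+1)-1) m) + 2 :=
      Dk_bound (k+1) (by omega) _
    have h3 : invAk (k+1) (invAk ((k+1)-1) m) ≤ invAk (k+1) m :=
      invAk_mono (k+1) (by omega) (invAk_le_self ((k+1)-1) (by omega) m)
    have h4 : Dk (k+1) (invAk ((k+1)-1) m) + 4 ≤ 2 * invAk (k+1) m + 8 := by omega
    calc F.card ≤ 131072 * (m * (Dk (k+1) (invAk ((k+1)-1) m) + 4)) := h1
    _ ≤ 131072 * (m * (2 * invAk (k+1) m + 8)) :=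
      Nat.mul_le_mul_left _ (Nat.mul_le_mul_left _ h4)

/-! ### From ADS sequences to abstract instances -/

/-- block index of a position in a list of blocks -/
def bIdx : List (List ℕ) → ℕ → ℕ
  | [], _ => 0
  | B :: Bs, i => if i < B.length then 0 else bIdx Bs (i - B.length) + 1

lemma bIdx_mono (Bs : List (List ℕ)) : Monotone (bIdx Bs) := by
  induction Bs with
  | nil => intro i j _; simp [bIdx]
  | cons B Bs ih =>
    intro i j hij
    simp only [bIdx]
    by_cases hj : j < B.length
    · rw [if_pos (by omega), if_pos hj]
    · rw [if_neg hj]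
      by_cases hi : i < B.length
      · rw [if_pos hi]; omega
      · rw [if_neg hi]
        have := ih (Nat.sub_le_sub_right hij B.length)
        omega

lemma bIdx_lt (Bs : List (List ℕ)) (i : ℕ) (h : i < Bs.flatten.length) :
    bIdx Bs i < Bs.length := by
  induction Bs generalizing i with
  | nil => simp at h
  | cons B Bs ih =>
    rw [List.flatten_cons, List.length_append] at h
    simp only [bIdx, List.length_cons]
    by_cases hi : i < B.length
    · rw [if_pos hi]; omega
    · rw [if_neg hi]
      have := ih (i - B.length) (by omega)
      omega

lemma bIdx_inj (Bs : List (List ℕ)) (hN : ∀ B ∈ Bs, B.Nodup) (i i' : ℕ)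
    (h : i < i') (h' : i' < Bs.flatten.length) (heq : bIdx Bs i = bIdx Bs i') :
    Bs.flatten.getD i 0 ≠ Bs.flatten.getD i' 0 := by
  induction Bs generalizing i i' with
  | nil => simp at h'
  | cons B Bs ih =>
    rw [List.flatten_cons] at h' ⊢
    rw [List.length_append] at h'
    simp only [bIdx] at heq
    by_cases hi' : i' < B.length
    · have hi : i < B.length := by omega
      rw [List.getD_eq_getElem _ _ (by rw [List.length_append]; omega),
          List.getD_eq_getElem _ _ (by rw [List.length_append]; omega)]
      rw [List.getElem_append_left hi, List.getElem_append_left hi']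
      have hnd : B.Nodup := hN B (by simp)
      intro hc
      have := (List.Nodup.getElem_inj_iff hnd).mp hc
      omega
    · by_cases hi : i < B.length
      · rw [if_pos hi, if_neg hi'] at heq
        omega
      · rw [if_neg hi, if_neg hi'] at heq
        have h1 : i - B.length < i' - B.length := by omega
        have h2 : i' - B.length < Bs.flatten.length := by omega
        have h3 := ih (fun B hB => hN B (by simp [hB])) _ _ h1 h2 (by omega)
        rw [List.getD_eq_getElem _ _ (by rw [List.length_append]; omega),
            List.getD_eq_getElem _ _ (by rw [List.length_append]; omega)]
        rw [List.getElem_append_right (by omega), List.getElem_append_right (by omega)]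
        rw [List.getD_eq_getElem _ _ (by omega), List.getD_eq_getElem _ _ (by omega)] at h3
        exact h3

lemma count_positions (l : List ℕ) (a : ℕ) :
    ((List.range l.length).filter (fun i => l.getD i 0 = a)).length = l.count a := by
  induction l with
  | nil => simp
  | cons x xs ih =>
    rw [List.length_cons, List.range_succ_eq_map]
    rw [List.filter_cons]
    simp only [List.getD_cons_zero]
    rw [List.filter_map]
    rw [List.count_cons]
    have e1 : ((List.range xs.length).filter
        ((fun i => decide ((x :: xs).getD i 0 = a)) ∘ Nat.succ)).length =
        ((List.range xs.length).filter (fun i => xs.getD i 0 = a)).length := by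
      congr 1
    by_cases hx : x = a
    · rw [if_pos (by simp [hx])]
      simp only [List.length_cons, List.length_map]
      rw [e1, ih]
      simp [hx]
    · rw [if_neg (by simp [hx])]
      simp only [List.length_map]
      rw [e1, ih]
      simp [hx]

lemma getD_map_sublist : ∀ (S idxs : List ℕ), List.Pairwise (· < ·) idxs →
    (∀ i ∈ idxs, i < S.length) → (idxs.map (fun i => S.getD i 0)).Sublist S := by
  intro S
  induction S with
  | nil =>
    intro idxs hp hb
    cases idxs with
    | nil => simp
    | cons i r => exact absurd (hb i (by simp)) (by simp)
  | cons x S ih =>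
    intro idxs hp hb
    cases idxs with
    | nil => simp
    | cons i rest =>
      have hrest1 : ∀ j ∈ rest, 1 ≤ j := by
        intro j hj
        have := List.rel_of_pairwise_cons hp hj
        omega
      have hprest : List.Pairwise (· < ·) rest := hp.of_cons
      have hshift : rest.map (fun i => (x :: S).getD i 0) =
          (rest.map (fun i => i - 1)).map (fun i => S.getD i 0) := by
        rw [List.map_map]
        apply List.map_congr_left
        intro j hj
        have h1 := hrest1 j hj
        obtain ⟨j', rfl⟩ : ∃ j', j = j' + 1 := ⟨j - 1, by omega⟩
        simp
      have hpair : List.Pairwise (· < ·) (rest.map (fun i => i - 1)) := by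
        rw [List.pairwise_map]
        apply List.Pairwise.imp_of_mem ?_ hprest
        intro a b ha hb hab
        have := hrest1 a ha
        have := hrest1 b hb
        omega
      have hbnd : ∀ j ∈ rest.map (fun i => i - 1), j < S.length := by
        intro j hj
        obtain ⟨j', hj', rfl⟩ := List.mem_map.mp hj
        have h1 := hb j' (by simp [hj'])
        have h2 := hrest1 j' hj'
        simp at h1
        omega
      by_cases hi : i = 0
      · subst hi
        simp only [List.map_cons, List.getD_cons_zero]
        rw [hshift]
        exact (ih _ hpair hbnd).cons₂ x
      · have hshift2 : (i :: rest).map (fun i => (x :: S).getD i 0) =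
            ((i :: rest).map (fun i => i - 1)).map (fun i => S.getD i 0) := by
          rw [List.map_map]
          apply List.map_congr_left
          intro j hj
          have h1 : 1 ≤ j := by
            rcases List.mem_cons.mp hj with h | h
            · omega
            · exact hrest1 j h
          obtain ⟨j', rfl⟩ : ∃ j', j = j' + 1 := ⟨j - 1, by omega⟩
          simp
        rw [hshift2]
        apply List.Sublist.cons x
        apply ih _ ?_ ?_
        · rw [List.pairwise_map]
          apply List.Pairwise.imp_of_mem ?_ hp
          intro a b ha hb hab
          have h1 : 1 ≤ a := by
            rcases List.mem_cons.mp ha with h | h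
            · omega
            · exact hrest1 a h
          omega
        · intro j hj
          obtain ⟨j', hj', rfl⟩ := List.mem_map.mp hj
          have h1 := hb j' hj'
          have h2 : 1 ≤ j' := by
            rcases List.mem_cons.mp hj' with h | h
            · omega
            · exact hrest1 j' h
          simp at h1
          omega

lemma alt5_hasAlt {S : List ℕ} {a b : ℕ} (hab : a ≠ b) {i1 i2 i3 i4 i5 : ℕ}
    (h12 : i1 < i2) (h23 : i2 < i3) (h34 : i3 < i4) (h45 : i4 < i5) (h5 : i5 < S.length)
    (v1 : S.getD i1 0 = a) (v2 : S.getD i2 0 = b) (v3 : S.getD i3 0 = a)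
    (v4 : S.getD i4 0 = b) (v5 : S.getD i5 0 = a) : HasAlt S 5 := by
  refine ⟨a, b, hab, ?_⟩
  have e : altList a b 5 = [a, b, a, b, a] := rfl
  rw [e]
  have hsub := getD_map_sublist S [i1, i2, i3, i4, i5] ?_ ?_
  · have e2 : [i1, i2, i3, i4, i5].map (fun i => S.getD i 0) = [a, b, a, b, a] := by
      simp only [List.map_cons, List.map_nil]
      rw [v1, v2, v3, v4, v5]
    rwa [e2] at hsub
  · simp
    omega
  · simp
    omega

lemma finset_count (l : List ℕ) (a : ℕ) :
    ((Finset.range l.length).filter (fun i => l.getD i 0 = a)).card = l.count a := by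
  rw [← count_positions]
  rfl

open scoped Classical in
lemma glue (k m : ℕ) (hk : 2 ≤ k) (S : List ℕ)
    (hBlocks : ∃ Bs : List (List ℕ), Bs.length ≤ m ∧ S = Bs.flatten ∧ ∀ B ∈ Bs, B.Nodup)
    (hcount : ∀ a ∈ S, 2*k+1 ≤ S.count a) (halt : ¬ HasAlt S 5) :
    S.toFinset.card ≤ 131072 * (m * (2 * invAk k m + 8)) ∧ (m ≤ 4 → S.toFinset.card = 0) := by
  obtain ⟨Bs, hlen, hflat, hnodup⟩ := hBlocks
  set β := bIdx Bs with hβ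
  set F := S.toFinset.image
    (fun a => (Finset.range S.length).filter (fun i => S.getD i 0 = a)) with hF
  have hmemA : ∀ a, ∀ x ∈ (Finset.range S.length).filter (fun i => S.getD i 0 = a),
      x < S.length ∧ S.getD x 0 = a := by
    intro a x hx
    obtain ⟨h1, h2⟩ := Finset.mem_filter.mp hx
    exact ⟨Finset.mem_range.mp h1, h2⟩
  have hflatlen : S.length = Bs.flatten.length := by rw [hflat]
  have hgetD : ∀ i, S.getD i 0 = Bs.flatten.getD i 0 := by intro i; rw [hflat]
  have hGood : Good (2*k+1) m F β := by
    refine ⟨?_, ?_, ?_, ?_, ?_, ?_⟩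
    · intro A hA
      obtain ⟨a, ha, rfl⟩ := Finset.mem_image.mp hA
      rw [finset_count]
      exact hcount a (List.mem_toFinset.mp ha)
    · intro A hA x hx
      obtain ⟨a, ha, rfl⟩ := Finset.mem_image.mp hA
      have h1 := (hmemA a x hx).1
      have h2 : bIdx Bs x < Bs.length := bIdx_lt Bs x (by omega)
      calc β x < Bs.length := h2
      _ ≤ m := hlen
    · exact bIdx_mono Bs
    · intro A hA x hx y hy hxy
      obtain ⟨a, ha, rfl⟩ := Finset.mem_image.mp hA
      have h1 := hmemA a x hx
      have h2 := hmemA a y hy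
      by_contra hne
      rcases lt_trichotomy x y with h | h | h
      · have := bIdx_inj Bs hnodup x y h (by omega) hxy
        rw [← hgetD, ← hgetD] at this
        omega
      · omega
      · have := bIdx_inj Bs hnodup y x h (by omega) hxy.symm
        rw [← hgetD, ← hgetD] at this
        omega
    · intro A hA B hB hAB x hxA hxB
      obtain ⟨a, ha, rfl⟩ := Finset.mem_image.mp hA
      obtain ⟨b, hb, rfl⟩ := Finset.mem_image.mp hB
      have h1 := (hmemA a x hxA).2
      have h2 := (hmemA b x hxB).2
      exact hAB (by rw [← h1, h2])
    · intro A hA B hB hAB haltAB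
      obtain ⟨a, ha, rfl⟩ := Finset.mem_image.mp hA
      obtain ⟨b, hb, rfl⟩ := Finset.mem_image.mp hB
      have hab : a ≠ b := fun e => hAB (by rw [e])
      obtain ⟨x1, hx1, y1, hy1, x2, hx2, y2, hy2, x3, hx3, o1, o2, o3, o4⟩ := haltAB
      exact halt (alt5_hasAlt hab o1 o2 o3 o4 (hmemA a x3 hx3).1
        (hmemA a x1 hx1).2 (hmemA b y1 hy1).2 (hmemA a x2 hx2).2
        (hmemA b y2 hy2).2 (hmemA a x3 hx3).2)
  have hcard : F.card = S.toFinset.card := by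
    rw [hF]
    apply Finset.card_image_of_injOn
    intro a ha b hb hab
    have haS : a ∈ S := List.mem_toFinset.mp (Finset.mem_coe.mp ha)
    obtain ⟨i, hi, hia⟩ := List.mem_iff_getElem.mp haS
    have hmem : i ∈ (Finset.range S.length).filter (fun j => S.getD j 0 = a) := by
      rw [Finset.mem_filter, Finset.mem_range]
      refine ⟨hi, ?_⟩
      rw [List.getD_eq_getElem _ _ hi, hia]
    simp only [] at hab
    rw [hab] at hmem
    have := (Finset.mem_filter.mp hmem).2
    rw [List.getD_eq_getElem _ _ hi, hia] at this
    exact this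
  constructor
  · rw [← hcard]
    exact outer k hk m F β hGood
  · intro hm4
    rw [← hcard]
    exact hGood.card_zero (by omega)


/-- There is an absolute constant `c` such that`N^3_{2k+1}(m) ≤ c·m·α_k(m)` for every
`k ≥ 2` and `m ≥ 1`. -/
theorem NADS3_upper :
    ∃ c : ℕ, ∀ k m : ℕ, 2 ≤ k → 1 ≤ m →
      NADS 3 (2 * k + 1) m ≤ ((c * m * invAk k m : ℕ) : ℕ∞) := by
  refine ⟨2097152, ?_⟩
  intro k m hk _hm
  apply sSup_le
  rintro x ⟨S, hADS, rfl⟩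
  obtain ⟨hBlocks, hcount, halt⟩ := hADS
  have hglue := glue k m hk S hBlocks hcount halt
  rw [Nat.cast_le]
  rcases Nat.lt_or_ge m 5 with hm5 | hm5
  · rw [hglue.2 (by omega)]
    exact Nat.zero_le _
  · have h1 := hglue.1
    have ha : 3 ≤ invAk k m := (invAk_ge_iff3 k (by omega)).mpr hm5
    have e1 : 2097152 * m * invAk k m = 131072 * (m * (16 * invAk k m)) := by ring
    have e2 : m * (2 * invAk k m + 8) ≤ m * (16 * invAk k m) :=
      Nat.mul_le_mul_left _ (by omega)
    calc S.toFinset.card ≤ 131072 * (m * (2 * invAk k m + 8)) := h1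
    _ ≤ 131072 * (m * (16 * invAk k m)) := Nat.mul_le_mul_left _ e2
    _ = 2097152 * m * invAk k m := e1.symm
end

section
/- Let s ≥ 3, and let k₁ ≥ 1, k₂ ≥ 1, k₃ ≥ 3, t ≥ 1, m ≥ 1 be integers; set k = k₂·k₃ + 2k₁ − 3k₂ − k₃ + 2 and b = ⌈m/t⌉. Then N^s_k(m) ≤ b·(N^s_k(t) + 2·N^{s−1}_{k₁}(t) + N^{s−2}_{k₂}(t)) + N^s_{k₃}(b) (an inequality in the extended naturals). -/
namespace NADSaux

/-! ### Chunking a list into pieces of size `t` -/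

/-- chunk a list into pieces of size `t` (assuming `t ≥ 1`). -/
def chunkList {α : Type*} (t : ℕ) : List α → List (List α)
  | [] => []
  | x :: xs => (x :: xs.take (t-1)) :: chunkList t (xs.drop (t-1))
termination_by l => l.length
decreasing_by simp [List.length_drop] <;> omega

@[simp] theorem chunkList_nil {α : Type*} (t : ℕ) : chunkList t ([] : List α) = [] := by
  rw [chunkList.eq_1]

theorem chunkList_cons {α : Type*} (t : ℕ) (x : α) (xs : List α) :
    chunkList t (x :: xs) = (x :: xs.take (t-1)) :: chunkList t (xs.drop (t-1)) := by
  rw [chunkList.eq_2]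

theorem flatten_chunkList {α : Type*} (t : ℕ) (l : List α) :
    (chunkList t l).flatten = l := by
  suffices h : ∀ n (l : List α), l.length ≤ n → (chunkList t l).flatten = l from
    h l.length l le_rfl
  intro n
  induction n with
  | zero => intro l hl; rw [List.length_eq_zero_iff.mp (Nat.le_zero.mp hl)]; simp
  | succ n ih =>
    intro l hl
    match l with
    | [] => simp
    | x :: xs =>
      rw [chunkList_cons, List.flatten_cons, ih (xs.drop (t-1)) (by simp at hl ⊢; omega)]
      simp [List.take_append_drop]

theorem mem_chunkList_length {α : Type*} {t : ℕ} (ht : 1 ≤ t) {l : List α}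
    {c : List α} (hc : c ∈ chunkList t l) : c.length ≤ t := by
  suffices h : ∀ n (l : List α), l.length ≤ n → ∀ c ∈ chunkList t l, c.length ≤ t from
    h l.length l le_rfl c hc
  intro n
  induction n with
  | zero => intro l hl c hc; rw [List.length_eq_zero_iff.mp (Nat.le_zero.mp hl)] at hc; simp at hc
  | succ n ih =>
    intro l hl c hc
    match l with
    | [] => simp at hc
    | x :: xs =>
      rw [chunkList_cons] at hc
      rcases List.mem_cons.mp hc with h | h
      · subst h; simp only [List.length_cons]
        have := List.length_take_le (t-1) xs; omega
      · exact ih _ (by simp at hl ⊢; omega) c h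

theorem mem_of_mem_chunkList {α : Type*} {t : ℕ} {l : List α} {c : List α}
    (hc : c ∈ chunkList t l) {x : α} (hx : x ∈ c) : x ∈ l := by
  rw [← flatten_chunkList t l]
  exact List.mem_flatten.mpr ⟨c, hc, hx⟩

theorem chunkList_length_mul_le {α : Type*} {t : ℕ} (ht : 1 ≤ t) (l : List α) :
    (chunkList t l).length * t ≤ l.length + t - 1 := by
  suffices h : ∀ n (l : List α), l.length ≤ n →
      (chunkList t l).length * t ≤ l.length + t - 1 from h l.length l le_rfl
  intro n
  induction n with
  | zero =>
    intro l hl; rw [List.length_eq_zero_iff.mp (Nat.le_zero.mp hl)]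
    simp
  | succ n ih =>
    intro l hl
    match l with
    | [] => simp
    | x :: xs =>
      rw [chunkList_cons]
      have hlxs : xs.length ≤ n := by simp at hl; omega
      by_cases hsmall : xs.length ≤ t - 1
      · rw [List.drop_eq_nil_of_le hsmall]
        simp only [chunkList_nil, List.length_cons, List.length_nil]
        have : (0 + 1) * t = t := by ring
        rw [this]; omega
      have hdrop : (xs.drop (t-1)).length = xs.length - (t-1) := List.length_drop
      have hIH := ih (xs.drop (t-1)) (by omega)
      rw [hdrop] at hIH
      have hIH' : (chunkList t (xs.drop (t-1))).length * t ≤ xs.length := by omega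
      have h1 : ((x :: xs.take (t-1)) :: chunkList t (xs.drop (t-1))).length
          = (chunkList t (xs.drop (t-1))).length + 1 := by simp
      rw [h1]
      have h2 : ((chunkList t (xs.drop (t-1))).length + 1) * t
          = (chunkList t (xs.drop (t-1))).length * t + t := by ring
      rw [h2]
      generalize (chunkList t (xs.drop (t-1))).length * t = B at hIH' ⊢
      simp only [List.length_cons]
      omega

/-! ### Alternation lemmas -/

theorem altList_add_two (a b : ℕ) (l : ℕ) :
    altList a b (l + 2) = a :: b :: altList a b l := rfl

theorem altList_succ_concat (a b : ℕ) (l : ℕ) :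
    altList a b (l + 1) = altList a b l ++ [if l % 2 = 0 then a else b] := by
  induction l generalizing a b with
  | zero => simp [altList]
  | succ n ih =>
    show a :: altList b a (n + 1) = (a :: altList b a n) ++ _
    rw [ih b a]
    have : (if n % 2 = 0 then b else a) = (if (n+1) % 2 = 0 then a else b) := by
      rcases Nat.even_or_odd n with h | h
      · have h0 : n % 2 = 0 := Nat.even_iff.mp h
        have h1 : (n+1) % 2 = 1 := by omega
        simp [h0, h1]
      · have h0 : n % 2 = 1 := Nat.odd_iff.mp h
        have h1 : (n+1) % 2 = 0 := by omega
        simp [h0, h1]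
    rw [← this]
    simp

theorem mem_altList_self_left (a b : ℕ) {l : ℕ} (hl : 1 ≤ l) : a ∈ altList a b l := by
  match l, hl with
  | n + 1, _ => exact List.mem_cons_self

theorem mem_altList_self_right (a b : ℕ) {l : ℕ} (hl : 2 ≤ l) : b ∈ altList a b l := by
  match l, hl with
  | n + 2, _ => rw [altList_add_two]; exact List.mem_cons.mpr (Or.inr (List.mem_cons_self))

theorem hasAlt_mono {u v : List ℕ} {l : ℕ} (h : u.Sublist v) : HasAlt u l → HasAlt v l :=
  fun ⟨a, b, hab, hs⟩ => ⟨a, b, hab, hs.trans h⟩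

theorem flatten_map_sublist {α : Type*} (f : List α → List α) (h : ∀ G, (f G).Sublist G)
    (L : List (List α)) : (L.map f).flatten.Sublist L.flatten := by
  induction L with
  | nil => simp
  | cons x xs ih => simpa using (h x).append ih

/-- sum over a list of the map equals indexed sum. -/
theorem sum_map_getD {α : Type*} (l : List α) (f : α → ℕ) (d : α) :
    (l.map f).sum = ∑ j ∈ Finset.range l.length, f (l.getD j d) := by
  induction l with
  | nil => simp
  | cons x xs ih =>
    rw [List.map_cons, List.sum_cons, List.length_cons, Finset.sum_range_succ']
    simp only [List.getD_cons_succ, List.getD_cons_zero]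
    rw [ih]; ring

/-! ### Groups: current / before / after a group -/

/-- the `j`-th group. -/
def curG (Gs : List (List ℕ)) (j : ℕ) : List ℕ := Gs.getD j []

/-- everything before the `j`-th group. -/
def preG (Gs : List (List ℕ)) (j : ℕ) : List ℕ := (Gs.take j).flatten

/-- everything after the `j`-th group. -/
def sufG (Gs : List (List ℕ)) (j : ℕ) : List ℕ := (Gs.drop (j+1)).flatten

theorem splitG (Gs : List (List ℕ)) {j : ℕ} (hj : j < Gs.length) :
    Gs.flatten = preG Gs j ++ curG Gs j ++ sufG Gs j := by
  conv_lhs => rw [← List.take_append_drop j Gs]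
  rw [List.drop_eq_getElem_cons hj, List.flatten_append, List.flatten_cons]
  rw [preG, curG, sufG, List.getD_eq_getElem _ _ hj, List.append_assoc]

theorem curG_mem {Gs : List (List ℕ)} {j : ℕ} (hj : j < Gs.length) : curG Gs j ∈ Gs := by
  rw [curG, List.getD_eq_getElem _ _ hj]
  exact List.getElem_mem hj

theorem curG_sublist {Gs : List (List ℕ)} {j : ℕ} (hj : j < Gs.length) :
    (curG Gs j).Sublist Gs.flatten := by
  rw [splitG Gs hj, List.append_assoc]
  exact ((List.sublist_append_left _ _).trans (List.sublist_append_right _ _))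

theorem mem_preG_iff {Gs : List (List ℕ)} {j : ℕ} {a : ℕ} :
    a ∈ preG Gs j ↔ ∃ i, i < j ∧ i < Gs.length ∧ a ∈ curG Gs i := by
  rw [preG, List.mem_flatten]
  constructor
  · rintro ⟨L, hL, haL⟩
    obtain ⟨i, hi, hEq⟩ := List.mem_iff_getElem.mp hL
    have hi' : i < j ∧ i < Gs.length := by
      have := hi; rw [List.length_take] at this; omega
    refine ⟨i, hi'.1, hi'.2, ?_⟩
    rw [curG, List.getD_eq_getElem _ _ hi'.2, ← List.getElem_take (xs := Gs) (h := hi), hEq]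
    exact haL
  · rintro ⟨i, hij, hin, hai⟩
    have hlen : i < (Gs.take j).length := by rw [List.length_take]; omega
    refine ⟨(Gs.take j)[i], List.getElem_mem hlen, ?_⟩
    rw [List.getElem_take]
    rw [curG, List.getD_eq_getElem _ _ hin] at hai
    exact hai

theorem mem_sufG_iff {Gs : List (List ℕ)} {j : ℕ} {a : ℕ} :
    a ∈ sufG Gs j ↔ ∃ i, j < i ∧ i < Gs.length ∧ a ∈ curG Gs i := by
  rw [sufG, List.mem_flatten]
  constructor
  · rintro ⟨L, hL, haL⟩
    obtain ⟨r, hr, hEq⟩ := List.mem_iff_getElem.mp hL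
    have hr' : j + 1 + r < Gs.length := by
      have := hr; rw [List.length_drop] at this; omega
    refine ⟨j + 1 + r, by omega, hr', ?_⟩
    rw [curG, List.getD_eq_getElem _ _ hr', ← List.getElem_drop (xs := Gs) (h := hr), hEq]
    exact haL
  · rintro ⟨i, hij, hin, hai⟩
    have hlen : i - (j+1) < (Gs.drop (j+1)).length := by rw [List.length_drop]; omega
    refine ⟨(Gs.drop (j+1))[i - (j+1)], List.getElem_mem hlen, ?_⟩
    rw [List.getElem_drop]
    have hidx : j + 1 + (i - (j + 1)) = i := by omega
    simp only [hidx]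
    rw [curG, List.getD_eq_getElem _ _ hin] at hai
    exact hai

theorem mem_flatten_iff_curG {Gs : List (List ℕ)} {a : ℕ} :
    a ∈ Gs.flatten ↔ ∃ i, i < Gs.length ∧ a ∈ curG Gs i := by
  rw [List.mem_flatten]
  constructor
  · rintro ⟨L, hL, haL⟩
    obtain ⟨i, hi, hEq⟩ := List.mem_iff_getElem.mp hL
    exact ⟨i, hi, by rw [curG, List.getD_eq_getElem _ _ hi, hEq]; exact haL⟩
  · rintro ⟨i, hi, hai⟩
    rw [curG, List.getD_eq_getElem _ _ hi] at hai
    exact ⟨Gs[i], List.getElem_mem hi, hai⟩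

theorem count_flatten_eq (Gs : List (List ℕ)) (a : ℕ) :
    (Gs.flatten).count a = ∑ j ∈ Finset.range Gs.length, (curG Gs j).count a := by
  rw [List.count_flatten, sum_map_getD (f := List.count a) (d := [])]
  rfl

end NADSaux

namespace NADSaux

/-! ### Witnesses for `NADS` bounds -/

theorem witness_bound (s' k' m' : ℕ) (W : List ℕ) (hB : HasBlocks W m')
    (hc : ∀ a ∈ W, k' ≤ W.count a) (hA : ¬ HasAlt W (s' + 2)) :
    ((W.toFinset.card : ℕ∞)) ≤ NADS s' k' m' :=
  le_sSup ⟨W, ⟨hB, hc, hA⟩, rfl⟩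

theorem hasBlocks_filter (p : ℕ → Bool) {G : List ℕ} {t : ℕ} (h : HasBlocks G t) :
    HasBlocks (G.filter p) t := by
  obtain ⟨Cs, hlen, rfl, hnd⟩ := h
  refine ⟨Cs.map (List.filter p), by simpa using hlen, (List.filter_flatten (p := p) (L := Cs)).symm ▸ rfl, ?_⟩
  intro B hB
  obtain ⟨C, hC, rfl⟩ := List.mem_map.mp hB
  exact (hnd C hC).filter p

theorem NADS_mono_m {s' k' : ℕ} {m₁ m₂ : ℕ} (h : m₁ ≤ m₂) :
    NADS s' k' m₁ ≤ NADS s' k' m₂ := by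
  apply sSup_le
  rintro c ⟨S, ⟨⟨Bs, hl, hf, hn⟩, hc, ha⟩, rfl⟩
  exact le_sSup ⟨S, ⟨⟨Bs, hl.trans h, hf, hn⟩, hc, ha⟩, rfl⟩

theorem flatten_map_flatten {α : Type*} (L : List (List (List α))) :
    (L.map List.flatten).flatten = L.flatten.flatten := by
  induction L with
  | nil => simp
  | cons x xs ih => simp [List.flatten_append, ih]

/-! ### The five families of symbols -/

/-- symbols appearing `≥ k` times in group `j`. -/
def LocFin (k : ℕ) (Gs : List (List ℕ)) (j : ℕ) : Finset ℕ :=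
  (curG Gs j).toFinset.filter (fun a => k ≤ (curG Gs j).count a)

/-- symbols whose first group is `j`, appearing `≥ k₁` times there, recurring later. -/
def FstFin (k₁ : ℕ) (Gs : List (List ℕ)) (j : ℕ) : Finset ℕ :=
  (curG Gs j).toFinset.filter
    (fun a => a ∉ preG Gs j ∧ a ∈ sufG Gs j ∧ k₁ ≤ (curG Gs j).count a)

/-- symbols whose last group is `j`, appearing `≥ k₁` times there, occurring earlier. -/
def LstFin (k₁ : ℕ) (Gs : List (List ℕ)) (j : ℕ) : Finset ℕ :=
  (curG Gs j).toFinset.filter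
    (fun a => a ∈ preG Gs j ∧ a ∉ sufG Gs j ∧ k₁ ≤ (curG Gs j).count a)

/-- symbols appearing `≥ k₂` times in the middle group `j`. -/
def MidFin (k₂ : ℕ) (Gs : List (List ℕ)) (j : ℕ) : Finset ℕ :=
  (curG Gs j).toFinset.filter
    (fun a => a ∈ preG Gs j ∧ a ∈ sufG Gs j ∧ k₂ ≤ (curG Gs j).count a)

/-- number of groups in which `a` appears. -/
def NGfun (Gs : List (List ℕ)) (a : ℕ) : ℕ :=
  ((Finset.range Gs.length).filter (fun j => a ∈ curG Gs j)).card

/-- symbols appearing in at least `k₃` groups. -/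
def F4Fin (k₃ : ℕ) (Gs : List (List ℕ)) : Finset ℕ :=
  (Gs.flatten).toFinset.filter (fun a => k₃ ≤ NGfun Gs a)

/-! ### Per-family `NADS` bounds -/

theorem locFin_bound (s k t : ℕ) (Gs : List (List ℕ))
    (hGb : ∀ G ∈ Gs, HasBlocks G t) (hnoalt : ¬ HasAlt Gs.flatten (s + 2))
    {j : ℕ} (hj : j < Gs.length) :
    ((LocFin k Gs j).card : ℕ∞) ≤ NADS s k t := by
  classical
  set W : List ℕ := (curG Gs j).filter (fun a => decide (k ≤ (curG Gs j).count a)) with hW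
  have hWfin : W.toFinset = LocFin k Gs j := by
    ext a
    simp [hW, LocFin, List.mem_filter, List.mem_toFinset, Finset.mem_filter,
      decide_eq_true_eq]
  rw [← hWfin]
  apply witness_bound
  · exact hasBlocks_filter _ (hGb _ (curG_mem hj))
  · intro a ha
    have h2 := (List.mem_filter.mp ha).2
    rw [hW, List.count_filter
      (p := fun x => decide (k ≤ List.count x (curG Gs j))) h2]
    exact decide_eq_true_eq.mp h2
  · intro hA
    exact hnoalt (hasAlt_mono ((List.filter_sublist).trans (curG_sublist hj)) hA)

theorem fstFin_bound (s k₁ t : ℕ) (hs : 3 ≤ s) (Gs : List (List ℕ))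
    (hGb : ∀ G ∈ Gs, HasBlocks G t) (hnoalt : ¬ HasAlt Gs.flatten (s + 2))
    {j : ℕ} (hj : j < Gs.length) :
    ((FstFin k₁ Gs j).card : ℕ∞) ≤ NADS (s - 1) k₁ t := by
  classical
  set W : List ℕ := (curG Gs j).filter
    (fun a => decide (a ∉ preG Gs j ∧ a ∈ sufG Gs j ∧ k₁ ≤ (curG Gs j).count a)) with hW
  have hWfin : W.toFinset = FstFin k₁ Gs j := by
    ext a
    simp [hW, FstFin, List.mem_filter, List.mem_toFinset, Finset.mem_filter,
      decide_eq_true_eq]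
  rw [← hWfin]
  apply witness_bound
  · exact hasBlocks_filter _ (hGb _ (curG_mem hj))
  · intro a ha
    have h2 := (List.mem_filter.mp ha).2
    rw [hW, List.count_filter
      (p := fun x => decide (x ∉ preG Gs j ∧ x ∈ sufG Gs j ∧ k₁ ≤ List.count x (curG Gs j))) h2]
    exact (decide_eq_true_eq.mp h2).2.2
  · have hE : s - 1 + 2 = s + 1 := by omega
    rw [hE]
    rintro ⟨a, b, hab, halt⟩
    have hWsub : W.Sublist (curG Gs j) := List.filter_sublist
    have haW : a ∈ W := List.Sublist.mem (mem_altList_self_left a b (by omega)) halt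
    have hbW : b ∈ W := List.Sublist.mem (mem_altList_self_right a b (by omega)) halt
    have hpa := decide_eq_true_eq.mp (List.mem_filter.mp haW).2
    have hpb := decide_eq_true_eq.mp (List.mem_filter.mp hbW).2
    set c := if (s + 1) % 2 = 0 then a else b with hc
    have hcsuf : c ∈ sufG Gs j := by
      rw [hc]; split
      · exact hpa.2.1
      · exact hpb.2.1
    apply hnoalt
    refine ⟨a, b, hab, ?_⟩
    have h0 : s + 2 = (s + 1) + 1 := rfl
    rw [h0, altList_succ_concat a b (s + 1), splitG Gs hj, List.append_assoc]
    exact ((halt.trans hWsub).append (List.singleton_sublist.mpr hcsuf)).trans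
      (List.sublist_append_right _ _)

theorem lstFin_bound (s k₁ t : ℕ) (hs : 3 ≤ s) (Gs : List (List ℕ))
    (hGb : ∀ G ∈ Gs, HasBlocks G t) (hnoalt : ¬ HasAlt Gs.flatten (s + 2))
    {j : ℕ} (hj : j < Gs.length) :
    ((LstFin k₁ Gs j).card : ℕ∞) ≤ NADS (s - 1) k₁ t := by
  classical
  set W : List ℕ := (curG Gs j).filter
    (fun a => decide (a ∈ preG Gs j ∧ a ∉ sufG Gs j ∧ k₁ ≤ (curG Gs j).count a)) with hW
  have hWfin : W.toFinset = LstFin k₁ Gs j := by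
    ext a
    simp [hW, LstFin, List.mem_filter, List.mem_toFinset, Finset.mem_filter,
      decide_eq_true_eq]
  rw [← hWfin]
  apply witness_bound
  · exact hasBlocks_filter _ (hGb _ (curG_mem hj))
  · intro a ha
    have h2 := (List.mem_filter.mp ha).2
    rw [hW, List.count_filter
      (p := fun x => decide (x ∈ preG Gs j ∧ x ∉ sufG Gs j ∧ k₁ ≤ List.count x (curG Gs j))) h2]
    exact (decide_eq_true_eq.mp h2).2.2
  · have hE : s - 1 + 2 = s + 1 := by omega
    rw [hE]
    rintro ⟨a, b, hab, halt⟩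
    have hWsub : W.Sublist (curG Gs j) := List.filter_sublist
    have hbW : b ∈ W := List.Sublist.mem (mem_altList_self_right a b (by omega)) halt
    have hpb := decide_eq_true_eq.mp (List.mem_filter.mp hbW).2
    apply hnoalt
    refine ⟨b, a, hab.symm, ?_⟩
    have h0 : altList b a (s + 2) = [b] ++ altList a b (s + 1) := rfl
    rw [h0, splitG Gs hj]
    exact (((List.singleton_sublist.mpr hpb.1).append (halt.trans hWsub)).trans
      (List.sublist_append_left _ _))

theorem midFin_bound (s k₂ t : ℕ) (hs : 3 ≤ s) (Gs : List (List ℕ))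
    (hGb : ∀ G ∈ Gs, HasBlocks G t) (hnoalt : ¬ HasAlt Gs.flatten (s + 2))
    {j : ℕ} (hj : j < Gs.length) :
    ((MidFin k₂ Gs j).card : ℕ∞) ≤ NADS (s - 2) k₂ t := by
  classical
  set W : List ℕ := (curG Gs j).filter
    (fun a => decide (a ∈ preG Gs j ∧ a ∈ sufG Gs j ∧ k₂ ≤ (curG Gs j).count a)) with hW
  have hWfin : W.toFinset = MidFin k₂ Gs j := by
    ext a
    simp [hW, MidFin, List.mem_filter, List.mem_toFinset, Finset.mem_filter,
      decide_eq_true_eq]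
  rw [← hWfin]
  apply witness_bound
  · exact hasBlocks_filter _ (hGb _ (curG_mem hj))
  · intro a ha
    have h2 := (List.mem_filter.mp ha).2
    rw [hW, List.count_filter
      (p := fun x => decide (x ∈ preG Gs j ∧ x ∈ sufG Gs j ∧ k₂ ≤ List.count x (curG Gs j))) h2]
    exact (decide_eq_true_eq.mp h2).2.2
  · have hE : s - 2 + 2 = s := by omega
    rw [hE]
    rintro ⟨a, b, hab, halt⟩
    have hWsub : W.Sublist (curG Gs j) := List.filter_sublist
    have haW : a ∈ W := List.Sublist.mem (mem_altList_self_left a b (by omega)) halt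
    have hbW : b ∈ W := List.Sublist.mem (mem_altList_self_right a b (by omega)) halt
    have hpa := decide_eq_true_eq.mp (List.mem_filter.mp haW).2
    have hpb := decide_eq_true_eq.mp (List.mem_filter.mp hbW).2
    set c := if (s + 1) % 2 = 0 then b else a with hc
    have hcsuf : c ∈ sufG Gs j := by
      rw [hc]; split
      · exact hpb.2.1
      · exact hpa.2.1
    apply hnoalt
    refine ⟨b, a, hab.symm, ?_⟩
    have h0 : s + 2 = (s + 1) + 1 := rfl
    have h1 : altList b a (s + 1) = [b] ++ altList a b s := rfl
    rw [h0, altList_succ_concat b a (s + 1), h1, splitG Gs hj]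
    exact (((List.singleton_sublist.mpr hpb.1).append (halt.trans hWsub)).append
      (List.singleton_sublist.mpr hcsuf))

theorem f4_bound (s k₃ : ℕ) (Gs : List (List ℕ)) (hnoalt : ¬ HasAlt Gs.flatten (s + 2)) :
    ((F4Fin k₃ Gs).card : ℕ∞) ≤ NADS s k₃ Gs.length := by
  classical
  set p : ℕ → Bool := fun a => decide (k₃ ≤ NGfun Gs a) with hp
  set W : List ℕ := (Gs.map (fun G => G.dedup.filter p)).flatten with hW
  have hWsub : W.Sublist Gs.flatten :=
    flatten_map_sublist _ (fun G => (List.filter_sublist).trans (List.dedup_sublist G)) Gs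
  have hcnt : ∀ a, p a = true → W.count a = NGfun Gs a := by
    intro a hpa
    rw [hW, List.count_flatten, List.map_map]
    have hmapeq : Gs.map (List.count a ∘ fun G => G.dedup.filter p)
        = Gs.map (fun G => if a ∈ G then 1 else 0) := by
      apply List.map_congr_left
      intro G _
      simp only [Function.comp_apply]
      rw [List.count_filter hpa, List.count_dedup]
    rw [hmapeq, sum_map_getD (d := []), NGfun, Finset.card_filter]
    rfl
  have hsubF : F4Fin k₃ Gs ⊆ W.toFinset := by
    intro a ha
    obtain ⟨haS, hk3a⟩ := Finset.mem_filter.mp ha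
    obtain ⟨G, hG, haG⟩ := List.mem_flatten.mp (List.mem_toFinset.mp haS)
    rw [List.mem_toFinset, hW, List.mem_flatten]
    refine ⟨G.dedup.filter p, List.mem_map_of_mem hG, ?_⟩
    rw [List.mem_filter, List.mem_dedup]
    exact ⟨haG, decide_eq_true_eq.mpr hk3a⟩
  calc ((F4Fin k₃ Gs).card : ℕ∞)
      ≤ (W.toFinset.card : ℕ∞) := Nat.cast_le.mpr (Finset.card_le_card hsubF)
    _ ≤ NADS s k₃ Gs.length := by
        apply witness_bound
        · refine ⟨Gs.map (fun G => G.dedup.filter p), by simp, hW ▸ rfl, ?_⟩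
          intro B hB
          obtain ⟨G, _, rfl⟩ := List.mem_map.mp hB
          exact (List.nodup_dedup G).filter p
        · intro a ha
          obtain ⟨B, hB, haB⟩ := List.mem_flatten.mp (hW ▸ ha)
          obtain ⟨G, _, rfl⟩ := List.mem_map.mp hB
          have hpa : p a = true := (List.mem_filter.mp haB).2
          rw [hcnt a hpa]
          exact decide_eq_true_eq.mp hpa
        · exact fun hA => hnoalt (hasAlt_mono hWsub hA)

end NADSaux

namespace NADSaux

/-! ### The covering lemma -/

theorem cover (k k₁ k₂ k₃ : ℕ) (hk1 : 1 ≤ k₁) (hk2 : 1 ≤ k₂) (hk3 : 3 ≤ k₃)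
    (hknat : k + 1 = (k₂ - 1) * (k₃ - 3) + 2 * k₁)
    (Gs : List (List ℕ)) (hcount : ∀ a ∈ Gs.flatten, k ≤ (Gs.flatten).count a) :
    (Gs.flatten).toFinset ⊆
      ((Finset.range Gs.length).biUnion (LocFin k Gs)) ∪
      ((Finset.range Gs.length).biUnion (FstFin k₁ Gs)) ∪
      ((Finset.range Gs.length).biUnion (LstFin k₁ Gs)) ∪
      ((Finset.range Gs.length).biUnion (MidFin k₂ Gs)) ∪ (F4Fin k₃ Gs) := by
  classical
  intro a ha
  by_contra hcon
  simp only [Finset.mem_union, not_or] at hcon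
  obtain ⟨⟨⟨⟨hnL, hnF⟩, hnLs⟩, hnM⟩, hnF4⟩ := hcon
  have haS : a ∈ Gs.flatten := List.mem_toFinset.mp ha
  have hka : k ≤ (Gs.flatten).count a := hcount a haS
  set J : Finset ℕ := (Finset.range Gs.length).filter (fun j => a ∈ curG Gs j) with hJ
  have hJne : J.Nonempty := by
    obtain ⟨i, hi, hai⟩ := mem_flatten_iff_curG.mp haS
    exact ⟨i, Finset.mem_filter.mpr ⟨Finset.mem_range.mpr hi, hai⟩⟩
  have hsum : (Gs.flatten).count a = ∑ j ∈ J, (curG Gs j).count a := by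
    rw [count_flatten_eq]
    refine (Finset.sum_subset (Finset.filter_subset _ _) ?_).symm
    intro j hjr hjJ
    have hnm : a ∉ curG Gs j := fun hmem => hjJ (Finset.mem_filter.mpr ⟨hjr, hmem⟩)
    exact List.count_eq_zero_of_not_mem hnm
  by_cases hJ1 : J.card ≤ 1
  · obtain ⟨j0, hJeq⟩ := Finset.card_eq_one.mp
      (le_antisymm hJ1 (Finset.one_le_card.mpr hJne))
    have hj0J : j0 ∈ J := hJeq ▸ Finset.mem_singleton_self j0
    have hj0r := (Finset.mem_filter.mp hj0J).1
    have haj0 := (Finset.mem_filter.mp hj0J).2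
    have hcnteq : (Gs.flatten).count a = (curG Gs j0).count a := by
      rw [hsum, hJeq, Finset.sum_singleton]
    apply hnL
    exact Finset.mem_biUnion.mpr ⟨j0, hj0r,
      Finset.mem_filter.mpr ⟨List.mem_toFinset.mpr haj0, by rw [← hcnteq]; exact hka⟩⟩
  · push_neg at hJ1
    set j0 := J.min' hJne with hj0
    set j1 := J.max' hJne with hj1
    have hlt : j0 < j1 := Finset.min'_lt_max'_of_card J hJ1
    have hj0J : j0 ∈ J := J.min'_mem hJne
    have hj1J : j1 ∈ J := J.max'_mem hJne
    have hj0r : j0 < Gs.length := Finset.mem_range.mp (Finset.mem_filter.mp hj0J).1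
    have hj1r : j1 < Gs.length := Finset.mem_range.mp (Finset.mem_filter.mp hj1J).1
    have ha0 : a ∈ curG Gs j0 := (Finset.mem_filter.mp hj0J).2
    have ha1 : a ∈ curG Gs j1 := (Finset.mem_filter.mp hj1J).2
    have hmemJ : ∀ i, i < Gs.length → a ∈ curG Gs i → i ∈ J :=
      fun i hi hai => Finset.mem_filter.mpr ⟨Finset.mem_range.mpr hi, hai⟩
    have hnp0 : a ∉ preG Gs j0 := by
      intro h
      obtain ⟨i, hij, hin, hai⟩ := mem_preG_iff.mp h
      have := J.min'_le i (hmemJ i hin hai)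
      omega
    have hs0 : a ∈ sufG Gs j0 := mem_sufG_iff.mpr ⟨j1, hlt, hj1r, ha1⟩
    have hp1 : a ∈ preG Gs j1 := mem_preG_iff.mpr ⟨j0, hlt, hj0r, ha0⟩
    have hns1 : a ∉ sufG Gs j1 := by
      intro h
      obtain ⟨i, hij, hin, hai⟩ := mem_sufG_iff.mp h
      have := J.le_max' i (hmemJ i hin hai)
      omega
    have hcnt0 : (curG Gs j0).count a < k₁ := by
      by_contra hge
      push_neg at hge
      exact hnF (Finset.mem_biUnion.mpr ⟨j0, Finset.mem_range.mpr hj0r,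
        Finset.mem_filter.mpr ⟨List.mem_toFinset.mpr ha0, hnp0, hs0, hge⟩⟩)
    have hcnt1 : (curG Gs j1).count a < k₁ := by
      by_contra hge
      push_neg at hge
      exact hnLs (Finset.mem_biUnion.mpr ⟨j1, Finset.mem_range.mpr hj1r,
        Finset.mem_filter.mpr ⟨List.mem_toFinset.mpr ha1, hp1, hns1, hge⟩⟩)
    have hmid : ∀ j ∈ (J.erase j0).erase j1, (curG Gs j).count a < k₂ := by
      intro j hj'
      have hjJ : j ∈ J := Finset.mem_of_mem_erase (Finset.mem_of_mem_erase hj')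
      have hjne1 : j ≠ j1 := (Finset.mem_erase.mp hj').1
      have hjne0 : j ≠ j0 := (Finset.mem_erase.mp (Finset.mem_of_mem_erase hj')).1
      have hj0j : j0 < j := lt_of_le_of_ne (J.min'_le j hjJ) (Ne.symm hjne0)
      have hjj1 : j < j1 := lt_of_le_of_ne (J.le_max' j hjJ) hjne1
      have hjr : j < Gs.length := Finset.mem_range.mp (Finset.mem_filter.mp hjJ).1
      have haj : a ∈ curG Gs j := (Finset.mem_filter.mp hjJ).2
      by_contra hge
      push_neg at hge
      exact hnM (Finset.mem_biUnion.mpr ⟨j, Finset.mem_range.mpr hjr,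
        Finset.mem_filter.mpr ⟨List.mem_toFinset.mpr haj,
          mem_preG_iff.mpr ⟨j0, hj0j, hj0r, ha0⟩,
          mem_sufG_iff.mpr ⟨j1, hjj1, hj1r, ha1⟩, hge⟩⟩)
    have hNG : NGfun Gs a = J.card := by rw [hJ]; rfl
    have hJcard : J.card ≤ k₃ - 1 := by
      have hnot : ¬ (k₃ ≤ NGfun Gs a) := fun h => hnF4 (Finset.mem_filter.mpr ⟨ha, h⟩)
      omega
    have hj1e : j1 ∈ J.erase j0 := Finset.mem_erase.mpr ⟨ne_of_gt hlt, hj1J⟩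
    have e1 : ∑ j ∈ J, (curG Gs j).count a
        = (curG Gs j0).count a + ∑ j ∈ J.erase j0, (curG Gs j).count a :=
      (Finset.add_sum_erase J _ hj0J).symm
    have e2 : ∑ j ∈ J.erase j0, (curG Gs j).count a
        = (curG Gs j1).count a + ∑ j ∈ (J.erase j0).erase j1, (curG Gs j).count a :=
      (Finset.add_sum_erase _ _ hj1e).symm
    have e3 : ∑ j ∈ (J.erase j0).erase j1, (curG Gs j).count a
        ≤ ((J.erase j0).erase j1).card * (k₂ - 1) := by
      have h := Finset.sum_le_card_nsmul ((J.erase j0).erase j1)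
        (fun j => (curG Gs j).count a) (k₂ - 1) (fun x hx => by
          have := hmid x hx
          show (curG Gs x).count a ≤ k₂ - 1
          omega)
      simpa [smul_eq_mul] using h
    have e4 : ((J.erase j0).erase j1).card = J.card - 2 := by
      rw [Finset.card_erase_of_mem hj1e, Finset.card_erase_of_mem hj0J]
      omega
    have e5 : (J.card - 2) * (k₂ - 1) ≤ (k₃ - 3) * (k₂ - 1) :=
      Nat.mul_le_mul_right _ (by omega)
    have e6 : (k₃ - 3) * (k₂ - 1) = (k₂ - 1) * (k₃ - 3) := Nat.mul_comm _ _
    rw [e4] at e3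
    rw [hsum, e1, e2] at hka
    omega

/-! ### The master lemma -/

theorem master (s k k₁ k₂ k₃ t : ℕ) (hs : 3 ≤ s) (hk1 : 1 ≤ k₁) (hk2 : 1 ≤ k₂)
    (hk3 : 3 ≤ k₃) (hknat : k + 1 = (k₂ - 1) * (k₃ - 3) + 2 * k₁)
    (Gs : List (List ℕ)) (hGb : ∀ G ∈ Gs, HasBlocks G t)
    (hcount : ∀ a ∈ Gs.flatten, k ≤ (Gs.flatten).count a)
    (hnoalt : ¬ HasAlt Gs.flatten (s + 2)) :
    ((Gs.flatten).toFinset.card : ℕ∞) ≤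
      (Gs.length : ℕ∞) * (NADS s k t + 2 * NADS (s - 1) k₁ t + NADS (s - 2) k₂ t)
        + NADS s k₃ Gs.length := by
  classical
  have hcov := cover k k₁ k₂ k₃ hk1 hk2 hk3 hknat Gs hcount
  have hcard1 : (Gs.flatten).toFinset.card ≤
      ((Finset.range Gs.length).biUnion (LocFin k Gs)).card +
      ((Finset.range Gs.length).biUnion (FstFin k₁ Gs)).card +
      ((Finset.range Gs.length).biUnion (LstFin k₁ Gs)).card +
      ((Finset.range Gs.length).biUnion (MidFin k₂ Gs)).card + (F4Fin k₃ Gs).card := by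
    refine le_trans (Finset.card_le_card hcov) ?_
    refine le_trans (Finset.card_union_le _ _) ?_
    refine Nat.add_le_add_right ?_ _
    refine le_trans (Finset.card_union_le _ _) ?_
    refine Nat.add_le_add_right ?_ _
    refine le_trans (Finset.card_union_le _ _) ?_
    refine Nat.add_le_add_right ?_ _
    exact Finset.card_union_le _ _
  have cL : (((Finset.range Gs.length).biUnion (LocFin k Gs)).card : ℕ∞)
      ≤ (Gs.length : ℕ∞) * NADS s k t := by
    calc (((Finset.range Gs.length).biUnion (LocFin k Gs)).card : ℕ∞)
        ≤ ((∑ j ∈ Finset.range Gs.length, (LocFin k Gs j).card : ℕ) : ℕ∞) :=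
          Nat.cast_le.mpr Finset.card_biUnion_le
      _ = ∑ j ∈ Finset.range Gs.length, ((LocFin k Gs j).card : ℕ∞) := Nat.cast_sum _ _
      _ ≤ ∑ _j ∈ Finset.range Gs.length, NADS s k t :=
          Finset.sum_le_sum (fun j hj =>
            locFin_bound s k t Gs hGb hnoalt (Finset.mem_range.mp hj))
      _ = (Gs.length : ℕ∞) * NADS s k t := by
          rw [Finset.sum_const, Finset.card_range, nsmul_eq_mul]
  have cF : (((Finset.range Gs.length).biUnion (FstFin k₁ Gs)).card : ℕ∞)
      ≤ (Gs.length : ℕ∞) * NADS (s - 1) k₁ t := by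
    calc (((Finset.range Gs.length).biUnion (FstFin k₁ Gs)).card : ℕ∞)
        ≤ ((∑ j ∈ Finset.range Gs.length, (FstFin k₁ Gs j).card : ℕ) : ℕ∞) :=
          Nat.cast_le.mpr Finset.card_biUnion_le
      _ = ∑ j ∈ Finset.range Gs.length, ((FstFin k₁ Gs j).card : ℕ∞) := Nat.cast_sum _ _
      _ ≤ ∑ _j ∈ Finset.range Gs.length, NADS (s - 1) k₁ t :=
          Finset.sum_le_sum (fun j hj =>
            fstFin_bound s k₁ t hs Gs hGb hnoalt (Finset.mem_range.mp hj))
      _ = (Gs.length : ℕ∞) * NADS (s - 1) k₁ t := by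
          rw [Finset.sum_const, Finset.card_range, nsmul_eq_mul]
  have cLs : (((Finset.range Gs.length).biUnion (LstFin k₁ Gs)).card : ℕ∞)
      ≤ (Gs.length : ℕ∞) * NADS (s - 1) k₁ t := by
    calc (((Finset.range Gs.length).biUnion (LstFin k₁ Gs)).card : ℕ∞)
        ≤ ((∑ j ∈ Finset.range Gs.length, (LstFin k₁ Gs j).card : ℕ) : ℕ∞) :=
          Nat.cast_le.mpr Finset.card_biUnion_le
      _ = ∑ j ∈ Finset.range Gs.length, ((LstFin k₁ Gs j).card : ℕ∞) := Nat.cast_sum _ _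
      _ ≤ ∑ _j ∈ Finset.range Gs.length, NADS (s - 1) k₁ t :=
          Finset.sum_le_sum (fun j hj =>
            lstFin_bound s k₁ t hs Gs hGb hnoalt (Finset.mem_range.mp hj))
      _ = (Gs.length : ℕ∞) * NADS (s - 1) k₁ t := by
          rw [Finset.sum_const, Finset.card_range, nsmul_eq_mul]
  have cM : (((Finset.range Gs.length).biUnion (MidFin k₂ Gs)).card : ℕ∞)
      ≤ (Gs.length : ℕ∞) * NADS (s - 2) k₂ t := by
    calc (((Finset.range Gs.length).biUnion (MidFin k₂ Gs)).card : ℕ∞)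
        ≤ ((∑ j ∈ Finset.range Gs.length, (MidFin k₂ Gs j).card : ℕ) : ℕ∞) :=
          Nat.cast_le.mpr Finset.card_biUnion_le
      _ = ∑ j ∈ Finset.range Gs.length, ((MidFin k₂ Gs j).card : ℕ∞) := Nat.cast_sum _ _
      _ ≤ ∑ _j ∈ Finset.range Gs.length, NADS (s - 2) k₂ t :=
          Finset.sum_le_sum (fun j hj =>
            midFin_bound s k₂ t hs Gs hGb hnoalt (Finset.mem_range.mp hj))
      _ = (Gs.length : ℕ∞) * NADS (s - 2) k₂ t := by
          rw [Finset.sum_const, Finset.card_range, nsmul_eq_mul]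
  have cF4 : ((F4Fin k₃ Gs).card : ℕ∞) ≤ NADS s k₃ Gs.length := f4_bound s k₃ Gs hnoalt
  calc ((Gs.flatten).toFinset.card : ℕ∞)
      ≤ ((((Finset.range Gs.length).biUnion (LocFin k Gs)).card +
          ((Finset.range Gs.length).biUnion (FstFin k₁ Gs)).card +
          ((Finset.range Gs.length).biUnion (LstFin k₁ Gs)).card +
          ((Finset.range Gs.length).biUnion (MidFin k₂ Gs)).card +
          (F4Fin k₃ Gs).card : ℕ) : ℕ∞) := Nat.cast_le.mpr hcard1
    _ = (((Finset.range Gs.length).biUnion (LocFin k Gs)).card : ℕ∞) +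
        (((Finset.range Gs.length).biUnion (FstFin k₁ Gs)).card : ℕ∞) +
        (((Finset.range Gs.length).biUnion (LstFin k₁ Gs)).card : ℕ∞) +
        (((Finset.range Gs.length).biUnion (MidFin k₂ Gs)).card : ℕ∞) +
        ((F4Fin k₃ Gs).card : ℕ∞) := by push_cast; ring
    _ ≤ (Gs.length : ℕ∞) * NADS s k t + (Gs.length : ℕ∞) * NADS (s - 1) k₁ t +
        (Gs.length : ℕ∞) * NADS (s - 1) k₁ t + (Gs.length : ℕ∞) * NADS (s - 2) k₂ t +
        NADS s k₃ Gs.length :=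
          add_le_add (add_le_add (add_le_add (add_le_add cL cF) cLs) cM) cF4
    _ = (Gs.length : ℕ∞) * (NADS s k t + 2 * NADS (s - 1) k₁ t + NADS (s - 2) k₂ t)
        + NADS s k₃ Gs.length := by ring

end NADSaux

/-- For `s ≥ 3`, `k₁, k₂ ≥ 1`, `k₃ ≥ 3`, `t ≥ 1`, `m ≥ 1`, with
`k = k₂·k₃ + 2k₁ − 3k₂ − k₃ + 2` and `b = ⌈m/t⌉`:
`N^s_k(m) ≤ b·(N^s_k(t) + 2·N^{s−1}_{k₁}(t) + N^{s−2}_{k₂}(t)) + N^s_{k₃}(b)`. -/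
theorem NADS_recurrence :
    ∀ s k k₁ k₂ k₃ t m : ℕ, 3 ≤ s → 1 ≤ k₁ → 1 ≤ k₂ → 3 ≤ k₃ → 1 ≤ t → 1 ≤ m →
      (k : ℤ) = k₂ * k₃ + 2 * k₁ - 3 * k₂ - k₃ + 2 →
      NADS s k m ≤
        (((m + t - 1) / t : ℕ) : ℕ∞)
            * (NADS s k t + 2 * NADS (s - 1) k₁ t + NADS (s - 2) k₂ t)
          + NADS s k₃ ((m + t - 1) / t) := by
  intro s k k₁ k₂ k₃ t m hs hk1 hk2 hk3 ht hm hkZ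
  classical
  have hknat : k + 1 = (k₂ - 1) * (k₃ - 3) + 2 * k₁ := by
    obtain ⟨K2, rfl⟩ : ∃ K2, k₂ = K2 + 1 := ⟨k₂ - 1, by omega⟩
    obtain ⟨K3, rfl⟩ : ∃ K3, k₃ = K3 + 3 := ⟨k₃ - 3, by omega⟩
    have h1 : (k : ℤ) = ((K2 * K3 : ℕ) : ℤ) + 2 * (k₁ : ℤ) - 1 := by
      rw [hkZ]; push_cast; ring
    simp only [Nat.add_sub_cancel]
    generalize (K2 * K3 : ℕ) = P at h1 ⊢
    omega
  refine sSup_le ?_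
  rintro c ⟨S, ⟨⟨Bs, hBlen, hSflat, hBnodup⟩, hcount, hnoalt⟩, rfl⟩
  set Gs : List (List ℕ) := (NADSaux.chunkList t Bs).map List.flatten with hGs
  have hSG : S = Gs.flatten := by
    rw [hSflat, hGs, NADSaux.flatten_map_flatten, NADSaux.flatten_chunkList]
  have hGlen : Gs.length ≤ (m + t - 1) / t := by
    rw [Nat.le_div_iff_mul_le (by omega : 0 < t)]
    have h1 := NADSaux.chunkList_length_mul_le (t := t) (by omega) Bs
    have h2 : Gs.length = (NADSaux.chunkList t Bs).length := by
      rw [hGs, List.length_map]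
    rw [h2]
    omega
  have hGb : ∀ G ∈ Gs, HasBlocks G t := by
    intro G hG
    rw [hGs] at hG
    obtain ⟨cs, hcs, rfl⟩ := List.mem_map.mp hG
    exact ⟨cs, NADSaux.mem_chunkList_length (by omega) hcs, rfl,
      fun B hB => hBnodup B (NADSaux.mem_of_mem_chunkList hcs hB)⟩
  rw [hSG] at hcount hnoalt ⊢
  calc ((Gs.flatten).toFinset.card : ℕ∞)
      ≤ (Gs.length : ℕ∞) * (NADS s k t + 2 * NADS (s - 1) k₁ t + NADS (s - 2) k₂ t)
          + NADS s k₃ Gs.length :=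
        NADSaux.master s k k₁ k₂ k₃ t hs hk1 hk2 hk3 hknat Gs hGb hcount hnoalt
    _ ≤ (((m + t - 1) / t : ℕ) : ℕ∞)
          * (NADS s k t + 2 * NADS (s - 1) k₁ t + NADS (s - 2) k₂ t)
        + NADS s k₃ ((m + t - 1) / t) :=
        add_le_add (mul_le_mul' (Nat.cast_le.mpr hGlen) le_rfl)
          (NADSaux.NADS_mono_m hGlen)
end
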